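/- arXiv:math/0112133 — 5 statements merged into one kernel-verified Lean document; each statement's English description precedes it below -/
import Mathlib

section
/- For any partition ρ and positive integer n, the n-core of ρ is well-defined: any two maximal sequences of legal n-rim hook removals from ρ terminate at the same partition. -/
open YoungDiagram

namespace QCGrass

/-- The rectangular Young diagram with `m` rows of length `M`. -/
def rect (m M : ℕ) : YoungDiagram :=
  ⟨Finset.range m ×ˢ Finset.range M, by
    intro a b hba ha
    simp only [Finset.coe_product, Set.mem_prod, Finset.mem_coe, Finset.mem_range] at *
    exact ⟨lt_of_le_of_lt hba.1 ha.1, lt_of_le_of_lt hba.2 ha.2⟩⟩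

/-- The cells of the skew shape `nu / lam`. -/
def skewCells (lam nu : YoungDiagram) : Finset (ℕ × ℕ) := nu.cells \ lam.cells

/-- `T` is a Littlewood–Richardson skew tableau of shape `nu / lam` and content `mu`:
entries (valued in `{1, 2, …}`, with `0` meaning "no entry") are supported exactly on the
skew shape `nu / lam`, weakly increase along rows, strictly increase down columns, the number
of entries equal to `r + 1` is the `r`-th row length of `mu`, and the reverse reading word
(rows read right to left, top to bottom) is a lattice word. -/
def IsLRTableau (lam mu nu : YoungDiagram) (T : ℕ × ℕ → ℕ) : Prop :=
  lam ≤ nu ∧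
  (∀ p : ℕ × ℕ, 1 ≤ T p ↔ p ∈ skewCells lam nu) ∧
  (∀ i j j' : ℕ, j ≤ j' → (i, j) ∈ skewCells lam nu → (i, j') ∈ skewCells lam nu →
      T (i, j) ≤ T (i, j')) ∧
  (∀ i i' j : ℕ, i < i' → (i, j) ∈ skewCells lam nu → (i', j) ∈ skewCells lam nu →
      T (i, j) < T (i', j)) ∧
  (∀ r : ℕ, ((skewCells lam nu).filter (fun p => T p = r + 1)).card = mu.rowLen r) ∧
  (∀ i j r : ℕ,
      ((skewCells lam nu).filter
        (fun p => T p = r + 2 ∧ (p.1 < i ∨ (p.1 = i ∧ j ≤ p.2)))).card ≤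
      ((skewCells lam nu).filter
        (fun p => T p = r + 1 ∧ (p.1 < i ∨ (p.1 = i ∧ j ≤ p.2)))).card)

/-- The Littlewood–Richardson coefficient `c^nu_{lam, mu}`, defined as the number of
Littlewood–Richardson skew tableaux of shape `nu / lam` and content `mu`. -/
noncomputable def lrCoeff (lam mu nu : YoungDiagram) : ℕ :=
  Nat.card {T : ℕ × ℕ → ℕ // IsLRTableau lam mu nu T}

/-- The set of boxes (in `0`-indexed matrix coordinates) of `mu` rotated 180 degrees and
placed in the lower-right corner of the `l × k` rectangle. -/
def rotSet (l k : ℕ) (mu : YoungDiagram) : Set (ℕ × ℕ) :=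
  {p | p.1 < l ∧ p.2 < k ∧ k - mu.rowLen (l - 1 - p.1) ≤ p.2}

/-- Two boxes are adjacent when they share an edge. -/
def Adjacent (p q : ℕ × ℕ) : Prop :=
  (p.1 = q.1 ∧ (p.2 = q.2 + 1 ∨ q.2 = p.2 + 1)) ∨
  (p.2 = q.2 ∧ (p.1 = q.1 + 1 ∨ q.1 = p.1 + 1))

/-- `mu` is obtained from `lam` by removing a legal `n`-rim hook: `mu ⊆ lam` (so the removal
leaves a Young diagram), the removed set has `n` boxes, is edge-connected, and contains
no `2 × 2` square. -/
def IsRimHookRemoval (n : ℕ) (lam mu : YoungDiagram) : Prop :=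
  mu ≤ lam ∧ (skewCells mu lam).card = n ∧
  (∀ p ∈ skewCells mu lam, ∀ q ∈ skewCells mu lam,
    Relation.ReflTransGen
      (fun a b => a ∈ skewCells mu lam ∧ b ∈ skewCells mu lam ∧ Adjacent a b) p q) ∧
  ¬ ∃ i j : ℕ, (i, j) ∈ skewCells mu lam ∧ (i + 1, j) ∈ skewCells mu lam ∧
      (i, j + 1) ∈ skewCells mu lam ∧ (i + 1, j + 1) ∈ skewCells mu lam

/-- One legal `n`-rim hook removal step. -/
def RimStep (n : ℕ) (lam mu : YoungDiagram) : Prop := IsRimHookRemoval n lam mu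

/-- A diagram is an `n`-core when no legal `n`-rim hook can be removed from it. -/
def IsCore (n : ℕ) (t : YoungDiagram) : Prop := ¬ ∃ s, RimStep n t s

/-- `ReachesIn n m a b` : `b` is obtained from `a` by `m` successive legal `n`-rim hook
removals. -/
def ReachesIn (n : ℕ) : ℕ → YoungDiagram → YoungDiagram → Prop
  | 0 => fun a b => a = b
  | m + 1 => fun a b => ∃ c, RimStep n a c ∧ ReachesIn n m c b

/-- The width (number of occupied columns) of the strip removed in passing
from `lam` to `mu`. -/
def hookWidth (lam mu : YoungDiagram) : ℕ := ((skewCells mu lam).image Prod.snd).card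

/-- The height (number of occupied rows) of the strip removed in passing
from `lam` to `mu`. -/
def hookHeight (lam mu : YoungDiagram) : ℕ := ((skewCells mu lam).image Prod.fst).card

/-- `ReachesInSign n k m s a b` : `b` is obtained from `a` by `m` successive legal `n`-rim
hook removals, and `s = ∏ (-1)^(k - width(R_i))` over the removed hooks `R_i`. -/
def ReachesInSign (n k : ℕ) : ℕ → ℤ → YoungDiagram → YoungDiagram → Prop
  | 0 => fun s a b => a = b ∧ s = 1
  | m + 1 => fun s a b => ∃ c s', RimStep n a c ∧ ReachesInSign n k m s' c b ∧
      s = (-1) ^ (k - hookWidth a c) * s'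

/-- `diagLen lam` is the number of diagonal boxes of `lam`, i.e. the side length of the
largest square contained in `lam`. -/
def diagLen (lam : YoungDiagram) : ℕ := (lam.cells.filter fun p => p.1 = p.2).card

/-- A `d × d` square of boxes fits inside `lam ∩ rotate(mu)` within the `l × k` rectangle. -/
def SquareFits (l k : ℕ) (lam mu : YoungDiagram) (d : ℕ) : Prop :=
  ∃ i j : ℕ, ∀ i' j' : ℕ, i ≤ i' → i' < i + d → j ≤ j' → j' < j + d →
    (i', j') ∈ lam.cells ∧ (i', j') ∈ rotSet l k mu

/-- The triple product `σ_lam · σ_mu · σ_nu` is nonzero in `H^*(Gr(l, l+k))`: some `rho ⊆ l × k`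
has `c^rho_{lam,mu} ≠ 0` and `rho` is disjoint from `rotate(nu)`. -/
def TripleNonzero (l k : ℕ) (lam mu nu : YoungDiagram) : Prop :=
  ∃ rho, rho ≤ rect l k ∧ lrCoeff lam mu rho ≠ 0 ∧
    ∀ i, i < l → rho.rowLen i + nu.rowLen (l - 1 - i) ≤ k


def beta (t : YoungDiagram) (i : ℕ) : ℤ := (t.rowLen i : ℤ) - i

def Bset (t : YoungDiagram) : Set ℤ := Set.range (beta t)

lemma beta_strictAnti (t : YoungDiagram) : StrictAnti (beta t) := by
  apply strictAnti_nat_of_succ_lt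
  intro i
  have h := t.rowLen_anti i (i+1) (by omega)
  unfold beta
  push_cast
  omega

lemma rowLen_le_of_le {mu lam : YoungDiagram} (h : mu ≤ lam) (k : ℕ) :
    mu.rowLen k ≤ lam.rowLen k := by
  by_contra hc
  push_neg at hc
  have : (k, lam.rowLen k) ∈ mu := mem_iff_lt_rowLen.2 hc
  have : (k, lam.rowLen k) ∈ lam := h this
  have := mem_iff_lt_rowLen.1 this
  omega

lemma colLen_le_of_le {mu lam : YoungDiagram} (h : mu ≤ lam) :
    mu.colLen 0 ≤ lam.colLen 0 := by
  by_contra hc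
  push_neg at hc
  have : (lam.colLen 0, 0) ∈ mu := mem_iff_lt_colLen.2 hc
  have : (lam.colLen 0, 0) ∈ lam := h this
  have := mem_iff_lt_colLen.1 this
  omega

lemma rowLen_eq_zero' {t : YoungDiagram} {i : ℕ} (h : t.colLen 0 ≤ i) : t.rowLen i = 0 := by
  by_contra hc
  have : (i, 0) ∈ t := mem_iff_lt_rowLen.2 (by omega)
  have := mem_iff_lt_colLen.1 this
  omega

lemma beta_of_big {t : YoungDiagram} {i : ℕ} (h : t.colLen 0 ≤ i) : beta t i = -(i:ℤ) := by
  unfold beta; rw [rowLen_eq_zero' h]; simp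

lemma mem_Bset_of_le {t : YoungDiagram} {x : ℤ} (h : x ≤ -(t.colLen 0 : ℤ)) : x ∈ Bset t := by
  refine ⟨(-x).toNat, ?_⟩
  have hx : ((-x).toNat : ℤ) = -x := Int.toNat_of_nonneg (by omega)
  have : t.colLen 0 ≤ (-x).toNat := by omega
  rw [beta_of_big this]; omega

lemma lt_of_not_mem_Bset {t : YoungDiagram} {x : ℤ} (h : x ∉ Bset t) : -(t.colLen 0:ℤ) < x := by
  by_contra hc
  exact h (mem_Bset_of_le (by omega))

lemma le_beta_zero_of_mem {t : YoungDiagram} {x : ℤ} (h : x ∈ Bset t) : x ≤ beta t 0 := by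
  obtain ⟨i, rfl⟩ := h
  exact (beta_strictAnti t).antitone (Nat.zero_le i)

lemma strictAnti_range_ext {f g : ℕ → ℤ} (hf : StrictAnti f) (hg : StrictAnti g)
    (h : Set.range f = Set.range g) : f = g := by
  funext m
  induction m using Nat.strong_induction_on with
  | _ m ih =>
    have h1 : f m ∈ Set.range g := h ▸ Set.mem_range_self m
    have h2 : g m ∈ Set.range f := h.symm ▸ Set.mem_range_self m
    obtain ⟨a, ha⟩ := h1
    obtain ⟨b, hb⟩ := h2
    have hma : m ≤ a := by
      by_contra hc
      push_neg at hc
      have h3 : f a = g a := ih a hc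
      have : f m = f a := ha.symm.trans h3.symm
      have := hf.injective this
      omega
    have hmb : m ≤ b := by
      by_contra hc
      push_neg at hc
      have h3 : f b = g b := ih b hc
      have : g m = g b := hb.symm.trans h3
      have := hg.injective this
      omega
    have : g a ≤ g m := hg.antitone hma
    have : f b ≤ f m := hf.antitone hmb
    omega

lemma eq_of_rowLen_eq {mu lam : YoungDiagram} (h : ∀ i, mu.rowLen i = lam.rowLen i) :
    mu = lam := by
  ext ⟨a, b⟩
  simp only [YoungDiagram.mem_cells, mem_iff_lt_rowLen, h]

lemma eq_of_Bset_eq {mu lam : YoungDiagram} (h : Bset mu = Bset lam) : mu = lam := by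
  have := strictAnti_range_ext (beta_strictAnti mu) (beta_strictAnti lam) h
  apply eq_of_rowLen_eq
  intro i
  have := congrFun this i
  unfold beta at this
  omega



lemma mem_skew_iff {mu lam : YoungDiagram} {k c : ℕ} :
    (k, c) ∈ skewCells mu lam ↔ mu.rowLen k ≤ c ∧ c < lam.rowLen k := by
  simp only [skewCells, Finset.mem_sdiff, YoungDiagram.mem_cells, mem_iff_lt_rowLen]
  omega

lemma telescope (f g : ℕ → ℤ) {i j : ℕ} (hij : i ≤ j)
    (h : ∀ k, i ≤ k → k < j → g k + 1 = f (k+1)) :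
    ∑ k ∈ Finset.Icc i j, (f k - g k) = f i + ((j - i : ℕ) : ℤ) - g j := by
  induction j, hij using Nat.le_induction with
  | base => simp
  | succ j hij ih =>
    rw [Finset.sum_Icc_succ_top (by omega)]
    rw [ih (fun k hk hk' => h k hk (by omega))]
    have := h j hij (by omega)
    have hji : ((j + 1 - i : ℕ) : ℤ) = ((j - i : ℕ) : ℤ) + 1 := by omega
    rw [hji]
    omega

lemma skew_eq_biUnion {mu lam : YoungDiagram} {i j : ℕ}
    (h : ∀ k, k ∉ Finset.Icc i j → mu.rowLen k = lam.rowLen k) :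
    skewCells mu lam = (Finset.Icc i j).biUnion
      (fun k => (Finset.Ico (mu.rowLen k) (lam.rowLen k)).map
        ⟨fun c => (k, c), fun a b hab => by simpa using hab⟩) := by
  ext ⟨k, c⟩
  simp only [Finset.mem_biUnion, Finset.mem_map, Finset.mem_Ico, Function.Embedding.coeFn_mk,
    mem_skew_iff]
  constructor
  · rintro ⟨h1, h2⟩
    refine ⟨k, ?_, c, ⟨h1, h2⟩, rfl⟩
    by_contra hk
    have := h k hk
    omega
  · rintro ⟨k', hk', c', ⟨h1, h2⟩, heq⟩
    obtain ⟨rfl, rfl⟩ := Prod.mk.injEq .. ▸ heq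
    omega

lemma card_skew {mu lam : YoungDiagram} {i j : ℕ}
    (h : ∀ k, k ∉ Finset.Icc i j → mu.rowLen k = lam.rowLen k) :
    (skewCells mu lam).card = ∑ k ∈ Finset.Icc i j, (lam.rowLen k - mu.rowLen k) := by
  rw [skew_eq_biUnion h, Finset.card_biUnion]
  · exact Finset.sum_congr rfl (fun k _ => by rw [Finset.card_map, Nat.card_Ico])
  · intro a _ b _ hab
    simp only [Finset.disjoint_left, Finset.mem_map, Function.Embedding.coeFn_mk]
    rintro ⟨x, y⟩ ⟨c, _, heq⟩ ⟨c', _, heq'⟩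
    apply hab
    have h1 := (Prod.mk.injEq .. ▸ heq).1
    have h2 := (Prod.mk.injEq .. ▸ heq').1
    omega





lemma crossing {D : Finset (ℕ × ℕ)} {p q : ℕ × ℕ}
    (h : Relation.ReflTransGen (fun a b => a ∈ D ∧ b ∈ D ∧ Adjacent a b) p q)
    {k : ℕ} (hk : k < q.1) : p.1 ≤ k → ∃ c, (k, c) ∈ D ∧ (k + 1, c) ∈ D := by
  induction h using Relation.ReflTransGen.head_induction_on with
  | refl => intro hp; omega
  | @head a c hstep htail ih =>
    intro hp
    by_cases hc : c.1 ≤ k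
    · exact ih hc
    · push_neg at hc
      obtain ⟨haD, hcD, hadj⟩ := hstep
      obtain ⟨a1, a2⟩ := a
      obtain ⟨c1, c2⟩ := c
      dsimp only [Adjacent] at hadj hp hc
      have h12 : a1 = k ∧ c1 = k + 1 ∧ a2 = c2 := by
        rcases hadj with ⟨h1, h2 | h2⟩ | ⟨h1, h2 | h2⟩ <;> omega
      obtain ⟨rfl, rfl, rfl⟩ := h12
      exact ⟨a2, haD, hcD⟩

lemma rimstep_bmove {n : ℕ} (hn : 0 < n) {lam mu : YoungDiagram} (h : RimStep n lam mu) :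
    ∃ b : ℤ, b ∈ Bset lam ∧ b - n ∉ Bset lam ∧
      Bset mu = insert (b - n) (Bset lam \ {b}) := by
  obtain ⟨hle, hcard, hconn, hsq⟩ := h
  set D := skewCells mu lam with hD
  have hDne : D.Nonempty := by
    rw [← Finset.card_pos, hcard]; exact hn
  have hRne : (D.image Prod.fst).Nonempty := hDne.image _
  set i := (D.image Prod.fst).min' hRne with hi_def
  set j := (D.image Prod.fst).max' hRne with hj_def
  have hij : i ≤ j := Finset.min'_le _ _ (Finset.max'_mem _ hRne)
  obtain ⟨pi, hpiD, hpi1⟩ := Finset.mem_image.1 ((D.image Prod.fst).min'_mem hRne)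
  obtain ⟨pj, hpjD, hpj1⟩ := Finset.mem_image.1 ((D.image Prod.fst).max'_mem hRne)
  rw [← hi_def] at hpi1
  rw [← hj_def] at hpj1
  have hrange : ∀ p ∈ D, i ≤ p.1 ∧ p.1 ≤ j := fun p hp =>
    ⟨Finset.min'_le _ _ (Finset.mem_image_of_mem _ hp),
     Finset.le_max' _ _ (Finset.mem_image_of_mem _ hp)⟩
  have hkey : ∀ k, i ≤ k → k < j → mu.rowLen k + 1 = lam.rowLen (k + 1) := by
    intro k hik hkj
    obtain ⟨c, hc1, hc2⟩ := crossing (hconn pi hpiD pj hpjD) (k := k) (by omega) (by omega)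
    rw [mem_skew_iff] at hc1 hc2
    have hlt : mu.rowLen k < lam.rowLen (k + 1) := by omega
    have hle' : lam.rowLen (k + 1) ≤ mu.rowLen k + 1 := by
      by_contra hcon
      push_neg at hcon
      apply hsq
      refine ⟨k, mu.rowLen k, ?_, ?_, ?_, ?_⟩ <;> rw [mem_skew_iff]
      · have := lam.rowLen_anti k (k+1) (by omega)
        omega
      · have := mu.rowLen_anti k (k+1) (by omega)
        omega
      · have := lam.rowLen_anti k (k+1) (by omega)
        omega
      · have := mu.rowLen_anti k (k+1) (by omega)
        omega
    omega
  have houtside : ∀ k, k ∉ Finset.Icc i j → mu.rowLen k = lam.rowLen k := by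
    intro k hk
    have h1 := rowLen_le_of_le hle k
    by_contra hcon
    have : (k, mu.rowLen k) ∈ D := mem_skew_iff.2 ⟨le_refl _, by omega⟩
    have := hrange _ this
    simp only [Finset.mem_Icc] at hk
    omega
  -- the sum computation
  have hcast : ∀ k, ((lam.rowLen k - mu.rowLen k : ℕ) : ℤ)
      = (lam.rowLen k : ℤ) - (mu.rowLen k : ℤ) := by
    intro k
    have := rowLen_le_of_le hle k
    omega
  have hsum : (n : ℤ) = (lam.rowLen i : ℤ) + ((j - i : ℕ) : ℤ) - mu.rowLen j := by
    rw [← hcard, hD, card_skew houtside]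
    push_cast [hcast]
    rw [telescope (fun k => (lam.rowLen k : ℤ)) (fun k => (mu.rowLen k : ℤ)) hij]
    intro k hik hkj
    have := hkey k hik hkj
    push_cast [← this]
    ring
  have hmid : ∀ k, i ≤ k → k < j → beta mu k = beta lam (k + 1) := by
    intro k hik hkj
    have := hkey k hik hkj
    unfold beta
    push_cast [← this]
    ring
  have hout : ∀ k, k ∉ Finset.Icc i j → beta mu k = beta lam k := by
    intro k hk
    unfold beta
    rw [houtside k hk]
  have hbj : beta mu j = beta lam i - n := by
    unfold beta
    have hji : ((j - i : ℕ) : ℤ) = (j : ℤ) - i := by omega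
    rw [hji] at hsum
    omega
  refine ⟨beta lam i, ⟨i, rfl⟩, ?_, ?_⟩
  · -- b - n not in Bset lam
    have hup : beta lam i - n < beta lam j := by
      rcases eq_or_lt_of_le hij with heq | hij'
      · have : beta lam j = beta lam i := by rw [heq]
        omega
      · have h1 : beta mu j < beta mu (j - 1) := (beta_strictAnti mu) (by omega)
        have h2 : beta mu (j - 1) = beta lam j := by
          have := hmid (j - 1) (by omega) (by omega)
          rwa [Nat.sub_add_cancel (by omega)] at this
        omega
    have hdown : beta lam (j + 1) < beta lam i - n := by
      have h1 : beta mu (j + 1) < beta mu j := (beta_strictAnti mu) (by omega)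
      have h2 : beta mu (j + 1) = beta lam (j + 1) :=
        hout _ (by simp only [Finset.mem_Icc]; omega)
      omega
    rintro ⟨m, hm⟩
    rcases le_or_gt m j with hmj | hmj
    · have := (beta_strictAnti lam).antitone hmj
      omega
    · have := (beta_strictAnti lam).antitone (show j + 1 ≤ m by omega)
      omega
  · -- Bset equality
    ext x
    simp only [Bset, Set.mem_insert_iff, Set.mem_diff, Set.mem_range,
      Set.mem_singleton_iff]
    constructor
    · rintro ⟨k, rfl⟩
      rcases lt_or_ge k i with hk | hk
      · right
        have hbk := hout k (by simp only [Finset.mem_Icc]; omega)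
        refine ⟨⟨k, hbk.symm⟩, ?_⟩
        rw [hbk]
        have := (beta_strictAnti lam) hk
        omega
      · rcases lt_or_ge k j with hk' | hk'
        · right
          have hbk := hmid k hk hk'
          refine ⟨⟨k + 1, hbk.symm⟩, ?_⟩
          rw [hbk]
          have := (beta_strictAnti lam) (show i < k + 1 by omega)
          omega
        · rcases eq_or_lt_of_le hk' with rfl | hk''
          · left; exact hbj
          · right
            have hbk := hout k (by simp only [Finset.mem_Icc]; omega)
            refine ⟨⟨k, hbk.symm⟩, ?_⟩
            rw [hbk]
            have := (beta_strictAnti lam) (show i < k by omega)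
            omega
    · rintro (rfl | ⟨⟨m, rfl⟩, hne⟩)
      · exact ⟨j, hbj⟩
      · rcases lt_or_ge m i with hm | hm
        · exact ⟨m, hout m (by simp only [Finset.mem_Icc]; omega)⟩
        · rcases le_or_gt m j with hm' | hm'
          · have hmi : i < m := by
              rcases eq_or_lt_of_le hm with rfl | h
              · exact absurd rfl hne
              · exact h
            refine ⟨m - 1, ?_⟩
            have := hmid (m - 1) (by omega) (by omega)
            rwa [Nat.sub_add_cancel (by omega)] at this
          · exact ⟨m, hout m (by simp only [Finset.mem_Icc]; omega)⟩


lemma beta_le (t : YoungDiagram) (m : ℕ) : beta t m ≤ beta t 0 - m := by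
  induction m with
  | zero => simp
  | succ m ih =>
    have := beta_strictAnti t (show m < m + 1 by omega)
    push_cast
    omega

def hookRows (lam : YoungDiagram) (i j rj : ℕ) : ℕ → ℕ := fun k =>
  if k < i then lam.rowLen k else if k < j then lam.rowLen (k+1) - 1
  else if k = j then rj else lam.rowLen k

lemma hookRows_lt {lam : YoungDiagram} {i j rj k : ℕ} (h : k < i) :
    hookRows lam i j rj k = lam.rowLen k := if_pos h

lemma hookRows_mid {lam : YoungDiagram} {i j rj k : ℕ} (h1 : i ≤ k) (h2 : k < j) :
    hookRows lam i j rj k = lam.rowLen (k+1) - 1 := by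
  unfold hookRows
  rw [if_neg (by omega), if_pos h2]

lemma hookRows_j {lam : YoungDiagram} {i j rj : ℕ} (h1 : i ≤ j) :
    hookRows lam i j rj j = rj := by
  unfold hookRows
  rw [if_neg (by omega), if_neg (by omega), if_pos rfl]

lemma hookRows_gt {lam : YoungDiagram} {i j rj k : ℕ} (h1 : i ≤ j) (h : j < k) :
    hookRows lam i j rj k = lam.rowLen k := by
  unfold hookRows
  rw [if_neg (by omega), if_neg (by omega), if_neg (by omega)]

lemma bmove_rimstep {n : ℕ} (hn : 0 < n) {lam : YoungDiagram} (i : ℕ)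
    (hb : beta lam i - n ∉ Bset lam) : ∃ mu, RimStep n lam mu := by
  set b := beta lam i with hbdef
  have hfind : ∃ k, beta lam (i + k + 1) < b - n := by
    refine ⟨(beta lam 0 - (b - n)).toNat, ?_⟩
    have h1 := beta_le lam (i + (beta lam 0 - (b - n)).toNat + 1)
    have h2 : (beta lam 0 - (b - n)) ≤ ((beta lam 0 - (b - n)).toNat : ℤ) :=
      Int.self_le_toNat _
    push_cast at h1 ⊢
    omega
  set j := i + Nat.find hfind with hjdef
  have hij : i ≤ j := by omega
  have hj1 : beta lam (j + 1) < b - n := Nat.find_spec hfind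
  have hj2 : b - n < beta lam j := by
    rcases Nat.eq_zero_or_pos (Nat.find hfind) with hf | hf
    · have : j = i := by omega
      rw [this, ← hbdef]
      omega
    · have hnot := Nat.find_min hfind (show Nat.find hfind - 1 < Nat.find hfind by omega)
      push_neg at hnot
      have hjj : i + (Nat.find hfind - 1) + 1 = j := by omega
      rw [hjj] at hnot
      rcases eq_or_lt_of_le hnot with heq | hlt
      · exact absurd ⟨j, heq.symm⟩ hb
      · exact hlt
  -- define rj
  have hrjnn : 0 ≤ b - n + j := by
    have : -(j + 1 : ℤ) ≤ beta lam (j + 1) := by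
      unfold beta; push_cast; omega
    omega
  set rj := (b - n + j).toNat with hrjdef
  have hrjcast : (rj : ℤ) = b - n + j := Int.toNat_of_nonneg hrjnn
  have hrjlt : (rj : ℤ) < lam.rowLen j := by
    have : beta lam j = (lam.rowLen j : ℤ) - j := rfl
    omega
  have hlamj : 1 ≤ lam.rowLen j := by omega
  set r := hookRows lam i j rj with hrdef
  have hF1 : ∀ k, k ≤ j → 1 ≤ lam.rowLen k := fun k hk =>
    le_trans hlamj (lam.rowLen_anti k j hk)
  have hF4 : ∀ k, i ≤ k → k < j → r k + 1 = lam.rowLen (k + 1) := by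
    intro k h1 h2
    rw [hrdef, hookRows_mid h1 h2]
    have := hF1 (k + 1) (by omega)
    omega
  have hrjlt' : r j < lam.rowLen j := by
    rw [hrdef, hookRows_j hij]
    exact_mod_cast hrjlt
  have hF6 : ∀ k, i ≤ k → k ≤ j → r k < lam.rowLen k := by
    intro k h1 h2
    rcases eq_or_lt_of_le h2 with rfl | h2'
    · exact hrjlt'
    · have h4 := hF4 k h1 h2'
      have := lam.rowLen_anti k (k + 1) (by omega)
      omega
  have hout : ∀ k, k < i ∨ j < k → r k = lam.rowLen k := by
    intro k hk
    rcases hk with hk | hk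
    · exact hrdef ▸ hookRows_lt hk
    · exact hrdef ▸ hookRows_gt hij hk
  have hrjltn : rj < lam.rowLen j := by exact_mod_cast hrjlt
  have hF5 : ∀ k, r (k + 1) ≤ r k := by
    intro k
    rcases lt_or_ge (k + 1) i with h | h
    · rw [hout k (Or.inl (by omega)), hout (k+1) (Or.inl h)]
      exact lam.rowLen_anti k (k+1) (by omega)
    · rcases lt_or_ge (k + 1) j with h2 | h2
      · have e1 : r (k + 1) = lam.rowLen (k + 2) - 1 := hrdef ▸ hookRows_mid h h2
        rcases lt_or_ge k i with h3 | h3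
        · have e2 : r k = lam.rowLen k := hout k (Or.inl h3)
          have h4 := lam.rowLen_anti k (k + 2) (by omega)
          omega
        · have e2 : r k = lam.rowLen (k + 1) - 1 := hrdef ▸ hookRows_mid h3 (by omega)
          have h4 := lam.rowLen_anti (k + 1) (k + 2) (by omega)
          omega
      · rcases eq_or_lt_of_le h2 with hkj | hkj
        · -- j = k + 1
          have e1 : r (k + 1) = rj := by rw [← hkj, hrdef, hookRows_j hij]
          rcases lt_or_ge k i with h3 | h3
          · have e2 : r k = lam.rowLen k := hout k (Or.inl h3)
            have h6 : lam.rowLen j ≤ lam.rowLen k := lam.rowLen_anti k j (by omega)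
            omega
          · have e2 : r k = lam.rowLen (k + 1) - 1 := hrdef ▸ hookRows_mid h3 (by omega)
            have e3 : lam.rowLen j = lam.rowLen (k + 1) := by rw [hkj]
            omega
        · rcases eq_or_lt_of_le (show j ≤ k by omega) with hkj2 | hkj2
          · -- j = k
            have e1 : r (k + 1) = lam.rowLen (k + 1) := hout (k + 1) (Or.inr (by omega))
            have e2 : r k = rj := by rw [← hkj2, hrdef, hookRows_j hij]
            have h5 : beta lam (j + 1) = (lam.rowLen (j + 1) : ℤ) - ((j : ℤ) + 1) := by
              unfold beta; push_cast; ring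
            have h8 : (lam.rowLen (j + 1) : ℤ) ≤ (rj : ℤ) := by omega
            have h9 : lam.rowLen (j + 1) ≤ rj := by exact_mod_cast h8
            have e3 : lam.rowLen (j + 1) = lam.rowLen (k + 1) := by rw [hkj2]
            omega
          · rw [hout k (Or.inr hkj2), hout (k + 1) (Or.inr (by omega))]
            exact lam.rowLen_anti k (k+1) (by omega)
  have hranti : Antitone r := antitone_nat_of_succ_le hF5
  have hrle : ∀ k, r k ≤ lam.rowLen k := by
    intro k
    rcases lt_or_ge k i with h | h
    · rw [hout k (Or.inl h)]
    · rcases le_or_gt k j with h2 | h2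
      · exact le_of_lt (hF6 k h h2)
      · rw [hout k (Or.inr h2)]
  -- construct mu
  set mu : YoungDiagram := ⟨lam.cells.filter (fun p => p.2 < r p.1), by
    intro p q hqp hp
    simp only [Finset.coe_filter, Set.mem_setOf_eq, Finset.mem_coe,
      YoungDiagram.mem_cells] at hp ⊢
    obtain ⟨hp1, hp2⟩ := hp
    refine ⟨lam.up_left_mem hqp.1 hqp.2 hp1, ?_⟩
    calc q.2 ≤ p.2 := hqp.2
    _ < r p.1 := hp2
    _ ≤ r q.1 := hranti hqp.1⟩ with hmudef
  have hmumem : ∀ k c, (k, c) ∈ mu ↔ c < r k := by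
    intro k c
    have hmf : ((k, c) ∈ mu) ↔ ((k, c) ∈ lam.cells ∧ c < r k) := by
      show (k, c) ∈ lam.cells.filter (fun p => p.2 < r p.1) ↔ _
      exact Finset.mem_filter
    rw [hmf, YoungDiagram.mem_cells, mem_iff_lt_rowLen]
    constructor
    · exact fun h => h.2
    · exact fun h => ⟨lt_of_lt_of_le h (hrle k), h⟩
  have hmurow : ∀ k, mu.rowLen k = r k := by
    intro k
    rcases lt_trichotomy (mu.rowLen k) (r k) with h | h | h
    · have : (k, mu.rowLen k) ∈ mu := (hmumem k _).2 h
      rw [mem_iff_lt_rowLen] at this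
      omega
    · exact h
    · have : (k, r k) ∈ mu := mem_iff_lt_rowLen.2 h
      rw [hmumem] at this
      omega
  have hskew : ∀ k c, (k, c) ∈ skewCells mu lam ↔ r k ≤ c ∧ c < lam.rowLen k := by
    intro k c
    rw [mem_skew_iff, hmurow]
  have hrowD : ∀ k c, (k, c) ∈ skewCells mu lam → i ≤ k ∧ k ≤ j := by
    intro k c hkc
    rw [hskew] at hkc
    by_contra hcon
    have : r k = lam.rowLen k := hout k (by omega)
    omega
  have hle : mu ≤ lam := by
    rw [← YoungDiagram.cells_subset_iff, hmudef]
    exact Finset.filter_subset _ _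
  have houtside : ∀ k, k ∉ Finset.Icc i j → mu.rowLen k = lam.rowLen k := by
    intro k hk
    simp only [Finset.mem_Icc] at hk
    rw [hmurow]
    exact hout k (by omega)
  refine ⟨mu, hle, ?_, ?_, ?_⟩
  · -- card
    have hcast : ∀ k, ((lam.rowLen k - mu.rowLen k : ℕ) : ℤ)
        = (lam.rowLen k : ℤ) - (mu.rowLen k : ℤ) := by
      intro k
      have := rowLen_le_of_le hle k
      omega
    have : ((skewCells mu lam).card : ℤ) = (n : ℤ) := by
      rw [card_skew houtside]
      push_cast [hcast]
      rw [telescope (fun k => (lam.rowLen k : ℤ)) (fun k => (mu.rowLen k : ℤ)) hij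
        (by
          intro k h1 h2
          have h4 := hF4 k h1 h2
          show (mu.rowLen k : ℤ) + 1 = (lam.rowLen (k + 1) : ℤ)
          rw [hmurow k]
          exact_mod_cast h4)]
      rw [hmurow, hrdef, hookRows_j hij]
      have : beta lam i = (lam.rowLen i : ℤ) - i := rfl
      have hji : ((j - i : ℕ) : ℤ) = (j : ℤ) - i := by omega
      omega
    exact_mod_cast this
  · -- connectivity
    set Dm := skewCells mu lam with hDm
    set S := fun a b : ℕ × ℕ => a ∈ Dm ∧ b ∈ Dm ∧ Adjacent a b with hS
    have hsymm : Symmetric S := by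
      intro a b hab
      obtain ⟨h1, h2, h3⟩ := hab
      refine ⟨h2, h1, ?_⟩
      unfold Adjacent at h3 ⊢
      tauto
    have hRsymm : Symmetric (Relation.ReflTransGen S) :=
      by haveI : Std.Symm S := ⟨hsymm⟩; exact fun a b h => Std.Symm.symm a b h
    have horiz : ∀ k c d, c ≤ d → (k, c) ∈ Dm → (k, d) ∈ Dm →
        Relation.ReflTransGen S (k, c) (k, d) := by
      intro k c d hcd
      induction d, hcd using Nat.le_induction with
      | base => intro _ _; exact Relation.ReflTransGen.refl
      | succ d hcd ih =>
        intro hc hd1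
        have hd : (k, d) ∈ Dm := by
          rw [hskew] at hc hd1 ⊢
          omega
        exact (ih hc hd).tail ⟨hd, hd1, Or.inl ⟨rfl, Or.inr rfl⟩⟩
    have hrowmem : ∀ k, i ≤ k → k ≤ j → (k, r k) ∈ Dm := by
      intro k h1 h2
      rw [hskew]
      exact ⟨le_refl _, hF6 k h1 h2⟩
    have hvert : ∀ k, i ≤ k → k < j → S (k, r k) (k + 1, r k) := by
      intro k h1 h2
      refine ⟨hrowmem k h1 (by omega), ?_, Or.inr ⟨rfl, Or.inr rfl⟩⟩
      rw [hskew]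
      have h4 := hF4 k h1 h2
      exact ⟨hF5 k, by omega⟩
    have hanchor : ∀ k, i ≤ k → k ≤ j →
        Relation.ReflTransGen S (i, r i) (k, r k) := by
      intro k h1
      induction k, h1 using Nat.le_induction with
      | base => intro _; exact Relation.ReflTransGen.refl
      | succ k h1 ih =>
        intro h2
        have hstep := hvert k h1 (by omega)
        have h3 : (k + 1, r k) ∈ Dm := hstep.2.1
        have h4 : (k + 1, r (k + 1)) ∈ Dm := hrowmem (k + 1) (by omega) h2
        exact ((ih (by omega)).tail hstep).trans
          (hRsymm (horiz (k + 1) (r (k + 1)) (r k) (hF5 k) h4 h3))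
    intro p hp q hq
    obtain ⟨p1, p2⟩ := p
    obtain ⟨q1, q2⟩ := q
    have hp' := (hskew p1 p2).1 hp
    have hq' := (hskew q1 q2).1 hq
    have hpr := hrowD p1 p2 hp
    have hqr := hrowD q1 q2 hq
    have h1 : Relation.ReflTransGen S (p1, r p1) (p1, p2) :=
      horiz p1 (r p1) p2 hp'.1 (hrowmem p1 hpr.1 hpr.2) hp
    have h2 : Relation.ReflTransGen S (q1, r q1) (q1, q2) :=
      horiz q1 (r q1) q2 hq'.1 (hrowmem q1 hqr.1 hqr.2) hq
    exact ((hRsymm h1).trans (hRsymm (hanchor p1 hpr.1 hpr.2))).trans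
      ((hanchor q1 hqr.1 hqr.2).trans h2)
  · -- no 2x2
    rintro ⟨a, c, h1, h2, h3, h4⟩
    have hr1 := hrowD _ _ h1
    have hr2 := hrowD _ _ h2
    rw [hskew] at h1 h2 h3 h4
    have h5 := hF4 a (by omega) (by omega)
    omega



def hiSet (n : ℕ) (t : YoungDiagram) (L : ℤ) : Set ℤ :=
  {x | x ∈ Bset t ∧ L ≤ x ∧ (n : ℤ) ∣ (x - L)}

lemma hiSet_finite (n : ℕ) (t : YoungDiagram) (L : ℤ) : (hiSet n t L).Finite :=
  Set.Finite.subset (Set.finite_Icc L (beta t 0)) (by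
    rintro x ⟨hx, hL, -⟩
    exact ⟨hL, le_beta_zero_of_mem hx⟩)

noncomputable def hiCount (n : ℕ) (t : YoungDiagram) (L : ℤ) : ℕ := (hiSet n t L).ncard

lemma step_hiCount {n : ℕ} (hn : 0 < n) {lam mu : YoungDiagram} (h : RimStep n lam mu)
    {L : ℤ} (hL : L ≤ -(lam.colLen 0 : ℤ)) : hiCount n mu L = hiCount n lam L := by
  obtain ⟨b, hbmem, hbnot, hBeq⟩ := rimstep_bmove hn h
  have hbnL : L ≤ b - n := by
    have := lt_of_not_mem_Bset hbnot
    omega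
  have hbL : L ≤ b := by
    have : (0:ℤ) ≤ n := by positivity
    omega
  unfold hiCount
  by_cases hdvd : (n:ℤ) ∣ (b - L)
  · have hdvd' : (n:ℤ) ∣ (b - n - L) := by
      obtain ⟨c, hc⟩ := hdvd
      exact ⟨c - 1, by linarith [hc]⟩
    have hset : hiSet n mu L = insert (b - n) (hiSet n lam L \ {b}) := by
      ext x
      simp only [hiSet, hBeq, Set.mem_insert_iff, Set.mem_diff, Set.mem_setOf_eq,
        Set.mem_singleton_iff]
      constructor
      · rintro ⟨(rfl | ⟨hx, hne⟩), hLx, hdx⟩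
        · left; rfl
        · right; exact ⟨⟨hx, hLx, hdx⟩, hne⟩
      · rintro (rfl | ⟨⟨hx, hLx, hdx⟩, hne⟩)
        · exact ⟨Or.inl rfl, hbnL, hdvd'⟩
        · exact ⟨Or.inr ⟨hx, hne⟩, hLx, hdx⟩
    rw [hset]
    have hfin : (hiSet n lam L \ {b}).Finite := (hiSet_finite n lam L).diff
    have hbin : b ∈ hiSet n lam L := ⟨hbmem, hbL, hdvd⟩
    rw [Set.ncard_insert_of_notMem (fun hc => hbnot hc.1.1) hfin]
    rw [Set.ncard_diff_singleton_add_one hbin (hiSet_finite n lam L)]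
  · have hdvd' : ¬ (n:ℤ) ∣ (b - n - L) := by
      rintro ⟨c, hc⟩
      exact hdvd ⟨c + 1, by linarith [hc]⟩
    have hset : hiSet n mu L = hiSet n lam L := by
      ext x
      simp only [hiSet, hBeq, Set.mem_insert_iff, Set.mem_diff, Set.mem_setOf_eq,
        Set.mem_singleton_iff]
      constructor
      · rintro ⟨(rfl | ⟨hx, hne⟩), hLx, hdx⟩
        · exact absurd hdx hdvd'
        · exact ⟨hx, hLx, hdx⟩
      · rintro ⟨hx, hLx, hdx⟩
        refine ⟨Or.inr ⟨hx, ?_⟩, hLx, hdx⟩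
        rintro rfl
        exact hdvd hdx
    rw [hset]

lemma chain_le {n : ℕ} {a c : YoungDiagram}
    (h : Relation.ReflTransGen (RimStep n) a c) : c ≤ a := by
  induction h with
  | refl => exact le_refl a
  | tail h1 step ih => exact le_trans step.1 ih

lemma chain_hiCount {n : ℕ} (hn : 0 < n) {a c : YoungDiagram}
    (h : Relation.ReflTransGen (RimStep n) a c) {L : ℤ}
    (hL : L ≤ -(a.colLen 0 : ℤ)) : hiCount n c L = hiCount n a L := by
  induction h with
  | refl => rfl
  | tail h1 step ih =>
    rename_i b' c'
    have hb'a : b' ≤ a := chain_le h1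
    have : (b'.colLen 0 : ℤ) ≤ (a.colLen 0 : ℤ) := by
      exact_mod_cast colLen_le_of_le hb'a
    rw [step_hiCount hn step (by omega), ih]

lemma core_closed {n : ℕ} (hn : 0 < n) {t : YoungDiagram} (hc : IsCore n t) :
    ∀ x ∈ Bset t, x - n ∈ Bset t := by
  intro x hx
  by_contra hnot
  obtain ⟨i, rfl⟩ := hx
  exact hc (bmove_rimstep hn i hnot)

lemma mem_iff_lt_ncard {S : Set ℕ} (hfin : S.Finite) (hdc : ∀ m, m + 1 ∈ S → m ∈ S) :
    ∀ m, m ∈ S ↔ m < S.ncard := by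
  have hdc2 : ∀ d a, a + d ∈ S → a ∈ S := by
    intro d
    induction d with
    | zero => intro a ha; exact ha
    | succ d ih =>
      intro a ha
      exact ih a (hdc (a + d) (by rwa [show a + d + 1 = a + (d + 1) by omega]))
  have hdc' : ∀ a b, a ≤ b → b ∈ S → a ∈ S := by
    intro a b hab hb
    exact hdc2 (b - a) a (by rwa [show a + (b - a) = b by omega])
  intro m
  constructor
  · intro hm
    have hsub : Set.Iic m ⊆ S := fun a ha => hdc' a m ha hm
    have h1 := Set.ncard_le_ncard hsub hfin
    have h2 : (Set.Iic m).ncard = m + 1 := by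
      rw [← Finset.coe_Iic, Set.ncard_coe_finset, Nat.card_Iic]
    omega
  · intro hm
    by_contra hnm
    have hsub : S ⊆ Set.Iio m := by
      intro a ha
      by_contra h'
      simp only [Set.mem_Iio, not_lt] at h'
      exact hnm (hdc' m a h' ha)
    have h1 := Set.ncard_le_ncard hsub (Set.finite_Iio m)
    have h2 : (Set.Iio m).ncard = m := by
      rw [← Finset.coe_Iio, Set.ncard_coe_finset, Nat.card_Iio]
    omega

lemma core_subset {n : ℕ} (hn : 0 < n) {rho t1 t2 : YoungDiagram}
    (h1 : Relation.ReflTransGen (RimStep n) rho t1) (hc1 : IsCore n t1)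
    (h2 : Relation.ReflTransGen (RimStep n) rho t2) (hc2 : IsCore n t2) :
    Bset t1 ⊆ Bset t2 := by
  intro x hx
  set K := (x + rho.colLen 0).toNat with hKdef
  have hK : x + rho.colLen 0 ≤ (K : ℤ) := Int.self_le_toNat _
  set L := x - n * K with hLdef
  have hnK : (K : ℤ) ≤ (n : ℤ) * K := by
    have h1' : (1:ℤ) ≤ n := by exact_mod_cast hn
    nlinarith [Int.natCast_nonneg K]
  have hL : L ≤ -(rho.colLen 0 : ℤ) := by omega
  have hxL : x = L + n * K := by omega
  set S1 := {m : ℕ | L + n * m ∈ Bset t1} with hS1def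
  set S2 := {m : ℕ | L + n * m ∈ Bset t2} with hS2def
  have hfin : ∀ (t : YoungDiagram), {m : ℕ | L + n * m ∈ Bset t}.Finite := by
    intro t
    apply Set.Finite.subset (Set.finite_Iic (beta t 0 - L).toNat)
    intro m hm
    simp only [Set.mem_setOf_eq] at hm
    have h1' := le_beta_zero_of_mem hm
    have h2' : (m : ℤ) ≤ (n:ℤ) * m := by
      have : (1:ℤ) ≤ n := by exact_mod_cast hn
      nlinarith [Int.natCast_nonneg m]
    have h3' : (m : ℤ) ≤ beta t 0 - L := by omega
    simp only [Set.mem_Iic]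
    omega
  have hdc : ∀ (t : YoungDiagram), IsCore n t →
      ∀ m, m + 1 ∈ {m : ℕ | L + n * m ∈ Bset t} → m ∈ {m : ℕ | L + n * m ∈ Bset t} := by
    intro t hct m hm
    simp only [Set.mem_setOf_eq] at hm ⊢
    have := core_closed hn hct _ hm
    have heq : L + (n:ℤ) * (m + 1 : ℕ) - n = L + n * m := by push_cast; ring
    rwa [heq] at this
  have himg : ∀ (t : YoungDiagram),
      hiSet n t L = (fun m : ℕ => L + n * m) '' {m : ℕ | L + n * m ∈ Bset t} := by
    intro t
    ext y
    simp only [hiSet, Set.mem_image, Set.mem_setOf_eq]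
    constructor
    · rintro ⟨hy, hLy, c, hc⟩
      have hc0 : 0 ≤ c := by
        by_contra hc0
        push_neg at hc0
        have : (n:ℤ) * c ≤ (n:ℤ) * (-1) := by
          apply mul_le_mul_of_nonneg_left (by omega) (by positivity)
        omega
      refine ⟨c.toNat, ?_, ?_⟩
      · have : (c.toNat : ℤ) = c := Int.toNat_of_nonneg hc0
        rw [this]
        have : y = L + n * c := by omega
        rw [← this]
        exact hy
      · have : (c.toNat : ℤ) = c := Int.toNat_of_nonneg hc0
        rw [this]
        omega
    · rintro ⟨m, hm, rfl⟩
      refine ⟨hm, ?_, ⟨m, by ring⟩⟩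
      have : (0:ℤ) ≤ (n:ℤ) * m := by positivity
      omega
  have hinj : Function.Injective (fun m : ℕ => L + (n:ℤ) * m) := by
    intro a b hab
    simp only at hab
    have : (a : ℤ) = b := by
      have hn' : (0:ℤ) < n := by exact_mod_cast hn
      have := mul_left_cancel₀ (show (n:ℤ) ≠ 0 by omega) (show (n:ℤ) * a = n * b by omega)
      exact this
    exact_mod_cast this
  have hcard : ∀ (t : YoungDiagram), {m : ℕ | L + n * m ∈ Bset t}.ncard = hiCount n t L := by
    intro t
    rw [hiCount, himg t, Set.ncard_image_of_injective _ hinj]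
  have hcounts : hiCount n t1 L = hiCount n t2 L := by
    rw [chain_hiCount hn h1 hL, chain_hiCount hn h2 hL]
  have hK1 : K ∈ S1 := by
    simp only [hS1def, Set.mem_setOf_eq, ← hxL]
    exact hx
  have hK1' := (mem_iff_lt_ncard (hfin t1) (hdc t1 hc1) K).1 hK1
  have hK2 : K ∈ S2 := by
    apply (mem_iff_lt_ncard (hfin t2) (hdc t2 hc2) K).2
    calc K < S1.ncard := hK1'
    _ = hiCount n t1 L := hcard t1
    _ = hiCount n t2 L := hcounts
    _ = S2.ncard := (hcard t2).symm
  simp only [hS2def, Set.mem_setOf_eq, ← hxL] at hK2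
  exact hK2


/-- For any partition `rho` and positive integer `n`, the `n`-core of `rho` is
well-defined: any two maximal sequences of legal `n`-rim hook removals from `rho` terminate
at the same partition. -/
theorem ncore_well_defined (n : ℕ) (hn : 0 < n) (rho t1 t2 : YoungDiagram)
    (h1 : Relation.ReflTransGen (RimStep n) rho t1) (hc1 : IsCore n t1)
    (h2 : Relation.ReflTransGen (RimStep n) rho t2) (hc2 : IsCore n t2) :
    t1 = t2 := by
  apply eq_of_Bset_eq
  apply Set.Subset.antisymm
  · exact core_subset hn h1 hc1 h2 hc2
  · exact core_subset hn h2 hc2 h1 hc1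

end QCGrass
end

section
/- Let m×M and n×N be rectangular partitions contained in the l×k rectangle, with m+n ≤ l or M+N ≤ k (so that the cohomology product σ_{m×M}·σ_{n×N} in Gr(l,l+k) is nonzero). Then every partition γ ⊆ l×k with c^γ_{m×M,n×N} ≠ 0 contains the union of shapes (m×M) ∪ (n×N) ∪ ((m+n)×(M+N−k)) ∪ ((m+n−l)×(M+N)), where a rectangle is omitted if one of its dimensions is nonpositive or it does not fit inside l×k; moreover this union is itself the intersection of all such γ. -/
open YoungDiagram

namespace QCGrass

lemma mem_rect {m M : ℕ} {p : ℕ × ℕ} : p ∈ rect m M ↔ p.1 < m ∧ p.2 < M := by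
  cases p with
  | mk i j =>
    show (i, j) ∈ (rect m M).cells ↔ _
    simp [rect, Finset.mem_product]

lemma mem_skew {lam nu : YoungDiagram} {p : ℕ × ℕ} :
    p ∈ skewCells lam nu ↔ p ∈ nu ∧ p ∉ lam := by
  simp [skewCells, Finset.mem_sdiff, YoungDiagram.mem_cells]

lemma rowLen_eq_of {μ : YoungDiagram} {i c : ℕ} (h : ∀ j, (i, j) ∈ μ ↔ j < c) :
    μ.rowLen i = c := by
  have h1 := (h c).mp
  have h2 : ∀ j, (i, j) ∈ μ ↔ j < μ.rowLen i := fun j => YoungDiagram.mem_iff_lt_rowLen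
  rcases Nat.eq_zero_or_pos c with hc | hc
  · subst hc
    by_contra hne
    have := (h2 0).mpr (by omega)
    rw [h 0] at this; omega
  · have hcm : (i, c - 1) ∈ μ := (h (c-1)).mpr (by omega)
    have hlow := (h2 (c-1)).mp hcm
    by_contra hne
    have hup : μ.rowLen i ≤ c := by
      by_contra hgt
      exact absurd ((h c).mp ((h2 c).mpr (by omega))) (by omega)
    have := (h2 (c-1)).mp hcm
    omega

lemma rowLen_rect (m M i : ℕ) : (rect m M).rowLen i = if i < m then M else 0 := by
  apply rowLen_eq_of
  intro j
  rw [mem_rect]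
  split_ifs <;> simp <;> omega

lemma rowLen_sup (μ ν : YoungDiagram) (i : ℕ) :
    (μ ⊔ ν).rowLen i = max (μ.rowLen i) (ν.rowLen i) := by
  apply rowLen_eq_of
  intro j
  rw [YoungDiagram.mem_sup, YoungDiagram.mem_iff_lt_rowLen, YoungDiagram.mem_iff_lt_rowLen]
  omega

lemma rowLen_bot (i : ℕ) : (⊥ : YoungDiagram).rowLen i = 0 := by
  apply rowLen_eq_of
  intro j
  simp [YoungDiagram.notMem_bot]

lemma rowLen_le_of_le_s4 {μ ν : YoungDiagram} (h : μ ≤ ν) (i : ℕ) :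
    μ.rowLen i ≤ ν.rowLen i := by
  by_contra hlt
  have : (i, ν.rowLen i) ∈ μ := YoungDiagram.mem_iff_lt_rowLen.mpr (by omega)
  have : (i, ν.rowLen i) ∈ ν := h this
  rw [YoungDiagram.mem_iff_lt_rowLen] at this
  omega

lemma rect_le_iff {m M : ℕ} {μ : YoungDiagram} :
    rect m M ≤ μ ↔ ∀ i < m, M ≤ μ.rowLen i := by
  constructor
  · intro h i hi
    rcases Nat.eq_zero_or_pos M with hM | hM
    · omega
    · have : (i, M - 1) ∈ μ := h (mem_rect.mpr ⟨hi, by omega⟩)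
      rw [YoungDiagram.mem_iff_lt_rowLen] at this
      omega
  · intro h p hp
    rw [mem_rect] at hp
    have := h p.1 hp.1
    rw [YoungDiagram.mem_iff_lt_rowLen]
    · exact lt_of_lt_of_le hp.2 this

lemma le_rect_iff {l k : ℕ} {μ : YoungDiagram} :
    μ ≤ rect l k ↔ (∀ i, μ.rowLen i ≤ k) ∧ (∀ i, l ≤ i → μ.rowLen i = 0) := by
  constructor
  · intro h
    constructor
    · intro i
      have := rowLen_le_of_le_s4 h i
      rw [rowLen_rect] at this
      split_ifs at this <;> omega
    · intro i hi
      have := rowLen_le_of_le_s4 h i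
      rw [rowLen_rect] at this
      split_ifs at this <;> omega
  · intro ⟨h1, h2⟩ p hp
    rw [YoungDiagram.mem_iff_lt_rowLen] at hp
    rw [mem_rect]
    constructor
    · by_contra hl
      rw [h2 p.1 (by omega)] at hp; omega
    · exact lt_of_lt_of_le hp (h1 p.1)


section Part1

variable {m M n N : ℕ} {γ : YoungDiagram} {T : ℕ × ℕ → ℕ}

/-- Number of `v`-cells in rows `≥ r`. -/
noncomputable def Qc (m M : ℕ) (γ : YoungDiagram) (T : ℕ × ℕ → ℕ) (v r : ℕ) : ℕ :=
  ((skewCells (rect m M) γ).filter (fun p => T p = v ∧ r ≤ p.1)).card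

/-- Every cell of value `v` lies in row `≥ v - 1`. -/
lemma val_le_row (hT : IsLRTableau (rect m M) (rect n N) γ T) :
    ∀ v p, p ∈ skewCells (rect m M) γ → T p = v → v ≤ p.1 + 1 := by
  obtain ⟨hle, hsupp, hrow, hcol, hcont, hlat⟩ := hT
  intro v
  induction v using Nat.strong_induction_on with
  | _ v ih =>
    rintro ⟨p1, p2⟩ hp hv
    rcases Nat.lt_or_ge v 2 with h2 | h2
    · omega
    · have hpos : 0 < ((skewCells (rect m M) γ).filter
          (fun q => T q = (v-2) + 2 ∧ (q.1 < p1 ∨ (q.1 = p1 ∧ p2 ≤ q.2)))).card := by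
        apply Finset.card_pos.mpr
        refine ⟨(p1, p2), Finset.mem_filter.mpr ⟨hp, ⟨by rw [hv]; omega, ?_⟩⟩⟩
        exact Or.inr ⟨rfl, le_refl _⟩
      have hpos' := lt_of_lt_of_le hpos (hlat p1 p2 (v - 2))
      obtain ⟨q, hq⟩ := Finset.card_pos.mp hpos'
      rw [Finset.mem_filter] at hq
      obtain ⟨hqS, hqv, hqpos⟩ := hq
      obtain ⟨q1, q2⟩ := q
      simp only at hqv hqpos
      have hqlt : q1 < p1 := by
        rcases hqpos with h | ⟨h1, h2'⟩
        · exact h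
        · exfalso
          subst h1
          have := hrow q1 p2 q2 h2' hp hqS
          omega
      have := ih (v-1) (by omega) (q1, q2) hqS (by omega)
      simp only at this
      omega

/-- In columns `≥ M`, the value at `(r, j)` is at least `r + 1`. -/
lemma row_lt_val (hT : IsLRTableau (rect m M) (rect n N) γ T) :
    ∀ r j, (r, j) ∈ skewCells (rect m M) γ → M ≤ j → r + 1 ≤ T (r, j) := by
  obtain ⟨hle, hsupp, hrow, hcol, hcont, hlat⟩ := hT
  intro r
  induction r with
  | zero => intro j hj _; have := (hsupp (0, j)).mpr hj; omega
  | succ r ihr =>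
    intro j hj hM
    have hmem : (r, j) ∈ skewCells (rect m M) γ := by
      rw [mem_skew] at hj ⊢
      refine ⟨γ.up_left_mem (by omega) (le_refl _) hj.1, ?_⟩
      rw [mem_rect]; omega
    have h1 := ihr j hmem hM
    have h2 := hcol r (r+1) j (by omega) hmem hj
    omega

/-- Cells of a fixed value `v` in rows `≥ r0` all have distinct columns bounded by row `r0`'s
length; hence their number is at most `γ.rowLen r0`. -/
lemma card_val_le_rowLen (hT : IsLRTableau (rect m M) (rect n N) γ T)
    (v r0 : ℕ) (F : Finset (ℕ × ℕ)) (hFs : F ⊆ skewCells (rect m M) γ)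
    (hval : ∀ p ∈ F, T p = v) (hrow : ∀ p ∈ F, r0 ≤ p.1) :
    F.card ≤ γ.rowLen r0 := by
  obtain ⟨hle, hsupp, hrowm, hcol, hcont, hlat⟩ := hT
  have : F.card ≤ (Finset.range (γ.rowLen r0)).card := by
    apply Finset.card_le_card_of_injOn (fun p => p.2)
    · intro p hp
      simp only [Finset.mem_coe, Finset.mem_range]
      have h2 : p ∈ γ := (mem_skew.mp (hFs hp)).1
      rw [YoungDiagram.mem_iff_lt_rowLen] at h2
      have h3 := γ.rowLen_anti r0 p.1 (hrow p hp)
      omega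
    · rintro ⟨p1, p2⟩ hp ⟨q1, q2⟩ hq hpq
      simp only at hpq
      subst hpq
      rcases lt_trichotomy p1 q1 with h | h | h
      · have := hcol p1 q1 p2 h (hFs hp) (hFs hq)
        rw [hval _ hp, hval _ hq] at this; omega
      · rw [h]
      · have := hcol q1 p1 p2 h (hFs hq) (hFs hp)
        rw [hval _ hp, hval _ hq] at this; omega
  simpa using this

lemma content_card (hT : IsLRTableau (rect m M) (rect n N) γ T) {v : ℕ} (hv : 1 ≤ v) :
    ((skewCells (rect m M) γ).filter (fun p => T p = v)).card
      = if v ≤ n then N else 0 := by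
  obtain ⟨hle, hsupp, hrow, hcol, hcont, hlat⟩ := hT
  have h := hcont (v - 1)
  have hv1 : v - 1 + 1 = v := by omega
  rw [hv1] at h
  rw [h, rowLen_rect]
  split_ifs <;> omega

/-- `N ≤ γ.rowLen (v-1)` for `1 ≤ v ≤ n`. -/
lemma N_le_rowLen (hT : IsLRTableau (rect m M) (rect n N) γ T)
    {v : ℕ} (hv1 : 1 ≤ v) (hvn : v ≤ n) : N ≤ γ.rowLen (v - 1) := by
  have hcard : ((skewCells (rect m M) γ).filter (fun p => T p = v)).card = N := by
    rw [content_card hT hv1, if_pos hvn]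
  rw [← hcard]
  apply card_val_le_rowLen hT v (v - 1)
  · exact Finset.filter_subset _ _
  · intro p hp; exact (Finset.mem_filter.mp hp).2
  · intro p hp
    have := val_le_row hT v p (Finset.mem_filter.mp hp).1 (Finset.mem_filter.mp hp).2
    omega

/-- The push lemma : `Q_v(r) ≤ Q_{v+1}(r+1)` for `1 ≤ v`, `v + 1 ≤ n`. -/
lemma push (hT : IsLRTableau (rect m M) (rect n N) γ T)
    {v r : ℕ} (hv : 1 ≤ v) (hvn : v + 1 ≤ n) :
    Qc m M γ T v r ≤ Qc m M γ T (v+1) (r+1) := by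
  obtain ⟨hle, hsupp, hrow, hcol, hcont, hlat⟩ := hT
  set S := skewCells (rect m M) γ with hS
  show (S.filter (fun p => T p = v ∧ r ≤ p.1)).card
      ≤ (S.filter (fun p => T p = v + 1 ∧ r + 1 ≤ p.1)).card
  set A := S.filter (fun p => T p = v ∧ r ≤ p.1) with hA
  rcases Finset.eq_empty_or_nonempty A with hAe | hAne
  · rw [hAe]; simp
  · have hAim : (A.image Prod.fst).Nonempty := Finset.Nonempty.image hAne _
    set r0 := (A.image Prod.fst).min' hAim with hr0
    have hr0mem : r0 ∈ A.image Prod.fst := Finset.min'_mem _ _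
    obtain ⟨p0, hp0A, hp0⟩ := Finset.mem_image.mp hr0mem
    set B := A.filter (fun p => p.1 = r0) with hB
    have hBne : B.Nonempty := ⟨p0, Finset.mem_filter.mpr ⟨hp0A, hp0⟩⟩
    have hBim : (B.image Prod.snd).Nonempty := Finset.Nonempty.image hBne _
    set j0 := (B.image Prod.snd).max' hBim with hj0
    have hj0mem : j0 ∈ B.image Prod.snd := Finset.max'_mem _ _
    obtain ⟨q0, hq0B, hq0⟩ := Finset.mem_image.mp hj0mem
    have hq0A : q0 ∈ A := (Finset.mem_filter.mp hq0B).1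
    have hq0r : q0.1 = r0 := (Finset.mem_filter.mp hq0B).2
    have hq0S : q0 ∈ S := (Finset.mem_filter.mp hq0A).1
    have hq0v : T q0 = v := (Finset.mem_filter.mp hq0A).2.1
    have hrr0 : r ≤ r0 := by
      have := (Finset.mem_filter.mp hp0A).2.2
      omega
    have step1 : A.card ≤ (S.filter
        (fun p => T p = v ∧ ¬ (p.1 < r0 ∨ (p.1 = r0 ∧ j0 + 1 ≤ p.2)))).card := by
      apply Finset.card_le_card
      intro p hp
      have hp' := Finset.mem_filter.mp hp
      rw [Finset.mem_filter]
      refine ⟨hp'.1, hp'.2.1, ?_⟩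
      have hpr0 : r0 ≤ p.1 := by
        apply Finset.min'_le
        exact Finset.mem_image.mpr ⟨p, hp, rfl⟩
      push_neg
      refine ⟨by omega, fun h1 => ?_⟩
      have hpB : p ∈ B := Finset.mem_filter.mpr ⟨hp, h1⟩
      have : p.2 ≤ j0 := Finset.le_max' _ _ (Finset.mem_image.mpr ⟨p, hpB, rfl⟩)
      omega
    have tot : ∀ w, 1 ≤ w → w ≤ n →
        (S.filter (fun p => T p = w ∧ (p.1 < r0 ∨ (p.1 = r0 ∧ j0 + 1 ≤ p.2)))).card
          + (S.filter (fun p => T p = w ∧ ¬ (p.1 < r0 ∨ (p.1 = r0 ∧ j0 + 1 ≤ p.2)))).card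
          = N := by
      intro w hw1 hwn
      have hsplit := Finset.card_filter_add_card_filter_not
        (s := S.filter (fun p => T p = w))
        (p := fun p => p.1 < r0 ∨ (p.1 = r0 ∧ j0 + 1 ≤ p.2))
      rw [Finset.filter_filter, Finset.filter_filter] at hsplit
      have hcw : (S.filter (fun p => T p = w)).card = N := by
        have h := hcont (w - 1)
        have hw1' : w - 1 + 1 = w := by omega
        rw [hw1'] at h
        rw [hS, h, rowLen_rect, if_pos (by omega)]
      omega
    have hlat' : (S.filter (fun p => T p = v + 1 ∧ (p.1 < r0 ∨ (p.1 = r0 ∧ j0 + 1 ≤ p.2)))).card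
        ≤ (S.filter (fun p => T p = v ∧ (p.1 < r0 ∨ (p.1 = r0 ∧ j0 + 1 ≤ p.2)))).card := by
      have h := hlat r0 (j0 + 1) (v - 1)
      have e1 : v - 1 + 2 = v + 1 := by omega
      have e2 : v - 1 + 1 = v := by omega
      rw [e1, e2] at h
      exact h
    have step2 : (S.filter (fun p => T p = v ∧ ¬ (p.1 < r0 ∨ (p.1 = r0 ∧ j0 + 1 ≤ p.2)))).card
        ≤ (S.filter (fun p => T p = v + 1 ∧ ¬ (p.1 < r0 ∨ (p.1 = r0 ∧ j0 + 1 ≤ p.2)))).card := by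
      have t1 := tot v hv (by omega)
      have t2 := tot (v+1) (by omega) hvn
      omega
    have step3 : (S.filter (fun p => T p = v + 1 ∧ ¬ (p.1 < r0 ∨ (p.1 = r0 ∧ j0 + 1 ≤ p.2)))).card
        ≤ (S.filter (fun p => T p = v + 1 ∧ r + 1 ≤ p.1)).card := by
      apply Finset.card_le_card
      intro p hp
      have hp' := Finset.mem_filter.mp hp
      obtain ⟨hpS, hpv, hpC⟩ := hp'
      rw [Finset.mem_filter]
      refine ⟨hpS, hpv, ?_⟩
      push_neg at hpC
      rcases Nat.lt_or_ge p.1 r0 with hlt | hge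
      · omega
      · rcases Nat.eq_or_lt_of_le hge with heq | hgt
        · exfalso
          have hj2 := hpC.2 (heq.symm)
          rcases Nat.eq_or_lt_of_le (by omega : p.2 ≤ q0.2) with he | hl
          · -- p = q0, but values differ
            have : p = q0 := Prod.ext (heq.symm.trans hq0r.symm) he
            rw [this, hq0v] at hpv
            omega
          · -- p strictly left of q0 in the same row
            obtain ⟨pa, pb⟩ := p
            obtain ⟨qa, qb⟩ := q0
            simp only at heq hq0r hq0v hl hpv
            have hrowm := hrow qa pb qb (by omega)
              (by rw [(by omega : qa = pa)]; exact hpS) hq0S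
            rw [hq0v, (by omega : qa = pa), hpv] at hrowm
            omega
        · omega
    calc A.card ≤ _ := step1
      _ ≤ _ := step2
      _ ≤ _ := step3


lemma chain (hT : IsLRTableau (rect m M) (rect n N) γ T) :
    ∀ d v r, 1 ≤ v → v + d ≤ n → Qc m M γ T v r ≤ Qc m M γ T (v + d) (r + d) := by
  intro d
  induction d with
  | zero => intro v r _ _; simp
  | succ d ih =>
    intro v r hv hvd
    calc Qc m M γ T v r ≤ Qc m M γ T (v+1) (r+1) := push hT hv (by omega)
      _ ≤ Qc m M γ T (v+1+d) (r+1+d) := ih (v+1) (r+1) (by omega) (by omega)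
      _ = Qc m M γ T (v+(d+1)) (r+(d+1)) := by
          rw [show v+1+d = v+(d+1) by omega, show r+1+d = r+(d+1) by omega]

lemma M_le_rowLen (hT : IsLRTableau (rect m M) (rect n N) γ T) {i : ℕ} (him : i < m) :
    M ≤ γ.rowLen i := rect_le_iff.mp hT.1 i him

lemma pairing (hT : IsLRTableau (rect m M) (rect n N) γ T) {i : ℕ}
    (him : i < m) (hin : i < n) :
    M + N ≤ γ.rowLen i + γ.rowLen (m + n - 1 - i) := by
  have hsupp := hT.2.1
  have hrow := hT.2.2.1
  have hcol := hT.2.2.2.1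
  set S := skewCells (rect m M) γ with hS
  set D := S.filter (fun p => T p = i + 1) with hD
  have hDcard : D.card = N := by
    rw [hD, content_card hT (by omega), if_pos (by omega)]
  have hsplit : (D.filter (fun p => M ≤ p.2)).card
      + (D.filter (fun p => ¬ M ≤ p.2)).card = D.card :=
    Finset.card_filter_add_card_filter_not (s := D) (p := fun p => M ≤ p.2)
  -- cells in columns ≥ M sit in row i, columns in [M, γ.rowLen i)
  have hD1 : (D.filter (fun p => M ≤ p.2)).card ≤ γ.rowLen i - M := by
    have : (D.filter (fun p => M ≤ p.2)).card ≤ (Finset.Ico M (γ.rowLen i)).card := by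
      apply Finset.card_le_card_of_injOn (fun p => p.2)
      · intro p hp
        rw [hD, Finset.mem_coe, Finset.mem_filter, Finset.mem_filter] at hp
        obtain ⟨⟨hpS, hpv⟩, hpM⟩ := hp
        have h1 := val_le_row hT (i+1) p hpS hpv
        obtain ⟨pa, pb⟩ := p
        have h2 := row_lt_val hT pa pb hpS hpM
        simp only at hpv h1 hpM ⊢
        have hrowi : pa = i := by omega
        have h3 : (pa, pb) ∈ γ := (mem_skew.mp hpS).1
        rw [YoungDiagram.mem_iff_lt_rowLen] at h3
        rw [Finset.mem_coe, Finset.mem_Ico]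
        subst hrowi
        exact ⟨hpM, h3⟩
      · rintro ⟨pa, pb⟩ hp ⟨qa, qb⟩ hq hpq
        simp only at hpq
        simp only [Finset.mem_coe, hD, Finset.mem_filter] at hp hq
        have h1p := val_le_row hT (i+1) (pa, pb) hp.1.1 hp.1.2
        have h2p := row_lt_val hT pa pb hp.1.1 hp.2
        have h1q := val_le_row hT (i+1) (qa, qb) hq.1.1 hq.1.2
        have h2q := row_lt_val hT qa qb hq.1.1 hq.2
        have : pa = qa := by rw [hp.1.2] at h2p; rw [hq.1.2] at h2q; omega
        simp [this, hpq]
    have := Nat.card_Ico M (γ.rowLen i)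
    omega
  -- cells in columns < M are in rows ≥ m
  have hD2 : (D.filter (fun p => ¬ M ≤ p.2)).card ≤ Qc m M γ T (i+1) m := by
    apply Finset.card_le_card
    intro p hp
    rw [hD, Finset.mem_filter, Finset.mem_filter] at hp
    obtain ⟨⟨hpS, hpv⟩, hpM⟩ := hp
    show p ∈ S.filter _
    rw [Finset.mem_filter]
    refine ⟨hpS, hpv, ?_⟩
    have := (mem_skew.mp hpS).2
    rw [mem_rect] at this
    omega
  have hchain : Qc m M γ T (i+1) m ≤ Qc m M γ T n (m + n - 1 - i) := by
    have h := chain hT (n - 1 - i) (i+1) m (by omega) (by omega)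
    rw [show i+1+(n-1-i) = n by omega, show m+(n-1-i) = m+n-1-i by omega] at h
    exact h
  have hfin : Qc m M γ T n (m + n - 1 - i) ≤ γ.rowLen (m + n - 1 - i) := by
    apply card_val_le_rowLen hT n (m+n-1-i)
    · exact Finset.filter_subset _ _
    · intro p hp; exact (Finset.mem_filter.mp hp).2.1
    · intro p hp; exact (Finset.mem_filter.mp hp).2.2
  have hMle := M_le_rowLen hT him
  omega

end Part1

section Part2

/-- Row-length function of the witness shape `γ(t,a)`. -/
def gfun (m M n N t a : ℕ) : ℕ → ℕ := fun i =>
  if i < t then M + N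
  else if i < min m n then max M N + a
  else if i < m then M
  else if i < n then N
  else if i < m + n - t then min M N - a
  else 0

/-- The witness shape `γ(t,a)`. -/
def gam (m M n N t a : ℕ) : YoungDiagram :=
  rect t (M+N) ⊔ rect (min m n) (max M N + a) ⊔ rect m M ⊔ rect n N
    ⊔ rect (m+n-t) (min M N - a)

variable {m M n N t a : ℕ}

lemma mem_gam (ht : t ≤ min m n) (ha : a ≤ min M N) {p : ℕ × ℕ} :
    p ∈ gam m M n N t a ↔ p.2 < gfun m M n N t a p.1 := by
  unfold gam gfun
  rw [YoungDiagram.mem_sup, YoungDiagram.mem_sup, YoungDiagram.mem_sup, YoungDiagram.mem_sup,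
    mem_rect, mem_rect, mem_rect, mem_rect, mem_rect]
  split_ifs <;> omega

lemma rowLen_gam (ht : t ≤ min m n) (ha : a ≤ min M N) (i : ℕ) :
    (gam m M n N t a).rowLen i = gfun m M n N t a i := by
  apply rowLen_eq_of
  intro j
  rw [mem_gam ht ha]

lemma mem_skew_gam (ht : t ≤ min m n) (ha : a ≤ min M N) {p : ℕ × ℕ} :
    p ∈ skewCells (rect m M) (gam m M n N t a) ↔
      p.2 < gfun m M n N t a p.1 ∧ (m ≤ p.1 ∨ M ≤ p.2) := by
  rw [mem_skew, mem_gam ht ha, mem_rect]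
  omega

/-- The explicit LR tableau on the skew shape `γ(t,a) / (m × M)`. -/
def Tw (m M n N t a : ℕ) : ℕ × ℕ → ℕ := fun p =>
  if p ∈ skewCells (rect m M) (gam m M n N t a) then
    (if p.2 < min M N - a then p.1 + 1 + t - m else p.1 + 1) else 0

/-- A horizontal segment of cells. -/
def rowSeg (x c₁ c₂ : ℕ) : Finset (ℕ × ℕ) :=
  (Finset.Ico c₁ c₂).map ⟨fun j => (x, j), fun u v h => by
    simpa using congrArg Prod.snd h⟩

lemma mem_rowSeg {x c₁ c₂ : ℕ} {p : ℕ × ℕ} :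
    p ∈ rowSeg x c₁ c₂ ↔ p.1 = x ∧ c₁ ≤ p.2 ∧ p.2 < c₂ := by
  cases p with
  | mk u v =>
    simp only [rowSeg, Finset.mem_map, Finset.mem_Ico, Function.Embedding.coeFn_mk]
    constructor
    · rintro ⟨j, hj, he⟩
      injection he with h1 h2
      subst h1; subst h2
      exact ⟨rfl, hj.1, hj.2⟩
    · rintro ⟨rfl, h1, h2⟩
      exact ⟨v, ⟨h1, h2⟩, rfl⟩

lemma card_rowSeg (x c₁ c₂ : ℕ) : (rowSeg x c₁ c₂).card = c₂ - c₁ := by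
  simp [rowSeg]

lemma two_row_card (S : Finset (ℕ × ℕ)) (x₁ a₁ b₁ x₂ a₂ b₂ : ℕ)
    (hmem : ∀ p : ℕ × ℕ, p ∈ S ↔
      ((p.1 = x₁ ∧ a₁ ≤ p.2 ∧ p.2 < b₁) ∨ (p.1 = x₂ ∧ a₂ ≤ p.2 ∧ p.2 < b₂)))
    (hdisj : x₁ = x₂ → b₁ ≤ a₂) :
    S.card = (b₁ - a₁) + (b₂ - a₂) := by
  have hSeq : S = rowSeg x₁ a₁ b₁ ∪ rowSeg x₂ a₂ b₂ := by
    apply Finset.ext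
    intro p
    rw [hmem, Finset.mem_union, mem_rowSeg, mem_rowSeg]
  rw [hSeq, Finset.card_union_of_disjoint, card_rowSeg, card_rowSeg]
  rw [Finset.disjoint_left]
  intro p hp1 hp2
  rw [mem_rowSeg] at hp1 hp2
  have := hdisj (hp1.1.symm.trans hp2.1)
  omega

def len1 (M N n t a v : ℕ) : ℕ := if t < v ∧ v ≤ n then min M N - a else 0

def low (m M N a v : ℕ) : ℕ := if v - 1 < m then M else min M N - a

def pre (i j x c₁ c₂ : ℕ) : ℕ :=
  if x < i then c₂ - c₁ else if x = i then c₂ - max c₁ j else 0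

lemma gfun_lb (ht : t ≤ min m n) (ha : a ≤ min M N) {i : ℕ} (hi : i < m + n - t) :
    min M N - a ≤ gfun m M n N t a i := by
  unfold gfun; split_ifs <;> omega

lemma gfun_zero (ht : t ≤ min m n) (ha : a ≤ min M N) {i : ℕ} (hi : m + n - t ≤ i) :
    gfun m M n N t a i = 0 := by
  unfold gfun; split_ifs <;> omega

lemma count_prefix (ht : t ≤ min m n) (ha : a ≤ min M N) (v i j : ℕ) (hv : 1 ≤ v) :
    ((skewCells (rect m M) (gam m M n N t a)).filter
      (fun p => Tw m M n N t a p = v ∧ (p.1 < i ∨ (p.1 = i ∧ j ≤ p.2)))).card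
    = pre i j (m + v - t - 1) 0 (len1 M N n t a v)
      + pre i j (v - 1) (low m M N a v) (gfun m M n N t a (v - 1)) := by
  have hmem : ∀ p : ℕ × ℕ,
      p ∈ ((skewCells (rect m M) (gam m M n N t a)).filter
        (fun p => Tw m M n N t a p = v ∧ (p.1 < i ∨ (p.1 = i ∧ j ≤ p.2)))) ↔
      ((p.1 = m + v - t - 1 ∧ (if m + v - t - 1 = i then j else 0) ≤ p.2 ∧
          p.2 < (if m + v - t - 1 ≤ i then len1 M N n t a v else 0)) ∨
        (p.1 = v - 1 ∧
          (if v - 1 = i then max (low m M N a v) j else low m M N a v) ≤ p.2 ∧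
          p.2 < (if v - 1 ≤ i then gfun m M n N t a (v - 1) else 0))) := by
    intro p
    rw [Finset.mem_filter]
    constructor
    · rintro ⟨hsk, hval, hpre⟩
      have harith := (mem_skew_gam ht ha).mp hsk
      rw [Tw, if_pos hsk] at hval
      by_cases hbr : p.2 < min M N - a
      · rw [if_pos hbr] at hval
        -- column < min M N - a  ≤ M, so row ≥ m
        have hm1 : m ≤ p.1 := by omega
        have hpos : 0 < gfun m M n N t a p.1 := by omega
        have hlt : p.1 < m + n - t := by
          by_contra hc
          rw [gfun_zero ht ha (by omega)] at hpos; omega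
        left
        refine ⟨by omega, ?_, ?_⟩
        · split_ifs <;> omega
        · unfold len1
          split_ifs <;> omega
      · rw [if_neg hbr] at hval
        right
        have hlow : low m M N a v ≤ p.2 := by
          unfold low
          split_ifs <;> omega
        refine ⟨by omega, ?_, ?_⟩
        · split_ifs <;> omega
        · have : p.2 < gfun m M n N t a (v-1) := by
            have := harith.1
            rw [show v - 1 = p.1 by omega]
            exact this
          split_ifs <;> omega
    · intro hseg
      have hlowg : min M N - a ≤ low m M N a v := by
        unfold low; split_ifs <;> omega
      rcases hseg with ⟨h1, h2, h3⟩ | ⟨h1, h2, h3⟩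
      · -- first segment
        have hbig : m + v - t - 1 ≤ i ∧ p.2 < len1 M N n t a v := by
          constructor
          · by_contra hc; rw [if_neg (by omega)] at h3; omega
          · split_ifs at h3 <;> omega
        have hlen : t < v ∧ v ≤ n ∧ p.2 < min M N - a := by
          have := hbig.2
          unfold len1 at this
          split_ifs at this <;> omega
        have hsk : p ∈ skewCells (rect m M) (gam m M n N t a) := by
          rw [mem_skew_gam ht ha]
          refine ⟨lt_of_lt_of_le hlen.2.2 (gfun_lb ht ha (by omega)), Or.inl (by omega)⟩
        refine ⟨hsk, ?_, ?_⟩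
        · rw [Tw, if_pos hsk, if_pos (by omega : p.2 < min M N - a)]
          omega
        · split_ifs at h2 <;> omega
      · -- second segment
        have hup : v - 1 ≤ i ∧ p.2 < gfun m M n N t a (v - 1) := by
          constructor
          · by_contra hc; rw [if_neg (by omega)] at h3; omega
          · split_ifs at h3 <;> omega
        have hlow : low m M N a v ≤ p.2 := by
          split_ifs at h2 <;> omega
        have hor : m ≤ p.1 ∨ M ≤ p.2 := by
          unfold low at hlow
          split_ifs at hlow <;> omega
        have hsk : p ∈ skewCells (rect m M) (gam m M n N t a) := by
          rw [mem_skew_gam ht ha]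
          refine ⟨by rw [h1]; exact hup.2, hor⟩
        refine ⟨hsk, ?_, ?_⟩
        · rw [Tw, if_pos hsk, if_neg (by omega : ¬ p.2 < min M N - a)]
          omega
        · split_ifs at h2 <;> omega
  have hdisj : m + v - t - 1 = v - 1 →
      (if m + v - t - 1 ≤ i then len1 M N n t a v else 0)
        ≤ (if v - 1 = i then max (low m M N a v) j else low m M N a v) := by
    intro he
    unfold len1 low
    split_ifs <;> omega
  rw [two_row_card _ _ _ _ _ _ _ hmem hdisj]
  unfold pre
  split_ifs <;> omega


lemma pre_le (i j x c₁ c₂ : ℕ) : pre i j x c₁ c₂ ≤ c₂ - c₁ := by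
  unfold pre; split_ifs <;> omega

lemma pre_of_lt {i x : ℕ} (h : x < i) (j c₁ c₂ : ℕ) : pre i j x c₁ c₂ = c₂ - c₁ := by
  unfold pre; split_ifs <;> omega

lemma pre_of_gt {i x : ℕ} (h : i < x) (j c₁ c₂ : ℕ) : pre i j x c₁ c₂ = 0 := by
  unfold pre; split_ifs <;> omega

lemma pre_of_eq {i x : ℕ} (h : x = i) (j c₁ c₂ : ℕ) : pre i j x c₁ c₂ = c₂ - max c₁ j := by
  unfold pre; split_ifs <;> omega

lemma pre_zero_of_le {c₁ c₂ : ℕ} (h : c₂ ≤ c₁) (i j x : ℕ) : pre i j x c₁ c₂ = 0 := by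
  unfold pre; split_ifs <;> omega

lemma lenfacts (ht : t ≤ min m n) (ha : a ≤ min M N) {w : ℕ} (h1 : 1 ≤ w) (hn : w ≤ n) :
    low m M N a w ≤ gfun m M n N t a (w-1) ∧
      len1 M N n t a w + (gfun m M n N t a (w-1) - low m M N a w) = N := by
  unfold len1 low gfun
  split_ifs <;> omega

lemma lattice_arith (ht : t ≤ min m n) (ha : a ≤ min M N) (v i j : ℕ) (hv : 1 ≤ v) :
    pre i j (m + (v+1) - t - 1) 0 (len1 M N n t a (v+1))
      + pre i j ((v+1) - 1) (low m M N a (v+1)) (gfun m M n N t a ((v+1) - 1))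
    ≤ pre i j (m + v - t - 1) 0 (len1 M N n t a v)
      + pre i j (v - 1) (low m M N a v) (gfun m M n N t a (v - 1)) := by
  have e1 : m + (v+1) - t - 1 = m + v - t := by omega
  have e2 : (v+1) - 1 = v := by omega
  rw [e1, e2]
  by_cases hvn : v + 1 ≤ n
  · have hf := lenfacts (w := v) ht ha (by omega) (by omega)
    have hf' := lenfacts (w := v+1) ht ha (by omega) hvn
    rw [e2] at hf'
    have hmono : len1 M N n t a v ≤ len1 M N n t a (v+1) := by
      unfold len1; split_ifs <;> omega
    by_cases hC2 : i < v
    · rw [pre_of_gt (show i < m + v - t by omega), pre_of_gt (show i < v by omega)]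
      omega
    · by_cases hC1 : m + v - t < i
      · rw [pre_of_lt (show m + v - t < i by omega), pre_of_lt (show v < i by omega),
          pre_of_lt (show m + v - t - 1 < i by omega), pre_of_lt (show v - 1 < i by omega)]
        omega
      · by_cases hCe : i = v
        · by_cases htm2 : t = m
          · have hb1 := pre_le i j (m + v - t) 0 (len1 M N n t a (v+1))
            have hb2 := pre_le i j v (low m M N a (v+1)) (gfun m M n N t a v)
            rw [pre_of_lt (show m + v - t - 1 < i by omega),
              pre_of_lt (show v - 1 < i by omega)]
            omega
          · rw [pre_of_gt (show i < m + v - t by omega),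
              pre_of_eq (show v = i by omega),
              pre_of_lt (show v - 1 < i by omega)]
            have hb1 : (0:ℕ) ≤ pre i j (m + v - t - 1) 0 (len1 M N n t a v) := Nat.zero_le _
            omega
        · by_cases hCi : i = m + v - t
          · rw [pre_of_eq (show m + v - t = i by omega),
              pre_of_lt (show v < i by omega),
              pre_of_lt (show m + v - t - 1 < i by omega),
              pre_of_lt (show v - 1 < i by omega)]
            omega
          · rw [pre_of_gt (show i < m + v - t by omega),
              pre_of_lt (show v < i by omega),
              pre_of_lt (show v - 1 < i by omega)]
            have hb1 : (0:ℕ) ≤ pre i j (m + v - t - 1) 0 (len1 M N n t a v) := Nat.zero_le _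
            omega
  · have hl1 : len1 M N n t a (v+1) = 0 := by unfold len1; split_ifs <;> omega
    have hgl : gfun m M n N t a v ≤ low m M N a (v+1) := by
      unfold gfun low; split_ifs <;> omega
    rw [hl1, pre_zero_of_le (by omega : (0:ℕ) ≤ 0), pre_zero_of_le hgl]
    omega

lemma isLR_Tw (ht : t ≤ min m n) (ha : a ≤ min M N) :
    IsLRTableau (rect m M) (rect n N) (gam m M n N t a) (Tw m M n N t a) := by
  refine ⟨?_, ?_, ?_, ?_, ?_, ?_⟩
  · -- lam ≤ nu
    intro p hp
    have hp' : p ∈ rect m M := hp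
    rw [mem_rect] at hp'
    show p ∈ gam m M n N t a
    rw [mem_gam ht ha]
    unfold gfun
    split_ifs <;> omega
  · -- support
    intro p
    by_cases hsk : p ∈ skewCells (rect m M) (gam m M n N t a)
    · have harith := (mem_skew_gam ht ha).mp hsk
      rw [Tw, if_pos hsk]
      simp only [iff_true_intro hsk, iff_true]
      split_ifs <;> omega
    · rw [Tw, if_neg hsk]
      simp [hsk]
  · -- row monotone
    intro i j j' hjj h1 h2
    have a1 := (mem_skew_gam ht ha).mp h1
    have a2 := (mem_skew_gam ht ha).mp h2
    simp only at a1 a2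
    rw [Tw, Tw, if_pos h1, if_pos h2]
    simp only
    split_ifs <;> omega
  · -- column strict
    intro i i' j hii h1 h2
    have a1 := (mem_skew_gam ht ha).mp h1
    have a2 := (mem_skew_gam ht ha).mp h2
    simp only at a1 a2
    rw [Tw, Tw, if_pos h1, if_pos h2]
    simp only
    split_ifs <;> omega
  · -- content
    intro r
    have heq : ((skewCells (rect m M) (gam m M n N t a)).filter
          (fun p => Tw m M n N t a p = r+1))
        = ((skewCells (rect m M) (gam m M n N t a)).filter
          (fun p => Tw m M n N t a p = r+1 ∧ (p.1 < m+n+1 ∨ (p.1 = m+n+1 ∧ 0 ≤ p.2)))) := by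
      apply Finset.filter_congr
      intro p hp
      have harith := (mem_skew_gam ht ha).mp hp
      have hrowlt : p.1 < m + n + 1 := by
        by_contra hc
        rw [gfun_zero ht ha (by omega)] at harith
        omega
      simp [hrowlt]
    rw [heq, count_prefix ht ha (r+1) (m+n+1) 0 (by omega), rowLen_rect]
    by_cases hr : r < n
    · have hf := lenfacts (w := r+1) ht ha (by omega) (by omega)
      rw [pre_of_lt (show m + (r+1) - t - 1 < m+n+1 by omega),
        pre_of_lt (show r + 1 - 1 < m+n+1 by omega), if_pos hr]
      omega
    · have hl1 : len1 M N n t a (r+1) = 0 := by unfold len1; split_ifs <;> omega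
      have hgl : gfun m M n N t a (r+1-1) ≤ low m M N a (r+1) := by
        unfold gfun low; split_ifs <;> omega
      rw [hl1, pre_zero_of_le (by omega : (0:ℕ) ≤ 0), pre_zero_of_le hgl, if_neg hr]
  · -- lattice
    intro i j r
    rw [count_prefix ht ha (r+2) i j (by omega), count_prefix ht ha (r+1) i j (by omega)]
    have h := lattice_arith ht ha (r+1) i j (by omega)
    rw [show r + 1 + 1 = r + 2 from rfl] at h
    exact h

end Part2

section Finiteness

variable {n N : ℕ}

lemma val_le_n {lam nu : YoungDiagram} {T : ℕ × ℕ → ℕ}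
    (hT : IsLRTableau lam (rect n N) nu T) {p : ℕ × ℕ} (hp : p ∈ skewCells lam nu) :
    T p ≤ n := by
  by_contra hc
  have hcard := hT.2.2.2.2.1 (T p - 1)
  rw [rowLen_rect] at hcard
  rw [if_neg (by omega)] at hcard
  have hmem : p ∈ (skewCells lam nu).filter (fun q => T q = (T p - 1) + 1) :=
    Finset.mem_filter.mpr ⟨hp, by omega⟩
  have := Finset.card_pos.mpr ⟨p, hmem⟩
  omega

lemma finiteLR (lam nu : YoungDiagram) (n N : ℕ) :
    Finite {T : ℕ × ℕ → ℕ // IsLRTableau lam (rect n N) nu T} := by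
  apply Finite.of_injective
    (f := fun T : {T : ℕ × ℕ → ℕ // IsLRTableau lam (rect n N) nu T} =>
      (fun p : (skewCells lam nu : Finset (ℕ × ℕ)) =>
        (⟨min (T.1 p.1) n, by omega⟩ : Fin (n+1))))
  intro T1 T2 h
  apply Subtype.ext
  funext p
  by_cases hp : p ∈ skewCells lam nu
  · have h1 := congrFun h ⟨p, hp⟩
    simp only [Fin.mk.injEq] at h1
    have b1 := val_le_n T1.2 hp
    have b2 := val_le_n T2.2 hp
    omega
  · have z1 : T1.1 p = 0 := by
      by_contra hz
      exact hp ((T1.2.2.1 p).mp (by omega))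
    have z2 : T2.1 p = 0 := by
      by_contra hz
      exact hp ((T2.2.2.1 p).mp (by omega))
    rw [z1, z2]

end Finiteness

section Witness

variable {m M n N t a : ℕ}

lemma gam_le_rect {l k : ℕ} (ht : t ≤ min m n) (ha : a ≤ min M N)
    (hgk : ∀ i, gfun m M n N t a i ≤ k) (hgl : ∀ i, l ≤ i → gfun m M n N t a i = 0) :
    gam m M n N t a ≤ rect l k := by
  intro p hp
  have hp' : p ∈ gam m M n N t a := hp
  rw [mem_gam ht ha] at hp'
  show p ∈ rect l k
  rw [mem_rect]
  constructor
  · by_contra hc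
    rw [hgl p.1 (by omega)] at hp'
    omega
  · exact lt_of_lt_of_le hp' (hgk p.1)

lemma lrCoeff_gam_ne (ht : t ≤ min m n) (ha : a ≤ min M N) :
    lrCoeff (rect m M) (rect n N) (gam m M n N t a) ≠ 0 := by
  rw [lrCoeff, Nat.card_ne_zero]
  exact ⟨⟨⟨Tw m M n N t a, isLR_Tw ht ha⟩⟩, finiteLR _ _ _ _⟩

end Witness

set_option maxHeartbeats 4000000 in
/-- For rectangles `m × M` and `n × N` inside `l × k` with
`m + n ≤ l` or `M + N ≤ k`, every `γ ⊆ l × k` with `c^γ_{m×M, n×N} ≠ 0` contains the union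
`(m×M) ∪ (n×N) ∪ ((m+n)×(M+N-k)) ∪ ((m+n-l)×(M+N))` (rectangles of nonpositive dimensions
or not fitting inside `l × k` being omitted), and this union is itself the intersection of
all such `γ`. -/
theorem kappa_of_rectangles (l k m M n N : ℕ)
    (hm : m ≤ l) (hM : M ≤ k) (hn : n ≤ l) (hN : N ≤ k)
    (hnz : m + n ≤ l ∨ M + N ≤ k) (U : YoungDiagram)
    (hU : U = rect m M ⊔ rect n N ⊔
      (if m + n ≤ l then rect (m + n) (M + N - k) else ⊥) ⊔
      (if M + N ≤ k then rect (m + n - l) (M + N) else ⊥)) :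
    (∀ γ, γ ≤ rect l k → lrCoeff (rect m M) (rect n N) γ ≠ 0 → U ≤ γ) ∧
    (∀ i : ℕ, ∃ γ, γ ≤ rect l k ∧ lrCoeff (rect m M) (rect n N) γ ≠ 0 ∧
      γ.rowLen i ≤ U.rowLen i) := by
  have hUval : ∀ i, U.rowLen i
      = max (max (max (if i < m then M else 0) (if i < n then N else 0))
          (if m+n ≤ l ∧ i < m+n then M+N-k else 0))
        (if M+N ≤ k ∧ i < m+n-l then M+N else 0) := by
    intro i
    rw [hU, rowLen_sup, rowLen_sup, rowLen_sup, rowLen_rect, rowLen_rect]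
    by_cases h1 : m + n ≤ l
    · rw [if_pos h1, rowLen_rect]
      by_cases h2 : M + N ≤ k
      · rw [if_pos h2, rowLen_rect]
        split_ifs <;> omega
      · rw [if_neg h2, rowLen_bot]
        split_ifs <;> omega
    · rw [if_neg h1, rowLen_bot]
      by_cases h2 : M + N ≤ k
      · rw [if_pos h2, rowLen_rect]
        split_ifs <;> omega
      · rw [if_neg h2, rowLen_bot]
        split_ifs <;> omega
  constructor
  · -- Part 1 : every γ contains U
    intro γ hγ hcoeff
    obtain ⟨⟨T, hT⟩⟩ := (Nat.card_ne_zero.mp hcoeff).1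
    have hγk : ∀ i, γ.rowLen i ≤ k := (le_rect_iff.mp hγ).1
    have hγl : ∀ i, l ≤ i → γ.rowLen i = 0 := (le_rect_iff.mp hγ).2
    have hMr : ∀ i < m, M ≤ γ.rowLen i := fun i hi => M_le_rowLen hT hi
    have hNr : ∀ i < n, N ≤ γ.rowLen i := by
      intro i hi
      have := N_le_rowLen hT (v := i+1) (by omega) (by omega)
      simpa using this
    have hpairing : ∀ i, i < m → i < n →
        M + N ≤ γ.rowLen i + γ.rowLen (m + n - 1 - i) := fun i h1 h2 => pairing hT h1 h2
    -- row bound for all rows below m+n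
    have hkey : ∀ i < m + n, M + N - k ≤ γ.rowLen i := by
      intro i hi
      rcases Nat.lt_or_ge i m with h | h
      · have := hMr i h; omega
      · rcases Nat.lt_or_ge i n with h' | h'
        · have := hNr i h'; omega
        · have hp := hpairing (m+n-1-i) (by omega) (by omega)
          rw [show m+n-1-(m+n-1-i) = i by omega] at hp
          have := hγk (m+n-1-i)
          omega
    have hkey2 : M + N ≤ k → ∀ i < m + n - l, M + N ≤ γ.rowLen i := by
      intro _ i hi
      have hp := hpairing i (by omega) (by omega)
      have hz := hγl (m+n-1-i) (by omega)
      omega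
    rw [hU]
    refine sup_le (sup_le (sup_le ?_ ?_) ?_) ?_
    · exact rect_le_iff.mpr hMr
    · exact rect_le_iff.mpr hNr
    · split_ifs with h1
      · exact rect_le_iff.mpr (fun i hi => hkey i hi)
      · exact bot_le
    · split_ifs with h2
      · exact rect_le_iff.mpr (fun i hi => hkey2 h2 i hi)
      · exact bot_le
  · -- Part 2 : witnesses
    intro i
    by_cases hk2 : M + N ≤ k
    · by_cases hiQ : i < max m n
      · -- witness γ(m+n-l, 0)
        refine ⟨gam m M n N (m+n-l) 0, ?_, ?_, ?_⟩
        · exact gam_le_rect (by omega) (by omega)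
            (fun i' => by unfold gfun; split_ifs <;> omega)
            (fun i' hi' => by unfold gfun; split_ifs <;> omega)
        · exact lrCoeff_gam_ne (by omega) (by omega)
        · rw [rowLen_gam (by omega) (by omega), hUval]
          unfold gfun
          split_ifs <;> omega
      · -- witness γ(0, min M N)
        refine ⟨gam m M n N 0 (min M N), ?_, ?_, ?_⟩
        · exact gam_le_rect (by omega) (by omega)
            (fun i' => by unfold gfun; split_ifs <;> omega)
            (fun i' hi' => by unfold gfun; split_ifs <;> omega)
        · exact lrCoeff_gam_ne (by omega) (by omega)
        · rw [rowLen_gam (by omega) (by omega), hUval]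
          unfold gfun
          split_ifs <;> omega
    · -- M + N > k, so m + n ≤ l
      have hml : m + n ≤ l := by omega
      by_cases hiQ : i < max m n
      · refine ⟨gam m M n N 0 0, ?_, ?_, ?_⟩
        · exact gam_le_rect (by omega) (by omega)
            (fun i' => by unfold gfun; split_ifs <;> omega)
            (fun i' hi' => by unfold gfun; split_ifs <;> omega)
        · exact lrCoeff_gam_ne (by omega) (by omega)
        · rw [rowLen_gam (by omega) (by omega), hUval]
          unfold gfun
          split_ifs <;> omega
      · refine ⟨gam m M n N 0 (k - max M N), ?_, ?_, ?_⟩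
        · exact gam_le_rect (by omega) (by omega)
            (fun i' => by unfold gfun; split_ifs <;> omega)
            (fun i' hi' => by unfold gfun; split_ifs <;> omega)
        · exact lrCoeff_gam_ne (by omega) (by omega)
        · rw [rowLen_gam (by omega) (by omega), hUval]
          unfold gfun
          split_ifs <;> omega

end QCGrass
end

section
/- Let α ⊆ λ ⊆ l×k and β ⊆ μ ⊆ l×k be partitions. Then κ(α,β) ⊆ κ(λ,μ), where κ(ρ,τ) denotes the intersection of all partitions γ ⊆ l×k with c^γ_{ρ,τ} ≠ 0 (and κ(ρ,τ) = l×k by convention if no such γ exists). -/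
open YoungDiagram

namespace QCGrass

namespace Kappa
open Finset

/-! ### Generic helpers -/

lemma downward_closed_eq_Ico {S : Finset ℕ} {a b : ℕ} (hS : S ⊆ Finset.Ico a b)
    (hdc : ∀ x y, a ≤ x → x ≤ y → y ∈ S → x ∈ S) (j : ℕ) :
    j ∈ S ↔ a ≤ j ∧ j < a + S.card := by
  constructor
  · intro hj
    have haj : a ≤ j := (Finset.mem_Ico.mp (hS hj)).1
    have h1 : Finset.Ico a (j+1) ⊆ S := by
      intro x hx
      rw [Finset.mem_Ico] at hx
      exact hdc x j hx.1 (by omega) hj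
    have := Finset.card_le_card h1
    rw [Nat.card_Ico] at this
    exact ⟨haj, by omega⟩
  · rintro ⟨haj, hlt⟩
    by_contra hj
    have h2 : S ⊆ Finset.Ico a j := by
      intro y hy
      have hay : a ≤ y := (Finset.mem_Ico.mp (hS hy)).1
      rw [Finset.mem_Ico]
      refine ⟨hay, ?_⟩
      by_contra hyj
      exact hj (hdc j y haj (by omega) hy)
    have := Finset.card_le_card h2
    rw [Nat.card_Ico] at this
    omega

lemma rowLen_le_of_le {lam nu : YoungDiagram} (h : lam ≤ nu) (i : ℕ) :
    lam.rowLen i ≤ nu.rowLen i := by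
  by_contra hc
  have h1 : (i, nu.rowLen i) ∈ lam := by
    rw [YoungDiagram.mem_iff_lt_rowLen]; omega
  have := h h1
  rw [YoungDiagram.mem_iff_lt_rowLen] at this
  omega

lemma le_of_rowLen_le {lam nu : YoungDiagram} (h : ∀ i, lam.rowLen i ≤ nu.rowLen i) :
    lam ≤ nu := by
  rw [← YoungDiagram.cells_subset_iff]
  intro p hp
  rw [YoungDiagram.mem_cells, YoungDiagram.mem_iff_lt_rowLen] at hp ⊢
  exact lt_of_lt_of_le hp (h _)

lemma mem_rect {l k : ℕ} {p : ℕ × ℕ} : p ∈ rect l k ↔ p.1 < l ∧ p.2 < k := by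
  cases p with
  | mk i j =>
    show (i, j) ∈ (rect l k).cells ↔ _
    simp [rect, Finset.mem_product]

lemma rowLen_rect {l k : ℕ} (i : ℕ) : (rect l k).rowLen i = if i < l then k else 0 := by
  split
  · next h =>
    refine le_antisymm ?_ ?_
    · by_contra hc
      have : (i, k) ∈ rect l k := by rw [YoungDiagram.mem_iff_lt_rowLen]; omega
      rw [mem_rect] at this; omega
    · rcases Nat.eq_zero_or_pos k with hk | hk
      · omega
      · have : (i, k-1) ∈ rect l k := by rw [mem_rect]; constructor <;> omega
        rw [YoungDiagram.mem_iff_lt_rowLen] at this; omega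
  · next h =>
    by_contra hc
    have : (i, 0) ∈ rect l k := by rw [YoungDiagram.mem_iff_lt_rowLen]; omega
    rw [mem_rect] at this; omega

lemma mem_skewCells {lam nu : YoungDiagram} (h : lam ≤ nu) {p : ℕ × ℕ} :
    p ∈ skewCells lam nu ↔ lam.rowLen p.1 ≤ p.2 ∧ p.2 < nu.rowLen p.1 := by
  cases p with
  | mk i j =>
    simp only [skewCells, Finset.mem_sdiff, YoungDiagram.mem_cells]
    rw [YoungDiagram.mem_iff_lt_rowLen, YoungDiagram.mem_iff_lt_rowLen]
    omega

/-- Build a Young diagram from a row-length function. -/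
def ofRows (d : ℕ → ℕ) (N K : ℕ) (hanti : ∀ i, d (i+1) ≤ d i)
    (hN : ∀ i, N ≤ i → d i = 0) (hK : ∀ i, d i ≤ K) : YoungDiagram :=
  ⟨(Finset.range N ×ˢ Finset.range K).filter (fun p => p.2 < d p.1), by
    have hmono : ∀ i i', i ≤ i' → d i' ≤ d i := by
      intro i i' h
      induction h with
      | refl => exact le_rfl
      | step _ ih => exact le_trans (hanti _) ih
    intro a b hba ha
    simp only [Finset.coe_filter, Set.mem_setOf_eq, Finset.mem_product, Finset.mem_range] at *
    obtain ⟨⟨h1, h2⟩, h3⟩ := ha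
    obtain ⟨hba1, hba2⟩ := hba
    have h4 : d a.1 ≤ d b.1 := hmono _ _ hba1
    have h5 : b.2 < d b.1 := by omega
    refine ⟨⟨?_, by omega⟩, h5⟩
    by_contra hc
    rw [hN b.1 (by omega)] at h5; omega⟩

lemma mem_ofRows {d : ℕ → ℕ} {N K : ℕ} {hanti} {hN} {hK} {p : ℕ × ℕ} :
    p ∈ ofRows d N K hanti hN hK ↔ p.2 < d p.1 := by
  show p ∈ Finset.filter _ _ ↔ _
  simp only [Finset.mem_filter, Finset.mem_product, Finset.mem_range]
  constructor
  · tauto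
  · intro h
    refine ⟨⟨?_, ?_⟩, h⟩
    · by_contra hc
      rw [hN p.1 (by omega)] at h; omega
    · exact lt_of_lt_of_le h (hK _)

lemma rowLen_eq_of {mu : YoungDiagram} {i c : ℕ} (h : ∀ j, (i, j) ∈ mu ↔ j < c) :
    mu.rowLen i = c := by
  refine le_antisymm ?_ ?_
  · by_contra hc
    have : (i, c) ∈ mu := by rw [YoungDiagram.mem_iff_lt_rowLen]; omega
    rw [h] at this; omega
  · rcases Nat.eq_zero_or_pos c with h0 | h0
    · omega
    · have : (i, c - 1) ∈ mu := by rw [h]; omega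
      rw [YoungDiagram.mem_iff_lt_rowLen] at this; omega

/-! ### lrCoeff nonvanishing -/

lemma T_le_colLen {lam mu nu : YoungDiagram} {T : ℕ × ℕ → ℕ} (h : IsLRTableau lam mu nu T)
    (p : ℕ × ℕ) : T p ≤ mu.colLen 0 := by
  obtain ⟨-, h1, -, -, h4, -⟩ := h
  rcases Nat.eq_zero_or_pos (T p) with h0 | h0
  · omega
  have hp : p ∈ skewCells lam nu := (h1 p).mp h0
  have hcard := h4 (T p - 1)
  have hmem : p ∈ (skewCells lam nu).filter (fun q => T q = (T p - 1) + 1) := by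
    rw [Finset.mem_filter]; exact ⟨hp, by omega⟩
  have h5 : 0 < mu.rowLen (T p - 1) := by
    rw [← hcard]
    exact Finset.card_pos.mpr ⟨p, hmem⟩
  have : (T p - 1, 0) ∈ mu := by rw [YoungDiagram.mem_iff_lt_rowLen]; omega
  rw [YoungDiagram.mem_iff_lt_colLen] at this
  omega

lemma T_eq_zero_of_not_mem {lam mu nu : YoungDiagram} {T : ℕ × ℕ → ℕ}
    (h : IsLRTableau lam mu nu T) {p : ℕ × ℕ} (hp : p ∉ skewCells lam nu) : T p = 0 := by
  obtain ⟨-, h1, -⟩ := h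
  have h2 : ¬ 1 ≤ T p := fun hc => hp ((h1 p).mp hc)
  omega

lemma finite_LR (lam mu nu : YoungDiagram) : Finite {T : ℕ × ℕ → ℕ // IsLRTableau lam mu nu T} := by
  set B := mu.colLen 0 with hB
  have : Function.Injective
      (fun T : {T : ℕ × ℕ → ℕ // IsLRTableau lam mu nu T} =>
        (fun p : (skewCells lam nu : Finset (ℕ × ℕ)) => (⟨min (T.1 p) B, by omega⟩ : Fin (B+1)))) := by
    intro T T' hTT
    ext p
    by_cases hp : p ∈ skewCells lam nu
    · have h1 := congrFun hTT ⟨p, hp⟩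
      simp only [Fin.mk.injEq] at h1
      have b1 := T_le_colLen T.2 p
      have b2 := T_le_colLen T'.2 p
      rw [min_eq_left b1, min_eq_left b2] at h1
      exact h1
    · rw [T_eq_zero_of_not_mem T.2 hp, T_eq_zero_of_not_mem T'.2 hp]
  exact Finite.of_injective _ this

lemma lrCoeff_ne_zero_iff {lam mu nu : YoungDiagram} :
    lrCoeff lam mu nu ≠ 0 ↔ ∃ T, IsLRTableau lam mu nu T := by
  have := finite_LR lam mu nu
  rw [lrCoeff, Nat.card_ne_zero]
  constructor
  · rintro ⟨⟨T, hT⟩, -⟩; exact ⟨T, hT⟩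
  · rintro ⟨T, hT⟩; exact ⟨⟨⟨T, hT⟩⟩, this⟩

/-! ### Chains of partitions -/

/-- Prefix sums of strip `t` (cells with entry `t+1`) of a chain of partitions. -/
def PFX (f : ℕ → ℕ → ℕ) (t i : ℕ) : ℕ := ∑ j ∈ Finset.range i, (f (t+1) j - f t j)

structure Chain (μc : ℕ → ℕ) (N : ℕ) (f : ℕ → ℕ → ℕ) : Prop where
  part : ∀ t i, f t (i+1) ≤ f t i
  mono : ∀ t i, f t i ≤ f (t+1) i
  horiz : ∀ t i, f (t+1) (i+1) ≤ f t i
  supp : ∀ t i, N ≤ i → f t i = 0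
  content : ∀ t, PFX f t N = μc t
  lattice : ∀ t i, PFX f (t+1) (i+1) ≤ PFX f t i

lemma PFX_succ (f : ℕ → ℕ → ℕ) (t i : ℕ) :
    PFX f t (i+1) = PFX f t i + (f (t+1) i - f t i) := Finset.sum_range_succ _ _

lemma PFX_mono_idx (f : ℕ → ℕ → ℕ) (t : ℕ) {i i' : ℕ} (h : i ≤ i') :
    PFX f t i ≤ PFX f t i' :=
  Finset.sum_le_sum_of_subset (Finset.range_subset_range.mpr h)

namespace Chain

variable {μc : ℕ → ℕ} {N : ℕ} {f : ℕ → ℕ → ℕ} (hf : Chain μc N f)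
include hf

lemma level_mono (t : ℕ) {t' : ℕ} (h : t ≤ t') (i : ℕ) : f t i ≤ f t' i := by
  induction h with
  | refl => exact le_rfl
  | step _ ih => exact le_trans ih (hf.mono _ _)

lemma row_anti (t : ℕ) {i i' : ℕ} (h : i ≤ i') : f t i' ≤ f t i := by
  induction h with
  | refl => exact le_rfl
  | step _ ih => exact le_trans (hf.part _ _) ih

lemma PFX_stable (t : ℕ) {i : ℕ} (h : N ≤ i) : PFX f t i = μc t := by
  rw [← hf.content t]
  rw [PFX, PFX, ← Finset.sum_subset (Finset.range_subset_range.mpr h)]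
  intro x hx hnx
  rw [Finset.mem_range] at hx hnx
  rw [hf.supp _ _ (by omega), hf.supp _ _ (by omega)]
  omega

lemma PFX_le_content (t i : ℕ) : PFX f t i ≤ μc t := by
  rcases le_or_gt N i with h | h
  · rw [hf.PFX_stable t h]
  · rw [← hf.content t]; exact PFX_mono_idx f t (by omega)

end Chain

/-! ### From tableau to chain -/

section ToChain

variable {lam mu nu : YoungDiagram} {T : ℕ × ℕ → ℕ}

/-- Level `t` of the chain associated to a skew tableau: row lengths of
`lam` together with all cells of entry `≤ t`. -/
def tchain (lam nu : YoungDiagram) (T : ℕ × ℕ → ℕ) : ℕ → ℕ → ℕ :=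
  fun t i => lam.rowLen i + ((skewCells lam nu).filter (fun p => p.1 = i ∧ T p ≤ t)).card

lemma card_filter_fst_lt (S : Finset (ℕ × ℕ)) (Q : ℕ × ℕ → Prop) [DecidablePred Q] (M : ℕ) :
    (S.filter (fun p => Q p ∧ p.1 < M)).card
      = ∑ i ∈ Finset.range M, (S.filter (fun p => p.1 = i ∧ Q p)).card := by
  rw [Finset.card_eq_sum_card_fiberwise (f := Prod.fst) (t := Finset.range M)
    (fun p hp => by rw [Finset.mem_coe, Finset.mem_filter] at hp; rw [Finset.mem_coe, Finset.mem_range]; exact hp.2.2)]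
  refine Finset.sum_congr rfl (fun i hi => ?_)
  congr 1
  ext p
  rw [Finset.mem_range] at hi
  simp only [Finset.mem_filter]
  constructor
  · rintro ⟨⟨h1, h2, h3⟩, h4⟩; exact ⟨h1, h4, h2⟩
  · rintro ⟨h1, h2, h3⟩; exact ⟨⟨h1, h3, by omega⟩, h2⟩

lemma tchain_interval (h : IsLRTableau lam mu nu T) (t i j : ℕ) :
    (lam.rowLen i ≤ j ∧ j < tchain lam nu T t i) ↔ ((i, j) ∈ skewCells lam nu ∧ T (i, j) ≤ t) := by
  have hm : lam ≤ nu := h.1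
  set S := ((skewCells lam nu).filter (fun p => p.1 = i ∧ T p ≤ t)).image Prod.snd with hS
  have hmemS : ∀ j', j' ∈ S ↔ ((i, j') ∈ skewCells lam nu ∧ T (i, j') ≤ t) := by
    intro j'
    rw [hS, Finset.mem_image]
    constructor
    · rintro ⟨p, hp, rfl⟩
      rw [Finset.mem_filter] at hp
      obtain ⟨h1, h2, h3⟩ := hp
      have : p = (i, p.2) := by rw [Prod.ext_iff]; exact ⟨h2, rfl⟩
      rw [← this]; exact ⟨h1, h3⟩
    · rintro ⟨h1, h2⟩
      exact ⟨(i, j'), Finset.mem_filter.mpr ⟨h1, rfl, h2⟩, rfl⟩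
  have hcard : S.card = ((skewCells lam nu).filter (fun p => p.1 = i ∧ T p ≤ t)).card := by
    apply Finset.card_image_of_injOn
    intro p hp q hq hpq
    rw [Finset.mem_coe, Finset.mem_filter] at hp hq
    rw [Prod.ext_iff]
    exact ⟨hp.2.1.trans hq.2.1.symm, hpq⟩
  have hsub : S ⊆ Finset.Ico (lam.rowLen i) (nu.rowLen i) := by
    intro x hx
    rw [hmemS] at hx
    have := (mem_skewCells hm).mp hx.1
    rw [Finset.mem_Ico]
    exact this
  have hdc : ∀ x y, lam.rowLen i ≤ x → x ≤ y → y ∈ S → x ∈ S := by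
    intro x y hx hxy hy
    rw [hmemS] at hy ⊢
    have hys := (mem_skewCells hm).mp hy.1
    dsimp only at hys
    have hxs : (i, x) ∈ skewCells lam nu := by
      rw [mem_skewCells hm]; dsimp only; omega
    refine ⟨hxs, le_trans (h.2.2.1 i x y hxy hxs hy.1) hy.2⟩
  have key := downward_closed_eq_Ico hsub hdc j
  rw [hmemS j, hcard] at key
  rw [tchain]
  exact key.symm

lemma tchain_le (h : IsLRTableau lam mu nu T) (t i : ℕ) :
    tchain lam nu T t i ≤ nu.rowLen i := by
  by_contra hc
  have h1 : lam.rowLen i ≤ nu.rowLen i := rowLen_le_of_le h.1 i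
  have := (tchain_interval h t i (nu.rowLen i)).mp ⟨h1, by omega⟩
  have h2 := ((mem_skewCells h.1).mp this.1).2
  dsimp only at h2
  omega

lemma tchain_ge (t i : ℕ) : lam.rowLen i ≤ tchain lam nu T t i := Nat.le_add_right _ _

lemma tchain_zero (h : IsLRTableau lam mu nu T) (i : ℕ) :
    tchain lam nu T 0 i = lam.rowLen i := by
  rw [tchain]
  have : ((skewCells lam nu).filter (fun p => p.1 = i ∧ T p ≤ 0)) = ∅ := by
    rw [Finset.filter_eq_empty_iff]
    rintro p hp ⟨-, h0⟩
    have := (h.2.1 p).mpr hp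
    omega
  rw [this]
  simp

lemma tchain_rowcount (h : IsLRTableau lam mu nu T) (t i : ℕ) :
    tchain lam nu T (t+1) i - tchain lam nu T t i
      = ((skewCells lam nu).filter (fun p => p.1 = i ∧ T p = t + 1)).card := by
  have hsplit : ((skewCells lam nu).filter (fun p => p.1 = i ∧ T p ≤ t + 1))
      = ((skewCells lam nu).filter (fun p => p.1 = i ∧ T p ≤ t))
        ∪ ((skewCells lam nu).filter (fun p => p.1 = i ∧ T p = t + 1)) := by
    rw [← Finset.filter_or]
    apply Finset.filter_congr
    intro p hp
    constructor
    · rintro ⟨h1, h2⟩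
      rcases Nat.lt_or_ge (T p) (t+1) with h3 | h3
      · exact Or.inl ⟨h1, by omega⟩
      · exact Or.inr ⟨h1, by omega⟩
    · rintro (⟨h1, h2⟩ | ⟨h1, h2⟩) <;> exact ⟨h1, by omega⟩
  have hdisj : Disjoint ((skewCells lam nu).filter (fun p => p.1 = i ∧ T p ≤ t))
      ((skewCells lam nu).filter (fun p => p.1 = i ∧ T p = t + 1)) := by
    rw [Finset.disjoint_filter]
    rintro p hp ⟨h1, h2⟩ ⟨h3, h4⟩
    omega
  have := Finset.card_union_of_disjoint hdisj
  rw [← hsplit] at this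
  rw [tchain, tchain]
  omega

lemma tchain_chain (h : IsLRTableau lam mu nu T) {N : ℕ}
    (hN : ∀ i, N ≤ i → nu.rowLen i = 0) :
    Chain (fun t => mu.rowLen t) N (tchain lam nu T) := by
  have hm : lam ≤ nu := h.1
  have hpart : ∀ t i, tchain lam nu T t (i+1) ≤ tchain lam nu T t i := by
    intro t i
    by_contra hc
    set j := tchain lam nu T t i with hj
    have hlam1 : lam.rowLen (i+1) ≤ j := le_trans (lam.rowLen_anti i (i+1) (by omega)) (tchain_ge t i)
    have h1 := (tchain_interval h t (i+1) j).mp ⟨hlam1, by omega⟩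
    have hs1 := (mem_skewCells hm).mp h1.1
    have hnu : j < nu.rowLen i := lt_of_lt_of_le hs1.2 (nu.rowLen_anti i (i+1) (by omega))
    rcases Nat.lt_or_ge j (lam.rowLen i) with h2 | h2
    · have : j < tchain lam nu T t i := lt_of_lt_of_le h2 (tchain_ge t i)
      omega
    · have hsk : (i, j) ∈ skewCells lam nu := by
        rw [mem_skewCells hm]; exact ⟨h2, hnu⟩
      have hTlt := h.2.2.2.1 i (i+1) j (by omega) hsk h1.1
      have : j < tchain lam nu T t i := ((tchain_interval h t i j).mpr ⟨hsk, by omega⟩).2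
      omega
  have hmono : ∀ t i, tchain lam nu T t i ≤ tchain lam nu T (t+1) i := by
    intro t i
    rw [tchain, tchain]
    have : ((skewCells lam nu).filter (fun p => p.1 = i ∧ T p ≤ t))
        ⊆ ((skewCells lam nu).filter (fun p => p.1 = i ∧ T p ≤ t + 1)) := by
      intro p hp
      rw [Finset.mem_filter] at *
      exact ⟨hp.1, hp.2.1, by omega⟩
    have := Finset.card_le_card this
    omega
  have hhoriz : ∀ t i, tchain lam nu T (t+1) (i+1) ≤ tchain lam nu T t i := by
    intro t i
    by_contra hc
    set j := tchain lam nu T t i with hj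
    have hlam1 : lam.rowLen (i+1) ≤ j := le_trans (lam.rowLen_anti i (i+1) (by omega)) (tchain_ge t i)
    have h1 := (tchain_interval h (t+1) (i+1) j).mp ⟨hlam1, by omega⟩
    have hs1 := (mem_skewCells hm).mp h1.1
    have hnu : j < nu.rowLen i := lt_of_lt_of_le hs1.2 (nu.rowLen_anti i (i+1) (by omega))
    rcases Nat.lt_or_ge j (lam.rowLen i) with h2 | h2
    · have : j < tchain lam nu T t i := lt_of_lt_of_le h2 (tchain_ge t i)
      omega
    · have hsk : (i, j) ∈ skewCells lam nu := by
        rw [mem_skewCells hm]; exact ⟨h2, hnu⟩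
      have hTlt := h.2.2.2.1 i (i+1) j (by omega) hsk h1.1
      have : j < tchain lam nu T t i := ((tchain_interval h t i j).mpr ⟨hsk, by omega⟩).2
      omega
  have hsupp : ∀ t i, N ≤ i → tchain lam nu T t i = 0 := by
    intro t i hi
    have h1 : lam.rowLen i ≤ nu.rowLen i := rowLen_le_of_le hm i
    have h2 := tchain_le h t i
    rw [hN i hi] at h2
    omega
  refine ⟨hpart, hmono, hhoriz, hsupp, ?_, ?_⟩
  · -- content
    intro t
    have hPFX : PFX (tchain lam nu T) t N
        = ∑ i ∈ Finset.range N, ((skewCells lam nu).filter (fun p => p.1 = i ∧ T p = t + 1)).card := by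
      refine Finset.sum_congr rfl (fun i _ => tchain_rowcount h t i)
    rw [hPFX, ← card_filter_fst_lt (skewCells lam nu) (fun p => T p = t + 1) N]
    rw [← h.2.2.2.2.1 t]
    congr 1
    apply Finset.filter_congr
    intro p hp
    have hs := (mem_skewCells hm).mp hp
    have hrow : p.1 < N := by
      by_contra hc
      rw [hN p.1 (by omega)] at hs
      omega
    constructor
    · rintro ⟨h1, -⟩; exact h1
    · intro h1; exact ⟨h1, hrow⟩
  · -- lattice
    intro t i
    have key := h.2.2.2.2.2 i (tchain lam nu T (t+1) i) t
    have hL : ((skewCells lam nu).filter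
        (fun p => T p = t + 2 ∧ (p.1 < i ∨ (p.1 = i ∧ tchain lam nu T (t+1) i ≤ p.2)))).card
        = PFX (tchain lam nu T) (t+1) (i+1) := by
      have hset : ((skewCells lam nu).filter
          (fun p => T p = t + 2 ∧ (p.1 < i ∨ (p.1 = i ∧ tchain lam nu T (t+1) i ≤ p.2))))
          = ((skewCells lam nu).filter (fun p => T p = t + 2 ∧ p.1 < i + 1)) := by
        apply Finset.filter_congr
        intro p hp
        have hs := (mem_skewCells hm).mp hp
        constructor
        · rintro ⟨h1, h2⟩
          exact ⟨h1, by omega⟩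
        · rintro ⟨h1, h2⟩
          refine ⟨h1, ?_⟩
          rcases Nat.lt_or_ge p.1 i with h3 | h3
          · exact Or.inl h3
          · have hpi : p.1 = i := by omega
            refine Or.inr ⟨hpi, ?_⟩
            by_contra hc
            have : (p.1, p.2) ∈ skewCells lam nu ∧ T (p.1, p.2) ≤ t + 1 :=
              (tchain_interval h (t+1) p.1 p.2).mp ⟨hs.1, by rw [hpi]; omega⟩
            rw [Prod.mk.eta] at this
            omega
      rw [hset, card_filter_fst_lt (skewCells lam nu) (fun p => T p = t + 2) (i+1)]
      refine (Finset.sum_congr rfl (fun i' _ => (tchain_rowcount h (t+1) i').symm))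
    have hR : ((skewCells lam nu).filter
        (fun p => T p = t + 1 ∧ (p.1 < i ∨ (p.1 = i ∧ tchain lam nu T (t+1) i ≤ p.2)))).card
        = PFX (tchain lam nu T) t i := by
      have hset : ((skewCells lam nu).filter
          (fun p => T p = t + 1 ∧ (p.1 < i ∨ (p.1 = i ∧ tchain lam nu T (t+1) i ≤ p.2))))
          = ((skewCells lam nu).filter (fun p => T p = t + 1 ∧ p.1 < i)) := by
        apply Finset.filter_congr
        intro p hp
        have hs := (mem_skewCells hm).mp hp
        constructor
        · rintro ⟨h1, (h2 | ⟨h2, h3⟩)⟩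
          · exact ⟨h1, h2⟩
          · exfalso
            have : (p.1, p.2) ∈ skewCells lam nu ∧ T (p.1, p.2) ≤ t + 1 := by
              refine ⟨by simpa using hp, by rw [Prod.mk.eta]; omega⟩
            have h4 := (tchain_interval h (t+1) p.1 p.2).mpr this
            rw [h2] at h4
            omega
        · rintro ⟨h1, h2⟩
          exact ⟨h1, Or.inl h2⟩
      rw [hset, card_filter_fst_lt (skewCells lam nu) (fun p => T p = t + 1) i]
      refine (Finset.sum_congr rfl (fun i' _ => (tchain_rowcount h t i').symm))
    rw [hL, hR] at key
    exact key

end ToChain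

/-! ### From chain to tableau -/

section FromChain

open Classical in
/-- The tableau associated to a chain: the entry at `p` is the least `t` with
`p.2 < g t p.1`, or `0` if there is none. -/
noncomputable def tab (g : ℕ → ℕ → ℕ) : ℕ × ℕ → ℕ :=
  fun p => if h : ∃ t, p.2 < g t p.1 then Nat.find h else 0

variable {beta : YoungDiagram} {N : ℕ} {g : ℕ → ℕ → ℕ}

lemma chain_stable (hg : Chain (fun t => beta.rowLen t) N g) {t i : ℕ}
    (ht : beta.colLen 0 ≤ t) : g t i = g (beta.colLen 0) i := by
  set M := beta.colLen 0 with hM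
  induction t with
  | zero =>
    have : M = 0 := by omega
    rw [this]
  | succ n ih =>
    rcases Nat.lt_or_ge n M with h1 | h1
    · have : M = n + 1 := by omega
      rw [this]
    · rw [← ih h1]
      have hzero : beta.rowLen n = 0 := by
        by_contra hc
        have : (n, 0) ∈ beta := by rw [YoungDiagram.mem_iff_lt_rowLen]; omega
        rw [YoungDiagram.mem_iff_lt_colLen] at this
        omega
      have hPFX := hg.content n
      rcases Nat.lt_or_ge i N with h2 | h2
      · have : ∀ x ∈ Finset.range N, g (n+1) x - g n x = 0 := by
          rw [← Finset.sum_eq_zero_iff]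
          rw [← PFX]; rw [hPFX]; exact hzero
        have h3 := this i (Finset.mem_range.mpr h2)
        have h4 := hg.mono n i
        omega
      · rw [hg.supp _ _ h2, hg.supp _ _ h2]

lemma chain_le_top (hg : Chain (fun t => beta.rowLen t) N g) (t i : ℕ) :
    g t i ≤ g (beta.colLen 0) i := by
  rcases Nat.lt_or_ge t (beta.colLen 0) with h1 | h1
  · exact hg.level_mono t (by omega) i
  · rw [chain_stable hg h1]

lemma tab_find {p : ℕ × ℕ} (hex : ∃ t, p.2 < g t p.1) :
    p.2 < g (tab g p) p.1 ∧ ∀ v, v < tab g p → g v p.1 ≤ p.2 := by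
  rw [tab, dif_pos hex]
  classical
  refine ⟨Nat.find_spec hex, fun v hv => ?_⟩
  have := Nat.find_min hex hv
  omega

lemma tab_le {p : ℕ × ℕ} (hex : ∃ t, p.2 < g t p.1) {v : ℕ} (hv : p.2 < g v p.1) :
    tab g p ≤ v := by
  classical
  rw [tab, dif_pos hex]
  exact Nat.find_le hv

lemma tab_eq_iff (hg : Chain (fun t => beta.rowLen t) N g) {i j v : ℕ}
    (hge : g 0 i ≤ j) (hlt : j < g (beta.colLen 0) i) :
    (tab g (i, j) = v + 1 ↔ (g v i ≤ j ∧ j < g (v+1) i)) := by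
  have hex : ∃ t, (i, j).2 < g t (i, j).1 := ⟨beta.colLen 0, hlt⟩
  obtain ⟨h1, h2⟩ := tab_find hex
  constructor
  · intro hv
    rw [hv] at h1 h2
    exact ⟨h2 v (by omega), h1⟩
  · rintro ⟨h3, h4⟩
    have h5 : tab g (i, j) ≤ v + 1 := tab_le hex h4
    rcases Nat.lt_or_ge (tab g (i, j)) (v + 1) with h6 | h6
    · exfalso
      have h7 : g (tab g (i,j)) i ≤ g v i := hg.level_mono _ (by omega) i
      simp only at h1
      omega
    · omega

section Tableau

variable (hg : Chain (fun t => beta.rowLen t) N g) {alpha : YoungDiagram}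
  (hα : ∀ i, g 0 i = alpha.rowLen i) {K : ℕ} (hK : ∀ t i, g t i ≤ K)

/-- The outer shape of a chain, as a Young diagram. -/
noncomputable def chainTop (hg : Chain (fun t => beta.rowLen t) N g) {K : ℕ}
    (hK : ∀ t i, g t i ≤ K) : YoungDiagram :=
  ofRows (fun i => g (beta.colLen 0) i) N K (fun i => hg.part _ i)
    (fun i hi => hg.supp _ i hi) (fun i => hK _ i)

include hg hK in
lemma rowLen_chainTop (i : ℕ) : (chainTop hg hK).rowLen i = g (beta.colLen 0) i := by
  apply rowLen_eq_of
  intro j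
  rw [chainTop]
  exact mem_ofRows

include hg hα hK in
lemma alpha_le_chainTop : alpha ≤ chainTop hg hK := by
  apply le_of_rowLen_le
  intro i
  rw [rowLen_chainTop hg hK, ← hα i]
  exact chain_le_top hg 0 i

include hg hα hK in
lemma mem_skew_chainTop {p : ℕ × ℕ} :
    p ∈ skewCells alpha (chainTop hg hK) ↔ (g 0 p.1 ≤ p.2 ∧ p.2 < g (beta.colLen 0) p.1) := by
  rw [mem_skewCells (alpha_le_chainTop hg hα hK), rowLen_chainTop hg hK, hα p.1]

include hg hα hK in
lemma tab_mem_iff {p : ℕ × ℕ} : 1 ≤ tab g p ↔ p ∈ skewCells alpha (chainTop hg hK) := by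
  rw [mem_skew_chainTop hg hα hK]
  constructor
  · intro h1
    by_cases hex : ∃ t, p.2 < g t p.1
    · obtain ⟨h2, h3⟩ := tab_find (g := g) hex
      refine ⟨h3 0 (by omega), lt_of_lt_of_le h2 (chain_le_top hg _ _)⟩
    · rw [tab, dif_neg hex] at h1; omega
  · rintro ⟨h1, h2⟩
    have hex : ∃ t, p.2 < g t p.1 := ⟨beta.colLen 0, h2⟩
    obtain ⟨h3, h4⟩ := tab_find (g := g) hex
    by_contra hc
    have : tab g p = 0 := by omega
    rw [this] at h3
    omega

include hg hα hK in
lemma tab_row_filter (i r : ℕ) :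
    (skewCells alpha (chainTop hg hK)).filter (fun p => p.1 = i ∧ tab g p = r + 1)
      = (Finset.Ico (g r i) (g (r+1) i)).image (fun j => (i, j)) := by
  ext p
  rw [Finset.mem_filter, Finset.mem_image]
  constructor
  · rintro ⟨hp, hfst, htab⟩
    refine ⟨p.2, ?_, by rw [← hfst, Prod.mk.eta]⟩
    rw [mem_skew_chainTop hg hα hK] at hp
    rw [Finset.mem_Ico]
    have := (tab_eq_iff hg (i := p.1) (j := p.2) (v := r) hp.1 hp.2).mp
      (by rw [Prod.mk.eta]; exact htab)
    rw [hfst] at this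
    exact this
  · rintro ⟨j, hj, rfl⟩
    rw [Finset.mem_Ico] at hj
    have hge : g 0 i ≤ j := le_trans (hg.level_mono 0 (by omega) i) hj.1
    have hlt : j < g (beta.colLen 0) i := lt_of_lt_of_le hj.2 (chain_le_top hg _ _)
    refine ⟨?_, rfl, ?_⟩
    · rw [mem_skew_chainTop hg hα hK]
      exact ⟨hge, hlt⟩
    · exact (tab_eq_iff hg hge hlt).mpr hj

include hg hα hK in
lemma tab_row_card (i r : ℕ) :
    ((skewCells alpha (chainTop hg hK)).filter (fun p => p.1 = i ∧ tab g p = r + 1)).card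
      = g (r+1) i - g r i := by
  rw [tab_row_filter hg hα hK i r]
  rw [Finset.card_image_of_injective _ (fun a b hab => by injection hab)]
  rw [Nat.card_Ico]

include hg hα hK in
lemma tab_isLR : IsLRTableau alpha beta (chainTop hg hK) (tab g) := by
  refine ⟨alpha_le_chainTop hg hα hK, fun p => tab_mem_iff hg hα hK, ?_, ?_, ?_, ?_⟩
  · -- rows weakly increasing
    intro i j j' hjj hj hj'
    rw [mem_skew_chainTop hg hα hK] at hj hj'
    have hex : ∃ t, ((i,j) : ℕ × ℕ).2 < g t ((i,j) : ℕ × ℕ).1 := ⟨beta.colLen 0, hj.2⟩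
    have hex' : ∃ t, ((i,j') : ℕ × ℕ).2 < g t ((i,j') : ℕ × ℕ).1 := ⟨beta.colLen 0, hj'.2⟩
    obtain ⟨h1, -⟩ := tab_find (g := g) hex'
    exact tab_le hex (by simp only at h1 ⊢; omega)
  · -- columns strictly increasing
    intro i i' j hii hj hj'
    rw [mem_skew_chainTop hg hα hK] at hj hj'
    have hex : ∃ t, ((i,j) : ℕ × ℕ).2 < g t ((i,j) : ℕ × ℕ).1 := ⟨beta.colLen 0, hj.2⟩
    have hex' : ∃ t, ((i',j) : ℕ × ℕ).2 < g t ((i',j) : ℕ × ℕ).1 := ⟨beta.colLen 0, hj'.2⟩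
    have hone : 1 ≤ tab g (i', j) := (tab_mem_iff hg hα hK).mpr
      (by rw [mem_skew_chainTop hg hα hK]; exact hj')
    obtain ⟨h1, -⟩ := tab_find (g := g) hex'
    simp only at h1
    -- j < g (tab (i',j)) i' ≤ g (tab (i',j) - 1) (i' - 1) ≤ ... ≤ g (tab - 1) i
    have h2 : g (tab g (i', j)) i' ≤ g (tab g (i', j) - 1) (i' - 1) := by
      have := hg.horiz (tab g (i', j) - 1) (i' - 1)
      have heq : tab g (i', j) - 1 + 1 = tab g (i', j) := by omega
      have heq2 : i' - 1 + 1 = i' := by omega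
      rw [heq, heq2] at this
      exact this
    have h3 : g (tab g (i', j) - 1) (i' - 1) ≤ g (tab g (i', j) - 1) i :=
      hg.row_anti _ (by omega)
    have h4 : tab g (i, j) ≤ tab g (i', j) - 1 := tab_le hex (by simp only; omega)
    omega
  · -- content
    intro r
    have h1 : (skewCells alpha (chainTop hg hK)).filter (fun p => tab g p = r + 1)
        = (skewCells alpha (chainTop hg hK)).filter (fun p => tab g p = r + 1 ∧ p.1 < N) := by
      apply Finset.filter_congr
      intro p hp
      rw [mem_skew_chainTop hg hα hK] at hp
      constructor
      · intro h2
        refine ⟨h2, ?_⟩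
        by_contra hc
        rw [hg.supp (beta.colLen 0) p.1 (by omega)] at hp
        omega
      · tauto
    rw [h1, card_filter_fst_lt _ (fun p => tab g p = r + 1) N]
    have h2 : ∀ i ∈ Finset.range N,
        ((skewCells alpha (chainTop hg hK)).filter (fun p => p.1 = i ∧ tab g p = r + 1)).card
        = g (r+1) i - g r i := fun i _ => tab_row_card hg hα hK i r
    rw [Finset.sum_congr rfl h2]
    exact hg.content r
  · -- lattice
    intro i j r
    have hsplit : ∀ v : ℕ,
        ((skewCells alpha (chainTop hg hK)).filter
          (fun p => tab g p = v ∧ (p.1 < i ∨ (p.1 = i ∧ j ≤ p.2)))).card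
        = ((skewCells alpha (chainTop hg hK)).filter (fun p => tab g p = v ∧ p.1 < i)).card
          + ((skewCells alpha (chainTop hg hK)).filter
              (fun p => p.1 = i ∧ (tab g p = v ∧ j ≤ p.2))).card := by
      intro v
      rw [← Finset.card_union_of_disjoint (by
        rw [Finset.disjoint_filter]
        rintro p hp ⟨h1, h2⟩ ⟨h3, h4⟩
        omega)]
      congr 1
      rw [← Finset.filter_or]
      apply Finset.filter_congr
      intro p hp
      constructor
      · rintro ⟨h1, (h2 | ⟨h2, h3⟩)⟩
        · exact Or.inl ⟨h1, h2⟩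
        · exact Or.inr ⟨h2, h1, h3⟩
      · rintro (⟨h1, h2⟩ | ⟨h1, h2, h3⟩)
        · exact ⟨h1, Or.inl h2⟩
        · exact ⟨h2, Or.inr ⟨h1, h3⟩⟩
    rw [hsplit (r+2), hsplit (r+1)]
    have hfst : ∀ v, ((skewCells alpha (chainTop hg hK)).filter
        (fun p => tab g p = v + 1 ∧ p.1 < i)).card = PFX g v i := by
      intro v
      rw [card_filter_fst_lt _ (fun p => tab g p = v + 1) i]
      exact Finset.sum_congr rfl (fun i' _ => tab_row_card hg hα hK i' v)
    have hB2 : ((skewCells alpha (chainTop hg hK)).filter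
        (fun p => p.1 = i ∧ (tab g p = r + 2 ∧ j ≤ p.2))).card ≤ g (r+2) i - g (r+1) i := by
      rw [← tab_row_card hg hα hK i (r+1)]
      apply Finset.card_le_card
      intro p hp
      rw [Finset.mem_filter] at hp ⊢
      exact ⟨hp.1, hp.2.1, hp.2.2.1⟩
    have hL : ((skewCells alpha (chainTop hg hK)).filter
        (fun p => tab g p = r + 2 ∧ p.1 < i)).card = PFX g (r+1) i := hfst (r+1)
    have hR : ((skewCells alpha (chainTop hg hK)).filter
        (fun p => tab g p = r + 1 ∧ p.1 < i)).card = PFX g r i := hfst r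
    have hlat : PFX g (r+1) (i+1) ≤ PFX g r i := hg.lattice r i
    have hPFXs : PFX g (r+1) (i+1) = PFX g (r+1) i + (g (r+2) i - g (r+1) i) := PFX_succ g (r+1) i
    omega

end Tableau

end FromChain

/-! ### Removing one box from a chain -/

section Removal

variable {μc : ℕ → ℕ} {N : ℕ} {f : ℕ → ℕ → ℕ}

/-- The hole path: row of the removed box at level `r0 + n`. -/
def hpath (f : ℕ → ℕ → ℕ) (r0 a : ℕ) : ℕ → ℕ
  | 0 => a
  | n + 1 => if f (r0 + n + 1) (hpath f r0 a n + 1) = f (r0 + n) (hpath f r0 a n)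
      then hpath f r0 a n + 1 else hpath f r0 a n

/-- The chain after removing one box at level `r0`, row `a`, and propagating. -/
def rchain (f : ℕ → ℕ → ℕ) (r0 a : ℕ) : ℕ → ℕ → ℕ :=
  fun t i => if r0 ≤ t ∧ i = hpath f r0 a (t - r0) then f t i - 1 else f t i

variable (hf : Chain μc N f) (r0 a : ℕ) (ha : f r0 (a+1) < f r0 a)

lemma rchain_lt (t : ℕ) (ht : t < r0) (i : ℕ) : rchain f r0 a t i = f t i := by
  rw [rchain, if_neg]
  rintro ⟨h1, -⟩
  omega

lemma rchain_ge (n i : ℕ) :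
    rchain f r0 a (r0 + n) i
      = if i = hpath f r0 a n then f (r0 + n) i - 1 else f (r0 + n) i := by
  rw [rchain, Nat.add_sub_cancel_left]
  by_cases h : i = hpath f r0 a n
  · rw [if_pos ⟨Nat.le_add_right _ _, h⟩, if_pos h]
  · rw [if_neg (fun hc => h hc.2), if_neg h]

include hf ha in
lemma hpath_inv : ∀ n, f (r0 + n) (hpath f r0 a n + 1) < f (r0 + n) (hpath f r0 a n) := by
  intro n
  induction n with
  | zero => exact ha
  | succ n ih =>
    show f (r0 + n + 1) _ < f (r0 + n + 1) _
    rw [hpath]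
    split
    · next heq =>
      calc f (r0 + n + 1) (hpath f r0 a n + 1 + 1) ≤ f (r0 + n) (hpath f r0 a n + 1) :=
            hf.horiz _ _
        _ < f (r0 + n) (hpath f r0 a n) := ih
        _ = f (r0 + n + 1) (hpath f r0 a n + 1) := heq.symm
    · next hne =>
      have h1 : f (r0 + n + 1) (hpath f r0 a n + 1) ≤ f (r0 + n) (hpath f r0 a n) := hf.horiz _ _
      have h2 : f (r0 + n) (hpath f r0 a n) ≤ f (r0 + n + 1) (hpath f r0 a n) := hf.mono _ _
      omega

include hf ha in
lemma hpath_cases (n : ℕ) :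
    (hpath f r0 a (n+1) = hpath f r0 a n + 1
        ∧ f (r0 + n + 1) (hpath f r0 a n + 1) = f (r0 + n) (hpath f r0 a n))
    ∨ (hpath f r0 a (n+1) = hpath f r0 a n
        ∧ f (r0 + n + 1) (hpath f r0 a n + 1) < f (r0 + n) (hpath f r0 a n)) := by
  rw [hpath]
  split
  · next heq => exact Or.inl ⟨rfl, heq⟩
  · next hne =>
    have h1 : f (r0 + n + 1) (hpath f r0 a n + 1) ≤ f (r0 + n) (hpath f r0 a n) := hf.horiz _ _
    exact Or.inr ⟨rfl, by omega⟩

include hf ha in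
lemma hpath_lt_N : ∀ n, hpath f r0 a n < N := by
  intro n
  have h1 := hpath_inv hf r0 a ha n
  by_contra hc
  rw [hf.supp (r0 + n) (hpath f r0 a n) (by omega)] at h1
  omega

include hf ha in
lemma rchain_PFX_ge (n i : ℕ) :
    PFX (rchain f r0 a) (r0 + n) i
      = PFX f (r0 + n) i
        + (if hpath f r0 a (n+1) = hpath f r0 a n + 1 ∧ i = hpath f r0 a n + 1
            then 1 else 0) := by
  induction i with
  | zero =>
    rw [PFX, PFX]
    simp only [Finset.range_zero, Finset.sum_empty]
    rw [if_neg (by rintro ⟨-, h⟩; omega)]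
    omega
  | succ i ih =>
    have hstep : rchain f r0 a (r0 + n + 1) i
        = if i = hpath f r0 a (n+1) then f (r0 + n + 1) i - 1 else f (r0 + n + 1) i := by
      have := rchain_ge (f := f) r0 a (n+1) i
      rw [← Nat.add_assoc] at this
      exact this
    have hstep0 : rchain f r0 a (r0 + n) i
        = if i = hpath f r0 a n then f (r0 + n) i - 1 else f (r0 + n) i :=
      rchain_ge r0 a n i
    have hP1 := PFX_succ (rchain f r0 a) (r0 + n) i
    have hP2 := PFX_succ f (r0 + n) i
    have hmono : f (r0 + n) i ≤ f (r0 + n + 1) i := hf.mono _ _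
    have hinv := hpath_inv hf r0 a ha n
    rcases hpath_cases hf r0 a ha n with ⟨hc1, hc2⟩ | ⟨hc1, hc2⟩
    · -- case B : hole moves down
      by_cases h1 : i = hpath f r0 a n
      · subst h1
        rw [if_neg (by omega)] at hstep
        rw [if_pos rfl] at hstep0
        rw [if_neg (by rintro ⟨-, h⟩; omega)] at ih
        rw [if_pos ⟨hc1, rfl⟩]
        omega
      · by_cases h2 : i = hpath f r0 a n + 1
        · subst h2
          rw [if_pos (by omega)] at hstep
          rw [if_neg h1] at hstep0
          rw [if_pos ⟨hc1, rfl⟩] at ih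
          rw [if_neg (by rintro ⟨-, h⟩; omega)]
          omega
        · rw [if_neg (by omega)] at hstep
          rw [if_neg h1] at hstep0
          rw [if_neg (by rintro ⟨-, h⟩; omega)] at ih
          rw [if_neg (by rintro ⟨-, h⟩; omega)]
          omega
    · -- case A : hole stays
      by_cases h1 : i = hpath f r0 a n
      · subst h1
        rw [if_pos (by omega)] at hstep
        rw [if_pos rfl] at hstep0
        rw [if_neg (by rintro ⟨h, -⟩; omega)] at ih
        rw [if_neg (by rintro ⟨h, -⟩; omega)]
        omega
      · rw [if_neg (by omega)] at hstep
        rw [if_neg h1] at hstep0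
        rw [if_neg (by rintro ⟨h, -⟩; omega)] at ih
        rw [if_neg (by rintro ⟨h, -⟩; omega)]
        omega

include hf in
lemma PFX_eq_content_of_stable {t m : ℕ} (hm : ∀ j, m ≤ j → f (t+1) j = f t j)
    (hmN : m ≤ N) : PFX f t m = μc t := by
  rw [← hf.content t, PFX, PFX, ← Finset.sum_subset (Finset.range_subset_range.mpr hmN)]
  intro x hx hnx
  rw [Finset.mem_range] at hx hnx
  rw [hm x (by omega)]
  omega

include hf ha in
lemma danger_gen (t i : ℕ) (hcB : f (t+2) (i+1) = f (t+1) i) (hcA : f (t+1) (i+1) < f t i) :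
    PFX f (t+1) (i+1) + 1 ≤ PFX f t i := by
  have Y1 := PFX_succ f (t+1) (i+1)
  have Y2 := hf.lattice t (i+1)
  have Y3 := PFX_succ f t i
  have Y4 := hf.mono t i
  have e : t + 1 + 1 = t + 2 := by omega
  rw [e] at Y1
  omega

include hf ha in
lemma danger_base {t0 : ℕ} (hr : r0 = t0 + 1) (hb1 : f t0 a < f r0 a)
    (hb2 : ∀ i, a < i → f r0 i = f t0 i) (hb3 : μc r0 + 1 ≤ μc t0)
    (hcB : f (r0 + 1) (a + 1) = f r0 a) :
    PFX f r0 (a+1) + 1 ≤ PFX f t0 a := by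
  have haN : a < N := hpath_lt_N hf r0 a ha 0
  have X1 := PFX_succ f r0 (a+1)
  have X2 : PFX f r0 (a+1+1) ≤ μc r0 := hf.PFX_le_content r0 (a+1+1)
  have X5 : PFX f t0 (a+1) = μc t0 := by
    apply PFX_eq_content_of_stable hf _ (by omega)
    intro j hj
    rw [← hr]
    exact hb2 j (by omega)
  have X4 := PFX_succ f t0 a
  rw [← hr] at X4
  have X6 : f r0 (a+1) = f t0 (a+1) := hb2 (a+1) (by omega)
  have X7 : f t0 (a+1) ≤ f t0 a := hf.part t0 a
  omega

include hf ha in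
lemma rchain_PFX_low (t i : ℕ) (ht : t + 1 < r0) :
    PFX (rchain f r0 a) t i = PFX f t i := by
  rw [PFX, PFX]
  refine Finset.sum_congr rfl (fun j _ => ?_)
  rw [rchain_lt r0 a t (by omega) j, rchain_lt r0 a (t+1) (by omega) j]

include hf ha in
lemma rchain_PFX_base {t0 : ℕ} (hr : r0 = t0 + 1) (hb1 : f t0 a < f r0 a) (i : ℕ) :
    PFX (rchain f r0 a) t0 i + (if a < i then 1 else 0) = PFX f t0 i := by
  induction i with
  | zero => simp [PFX]
  | succ i ih =>
    have hP1 := PFX_succ (rchain f r0 a) t0 i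
    have hP2 := PFX_succ f t0 i
    rw [← hr] at hP1 hP2
    have hlow : rchain f r0 a t0 i = f t0 i := rchain_lt r0 a t0 (by omega) i
    have hup : rchain f r0 a r0 i = if i = a then f r0 i - 1 else f r0 i := by
      have h := rchain_ge (f := f) r0 a 0 i
      rw [Nat.add_zero] at h
      exact h
    by_cases h1 : i = a
    · subst h1
      rw [if_pos rfl] at hup
      rw [if_neg (by omega)] at ih
      rw [if_pos (by omega)]
      omega
    · rw [if_neg h1] at hup
      by_cases h2 : a < i
      · rw [if_pos h2] at ih
        rw [if_pos (by omega)]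
        omega
      · rw [if_neg h2] at ih
        rw [if_neg (by omega)]
        omega

include hf ha in
lemma rchain_chain
    (hbase : ∀ t, t + 1 = r0 →
      (f t a < f r0 a ∧ (∀ i, a < i → f r0 i = f t i) ∧ μc r0 + 1 ≤ μc t)) :
    Chain (fun t => if t + 1 = r0 then μc t - 1 else μc t) N (rchain f r0 a) := by
  have hinv := hpath_inv hf r0 a ha
  have haN : a < N := hpath_lt_N hf r0 a ha 0
  constructor
  · -- part
    intro t i
    rcases Nat.lt_or_ge t r0 with ht | ht
    · rw [rchain_lt r0 a t ht, rchain_lt r0 a t ht]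
      exact hf.part t i
    · obtain ⟨n, rfl⟩ : ∃ n, t = r0 + n := ⟨t - r0, by omega⟩
      rw [rchain_ge r0 a n i, rchain_ge r0 a n (i+1)]
      have h1 := hinv n
      have h2 := hf.part (r0+n) i
      have h3 := hf.part (r0+n) (i+1)
      by_cases hi : i = hpath f r0 a n
      · subst hi
        rw [if_pos rfl, if_neg (by omega)]
        omega
      · rw [if_neg hi]
        by_cases hi1 : i + 1 = hpath f r0 a n
        · rw [if_pos hi1]; omega
        · rw [if_neg hi1]; omega
  · -- mono
    intro t i
    rcases Nat.lt_or_ge (t+1) r0 with ht | ht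
    · rw [rchain_lt r0 a t (by omega), rchain_lt r0 a (t+1) (by omega)]
      exact hf.mono t i
    · rcases Nat.lt_or_ge t r0 with ht2 | ht2
      · -- t + 1 = r0
        have hr : r0 = t + 1 := by omega
        obtain ⟨hb1, -, -⟩ := hbase t hr.symm
        rw [rchain_lt r0 a t (by omega), ← hr]
        have hup : rchain f r0 a r0 i = if i = a then f r0 i - 1 else f r0 i := by
          have h := rchain_ge (f := f) r0 a 0 i
          rw [Nat.add_zero] at h
          exact h
        rw [hup]
        have hm := hf.mono t i
        rw [← hr] at hm
        by_cases hi : i = a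
        · subst hi
          rw [if_pos rfl]
          omega
        · rw [if_neg hi]
          omega
      · obtain ⟨n, rfl⟩ : ∃ n, t = r0 + n := ⟨t - r0, by omega⟩
        have hginc : rchain f r0 a (r0+n+1) i
            = if i = hpath f r0 a (n+1) then f (r0+n+1) i - 1 else f (r0+n+1) i := by
          have := rchain_ge (f := f) r0 a (n+1) i
          rw [← Nat.add_assoc] at this
          exact this
        rw [rchain_ge r0 a n i, hginc]
        have h1 := hinv n
        have h2 := hf.mono (r0+n) i
        rcases hpath_cases hf r0 a ha n with ⟨hc1, hc2⟩ | ⟨hc1, hc2⟩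
        · by_cases hi : i = hpath f r0 a n
          · subst hi
            rw [if_pos rfl, if_neg (by omega)]
            omega
          · rw [if_neg hi]
            by_cases hi1 : i = hpath f r0 a (n+1)
            · rw [if_pos hi1]
              rw [hi1, hc1]
              rw [hi1, hc1] at h2
              omega
            · rw [if_neg hi1]; omega
        · by_cases hi : i = hpath f r0 a n
          · subst hi
            rw [if_pos rfl, if_pos (by omega)]
            omega
          · rw [if_neg hi, if_neg (by omega)]; omega
  · -- horiz
    intro t i
    rcases Nat.lt_or_ge t r0 with ht | ht
    · rw [rchain_lt r0 a t ht]
      calc rchain f r0 a (t+1) (i+1) ≤ f (t+1) (i+1) := by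
            rw [rchain]; split <;> omega
        _ ≤ f t i := hf.horiz t i
    · obtain ⟨n, rfl⟩ : ∃ n, t = r0 + n := ⟨t - r0, by omega⟩
      have hginc : rchain f r0 a (r0+n+1) (i+1)
          = if i + 1 = hpath f r0 a (n+1) then f (r0+n+1) (i+1) - 1 else f (r0+n+1) (i+1) := by
        have := rchain_ge (f := f) r0 a (n+1) (i+1)
        rw [← Nat.add_assoc] at this
        exact this
      rw [rchain_ge r0 a n i, hginc]
      have h1 := hinv n
      have h2 := hf.horiz (r0+n) i
      rcases hpath_cases hf r0 a ha n with ⟨hc1, hc2⟩ | ⟨hc1, hc2⟩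
      · by_cases hi : i = hpath f r0 a n
        · subst hi
          rw [if_pos rfl, if_pos (by omega)]
          omega
        · rw [if_neg hi]
          by_cases hi1 : i + 1 = hpath f r0 a (n+1)
          · rw [if_pos hi1]; omega
          · rw [if_neg hi1]; omega
      · by_cases hi : i = hpath f r0 a n
        · subst hi
          rw [if_pos rfl, if_neg (by omega)]
          omega
        · rw [if_neg hi]
          by_cases hi1 : i + 1 = hpath f r0 a (n+1)
          · rw [if_pos hi1]; omega
          · rw [if_neg hi1]; omega
  · -- supp
    intro t i hi
    have h1 := hf.supp t i hi
    rw [rchain]; split <;> omega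
  · -- content
    intro t
    rcases Nat.lt_or_ge (t+1) r0 with ht | ht
    · rw [if_neg (by omega), rchain_PFX_low hf r0 a ha t N ht]
      exact hf.content t
    · rcases Nat.lt_or_ge t r0 with ht2 | ht2
      · have hr : r0 = t + 1 := by omega
        obtain ⟨hb1, -, hb3⟩ := hbase t hr.symm
        have := rchain_PFX_base hf r0 a ha hr hb1 N
        rw [if_pos (by omega)] at this
        rw [if_pos hr.symm]
        have hc := hf.content t
        omega
      · obtain ⟨n, rfl⟩ : ∃ n, t = r0 + n := ⟨t - r0, by omega⟩
        rw [if_neg (by omega)]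
        have := rchain_PFX_ge hf r0 a ha n N
        have hJN := hpath_lt_N hf r0 a ha (n+1)
        rw [if_neg (by rintro ⟨h1, h2⟩; omega)] at this
        rw [this]
        have hc := hf.content (r0+n)
        omega
  · -- lattice
    intro t i
    rcases Nat.lt_or_ge (t+2) r0 with ht | ht
    · rw [rchain_PFX_low hf r0 a ha t i (by omega),
        rchain_PFX_low hf r0 a ha (t+1) (i+1) ht]
      exact hf.lattice t i
    · rcases Nat.lt_or_ge (t+1) r0 with ht2 | ht2
      · -- t + 2 = r0
        have hr : r0 = t + 2 := by omega
        obtain ⟨hb1, -, -⟩ := hbase (t+1) hr.symm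
        have hbb := rchain_PFX_base hf r0 a ha hr hb1 (i+1)
        have hlow := rchain_PFX_low hf r0 a ha t i (by omega)
        have hlat := hf.lattice t i
        rw [hlow]
        by_cases h2 : a < i + 1
        · rw [if_pos h2] at hbb; omega
        · rw [if_neg h2] at hbb; omega
      · rcases Nat.lt_or_ge t r0 with ht3 | ht3
        · -- t + 1 = r0
          have hr : r0 = t + 1 := by omega
          obtain ⟨hb1, hb2, hb3⟩ := hbase t hr.symm
          have hbb := rchain_PFX_base hf r0 a ha hr hb1 i
          have hup : PFX (rchain f r0 a) r0 (i+1)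
              = PFX f r0 (i+1)
                + (if hpath f r0 a 1 = a + 1 ∧ i + 1 = a + 1 then 1 else 0) := by
            have h := rchain_PFX_ge hf r0 a ha 0 (i+1)
            rw [Nat.add_zero] at h
            exact h
          rw [← hr, hup]
          by_cases hcase : hpath f r0 a 1 = a + 1 ∧ i + 1 = a + 1
          · -- i = a and case B at level r0+1
            obtain ⟨hcc, hia⟩ := hcase
            have hia2 : i = a := by omega
            rcases hpath_cases hf r0 a ha 0 with ⟨-, hc2⟩ | ⟨hc1, -⟩
            · have hcB : f (r0 + 1) (a + 1) = f r0 a := by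
                have e : r0 + 0 + 1 = r0 + 1 := by omega
                rw [e] at hc2
                exact hc2
              have hd := danger_base hf r0 a ha hr hb1 hb2 hb3 hcB
              rw [if_pos ⟨hcc, hia⟩]
              rw [if_neg (by omega)] at hbb
              rw [hia2]
              rw [hia2] at hbb
              omega
            · exfalso
              have e : hpath f r0 a 1 = a := hc1
              omega
          · rw [if_neg hcase]
            by_cases h2 : a < i
            · -- i > a
              rw [if_pos h2] at hbb
              have hX5 : PFX f t (a+1) = μc t := by
                apply PFX_eq_content_of_stable hf _ (by omega)
                intro j hj
                rw [← hr]
                exact hb2 j (by omega)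
              have hX6 : PFX f t (a+1) ≤ PFX f t i := PFX_mono_idx f t (by omega)
              have hX7 : PFX f r0 (i+1) ≤ μc r0 := hf.PFX_le_content r0 (i+1)
              omega
            · rw [if_neg h2] at hbb
              have hlat := hf.lattice t i
              rw [← hr] at hlat
              omega
        · -- r0 ≤ t
          obtain ⟨n, rfl⟩ : ∃ n, t = r0 + n := ⟨t - r0, by omega⟩
          have hup : PFX (rchain f r0 a) (r0+n+1) (i+1)
              = PFX f (r0+n+1) (i+1)
                + (if hpath f r0 a (n+2) = hpath f r0 a (n+1) + 1
                    ∧ i + 1 = hpath f r0 a (n+1) + 1 then 1 else 0) := by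
            have := rchain_PFX_ge hf r0 a ha (n+1) (i+1)
            rw [← Nat.add_assoc] at this
            exact this
          have hlo := rchain_PFX_ge hf r0 a ha n i
          have hlat := hf.lattice (r0+n) i
          rw [hup, hlo]
          by_cases hcase : hpath f r0 a (n+2) = hpath f r0 a (n+1) + 1
              ∧ i + 1 = hpath f r0 a (n+1) + 1
          · obtain ⟨hcc, hii⟩ := hcase
            have hieq : i = hpath f r0 a (n+1) := by omega
            rcases hpath_cases hf r0 a ha n with ⟨hc1, hc2⟩ | ⟨hc1, hc2⟩
            · -- case B at n+1 : indicators match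
              rw [if_pos ⟨hcc, hii⟩, if_pos ⟨hc1, by omega⟩]
              omega
            · -- case A at n+1, case B at n+2 : danger
              rw [if_pos ⟨hcc, hii⟩, if_neg (by rintro ⟨h1, h2⟩; omega)]
              have hcB : f (r0+n+2) (i+1) = f (r0+n+1) i := by
                rcases hpath_cases hf r0 a ha (n+1) with ⟨-, hd2⟩ | ⟨hd1, -⟩
                · have e2 : r0 + (n+1) + 1 = r0 + n + 2 := by omega
                  have e3 : r0 + (n+1) = r0 + n + 1 := by omega
                  rw [e2, e3, ← hieq] at hd2
                  exact hd2
                · rw [show n + 1 + 1 = n + 2 from by omega] at hd1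
                  omega
              have hcA : f (r0+n+1) (i+1) < f (r0+n) i := by
                rw [hieq, hc1]
                exact hc2
              have hd := danger_gen hf r0 a ha (r0+n) i hcB hcA
              omega
          · rw [if_neg hcase]
            by_cases hcase2 : hpath f r0 a (n+1) = hpath f r0 a n + 1
                ∧ i = hpath f r0 a n + 1
            · rw [if_pos hcase2]; omega
            · rw [if_neg hcase2]; omega

include hf in
lemma rchain_le_f : ∀ t i, rchain f r0 a t i ≤ f t i := by
  intro t i
  rw [rchain]; split <;> omega

end Removal

section RemovalWrap

variable {μc : ℕ → ℕ} {N : ℕ} {f : ℕ → ℕ → ℕ}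

lemma removal0 (hf : Chain μc N f) {a : ℕ} (ha : f 0 (a+1) < f 0 a) :
    ∃ g, Chain μc N g ∧ (∀ t i, g t i ≤ f t i)
      ∧ (∀ i, g 0 i = if i = a then f 0 i - 1 else f 0 i) := by
  have hbase : ∀ t, t + 1 = (0:ℕ) →
      (f t a < f 0 a ∧ (∀ i, a < i → f 0 i = f t i) ∧ μc 0 + 1 ≤ μc t) :=
    fun t ht => absurd ht (by omega)
  have hc := rchain_chain hf 0 a ha hbase
  have heq : (fun t => if t + 1 = 0 then μc t - 1 else μc t) = μc :=
    funext fun t => if_neg (by omega)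
  rw [heq] at hc
  refine ⟨rchain f 0 a, hc, rchain_le_f hf 0 a, fun i => ?_⟩
  have h := rchain_ge (f := f) 0 a 0 i
  rw [Nat.add_zero] at h
  exact h

lemma removalS (hf : Chain μc N f) {t0 : ℕ} (hcorner : μc (t0+1) < μc t0) :
    ∃ g, Chain (fun t => if t = t0 then μc t - 1 else μc t) N g ∧ (∀ t i, g t i ≤ f t i)
      ∧ (∀ i, g 0 i = f 0 i) := by
  classical
  -- find the last row of strip t0
  have hpos : 0 < μc t0 := by omega
  have hex : ∃ j, j < N ∧ f t0 j < f (t0+1) j := by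
    by_contra hc
    push_neg at hc
    have : PFX f t0 N = 0 := by
      rw [PFX]
      apply Finset.sum_eq_zero
      intro j hj
      rw [Finset.mem_range] at hj
      have := hc j hj
      omega
    rw [hf.content t0] at this
    omega
  obtain ⟨j0, hj0N, hj0⟩ := hex
  set P : ℕ → Prop := fun j => f t0 j < f (t0+1) j with hP
  set a := Nat.findGreatest P N with haDef
  have hPa : P a := Nat.findGreatest_spec (le_of_lt hj0N) hj0
  have hmax : ∀ i, a < i → f (t0+1) i = f t0 i := by
    intro i hi
    rcases le_or_gt i N with h1 | h1
    · have := Nat.findGreatest_is_greatest hi h1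
      have h2 := hf.mono t0 i
      simp only [hP, not_lt] at this
      omega
    · rw [hf.supp t0 i (by omega), hf.supp (t0+1) i (by omega)]
  have ha : f (t0+1) (a+1) < f (t0+1) a := by
    have h1 := hmax (a+1) (by omega)
    have h2 := hf.part t0 a
    simp only [hP] at hPa
    omega
  have hbase : ∀ t, t + 1 = t0 + 1 →
      (f t a < f (t0+1) a ∧ (∀ i, a < i → f (t0+1) i = f t i) ∧ μc (t0+1) + 1 ≤ μc t) := by
    intro t ht
    have : t = t0 := by omega
    subst this
    simp only [hP] at hPa
    exact ⟨hPa, hmax, by omega⟩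
  have hc := rchain_chain hf (t0+1) a ha hbase
  have heq : (fun t => if t + 1 = t0 + 1 then μc t - 1 else μc t)
      = (fun t => if t = t0 then μc t - 1 else μc t) := by
    funext t
    by_cases h : t = t0
    · rw [if_pos (by omega), if_pos h]
    · rw [if_neg (by omega), if_neg h]
  rw [heq] at hc
  exact ⟨rchain f (t0+1) a, hc, rchain_le_f hf (t0+1) a,
    fun i => rchain_lt (t0+1) a 0 (by omega) i⟩

end RemovalWrap

/-! ### The outer induction -/

lemma chain_reduce {N : ℕ} (ar βc : ℕ → ℕ)
    (har_anti : ∀ i, ar (i+1) ≤ ar i)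
    (hβ_anti : ∀ t, βc (t+1) ≤ βc t) :
    ∀ n (μc : ℕ → ℕ) (f : ℕ → ℕ → ℕ),
    Chain μc N f →
    (∀ i, ar i ≤ f 0 i) →
    (∀ t, βc t ≤ μc t) →
    (∀ t, N ≤ t → μc t = 0) →
    ((∑ i ∈ Finset.range N, (f 0 i - ar i)) + (∑ t ∈ Finset.range N, (μc t - βc t)) = n) →
    ∃ g, Chain βc N g ∧ (∀ i, g 0 i = ar i) ∧ (∀ t i, g t i ≤ f t i) := by
  intro n
  induction n with
  | zero =>
    intro μc f hf hle hβμ hμsupp hsum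
    have h1 : ∀ i, i < N → f 0 i = ar i := by
      intro i hi
      have : ∀ x ∈ Finset.range N, f 0 x - ar x = 0 := by
        rw [← Finset.sum_eq_zero_iff]
        omega
      have h2 := this i (Finset.mem_range.mpr hi)
      have h3 := hle i
      omega
    have h1' : ∀ i, f 0 i = ar i := by
      intro i
      rcases Nat.lt_or_ge i N with hi | hi
      · exact h1 i hi
      · have h2 := hf.supp 0 i hi
        have h3 := hle i
        omega
    have h2 : ∀ t, μc t = βc t := by
      intro t
      rcases Nat.lt_or_ge t N with ht | ht
      · have : ∀ x ∈ Finset.range N, μc x - βc x = 0 := by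
          rw [← Finset.sum_eq_zero_iff]
          omega
        have h3 := this t (Finset.mem_range.mpr ht)
        have h4 := hβμ t
        omega
      · have h3 := hμsupp t ht
        have h4 := hβμ t
        omega
    refine ⟨f, ⟨hf.part, hf.mono, hf.horiz, hf.supp, fun t => (hf.content t).trans (h2 t),
      hf.lattice⟩, fun i => h1' i, fun t i => le_rfl⟩
  | succ n ih =>
    intro μc f hf hle hβμ hμsupp hsum
    classical
    by_cases hcase : ∃ i, i < N ∧ ar i < f 0 i
    · -- remove a box from the bottom partition
      obtain ⟨j0, hj0N, hj0⟩ := hcase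
      set P : ℕ → Prop := fun i => ar i < f 0 i with hP
      set a := Nat.findGreatest P N with haDef
      have hPa : P a := Nat.findGreatest_spec (le_of_lt hj0N) hj0
      have haN : a < N := by
        by_contra hc
        simp only [hP] at hPa
        have := hf.supp 0 a (by omega)
        omega
      have hmax : ∀ i, a < i → f 0 i ≤ ar i := by
        intro i hi
        rcases le_or_gt i N with h1 | h1
        · have := Nat.findGreatest_is_greatest hi h1
          simp only [hP, not_lt] at this
          exact this
        · rw [hf.supp 0 i (by omega)]
          omega
      have hcorner : f 0 (a+1) < f 0 a := by
        have h1 := hmax (a+1) (by omega)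
        have h2 := har_anti a
        simp only [hP] at hPa
        omega
      obtain ⟨g', hg', hg'le, hg'0⟩ := removal0 hf hcorner
      have hle' : ∀ i, ar i ≤ g' 0 i := by
        intro i
        rw [hg'0 i]
        by_cases h : i = a
        · subst h
          simp only [hP] at hPa
          rw [if_pos rfl]
          omega
        · rw [if_neg h]
          exact hle i
      have hsum' : (∑ i ∈ Finset.range N, (g' 0 i - ar i))
          + (∑ t ∈ Finset.range N, (μc t - βc t)) = n := by
        have hsplit1 : (∑ i ∈ (Finset.range N).erase a, (f 0 i - ar i)) + (f 0 a - ar a)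
            = ∑ i ∈ Finset.range N, (f 0 i - ar i) :=
          Finset.sum_erase_add _ _ (Finset.mem_range.mpr haN)
        have hsplit2 : (∑ i ∈ (Finset.range N).erase a, (g' 0 i - ar i)) + (g' 0 a - ar a)
            = ∑ i ∈ Finset.range N, (g' 0 i - ar i) :=
          Finset.sum_erase_add _ _ (Finset.mem_range.mpr haN)
        have hcong : ∑ i ∈ (Finset.range N).erase a, (g' 0 i - ar i)
            = ∑ i ∈ (Finset.range N).erase a, (f 0 i - ar i) := by
          refine Finset.sum_congr rfl (fun i hi => ?_)
          rw [hg'0 i, if_neg (Finset.ne_of_mem_erase hi)]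
        have hterm : g' 0 a - ar a + 1 = f 0 a - ar a := by
          rw [hg'0 a, if_pos rfl]
          simp only [hP] at hPa
          omega
        omega
      obtain ⟨g, hg, hg0, hgle⟩ := ih μc g' hg' hle' hβμ hμsupp hsum'
      exact ⟨g, hg, hg0, fun t i => le_trans (hgle t i) (hg'le t i)⟩
    · -- remove a box from the content
      push_neg at hcase
      have hsum1 : ∑ i ∈ Finset.range N, (f 0 i - ar i) = 0 := by
        apply Finset.sum_eq_zero
        intro i hi
        rw [Finset.mem_range] at hi
        have := hcase i hi
        omega
      have hcase2 : ∃ t, t < N ∧ βc t < μc t := by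
        by_contra hc
        push_neg at hc
        have : ∑ t ∈ Finset.range N, (μc t - βc t) = 0 := by
          apply Finset.sum_eq_zero
          intro t ht
          rw [Finset.mem_range] at ht
          have h1 := hc t ht
          have h2 := hβμ t
          omega
        omega
      obtain ⟨s0, hs0N, hs0⟩ := hcase2
      set P : ℕ → Prop := fun t => βc t < μc t with hP
      set t0 := Nat.findGreatest P N with ht0Def
      have hPt0 : P t0 := Nat.findGreatest_spec (le_of_lt hs0N) hs0
      have ht0N : t0 < N := by
        by_contra hc
        simp only [hP] at hPt0
        have h1 := hμsupp t0 (by omega)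
        have h2 := hβμ t0
        omega
      have hmax : ∀ t, t0 < t → μc t ≤ βc t := by
        intro t ht
        rcases le_or_gt t N with h1 | h1
        · have := Nat.findGreatest_is_greatest ht h1
          simp only [hP, not_lt] at this
          exact this
        · rw [hμsupp t (by omega)]
          omega
      have hcorner : μc (t0+1) < μc t0 := by
        have h1 := hmax (t0+1) (by omega)
        have h2 := hβ_anti t0
        simp only [hP] at hPt0
        omega
      obtain ⟨g', hg', hg'le, hg'0⟩ := removalS hf hcorner
      set μc' := fun t => if t = t0 then μc t - 1 else μc t with hμc'
      have hβμ' : ∀ t, βc t ≤ μc' t := by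
        intro t
        by_cases h : t = t0
        · subst h
          have he : μc' t0 = μc t0 - 1 := if_pos rfl
          simp only [hP] at hPt0
          omega
        · have he : μc' t = μc t := if_neg h
          have := hβμ t
          omega
      have hμsupp' : ∀ t, N ≤ t → μc' t = 0 := by
        intro t ht
        have he : μc' t = μc t := if_neg (by omega)
        have := hμsupp t ht
        omega
      have hle' : ∀ i, ar i ≤ g' 0 i := fun i => by rw [hg'0 i]; exact hle i
      have hsum' : (∑ i ∈ Finset.range N, (g' 0 i - ar i))
          + (∑ t ∈ Finset.range N, (μc' t - βc t)) = n := by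
        have hsum1' : ∑ i ∈ Finset.range N, (g' 0 i - ar i) = 0 := by
          apply Finset.sum_eq_zero
          intro i hi
          rw [hg'0 i]
          rw [Finset.mem_range] at hi
          have := hcase i hi
          omega
        have hsplit1 : (∑ t ∈ (Finset.range N).erase t0, (μc t - βc t)) + (μc t0 - βc t0)
            = ∑ t ∈ Finset.range N, (μc t - βc t) :=
          Finset.sum_erase_add _ _ (Finset.mem_range.mpr ht0N)
        have hsplit2 : (∑ t ∈ (Finset.range N).erase t0, (μc' t - βc t)) + (μc' t0 - βc t0)
            = ∑ t ∈ Finset.range N, (μc' t - βc t) :=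
          Finset.sum_erase_add _ _ (Finset.mem_range.mpr ht0N)
        have hcong : ∑ t ∈ (Finset.range N).erase t0, (μc' t - βc t)
            = ∑ t ∈ (Finset.range N).erase t0, (μc t - βc t) := by
          refine Finset.sum_congr rfl (fun t ht => ?_)
          have he : μc' t = μc t := if_neg (Finset.ne_of_mem_erase ht)
          rw [he]
        have hterm : μc' t0 - βc t0 + 1 = μc t0 - βc t0 := by
          have he : μc' t0 = μc t0 - 1 := if_pos rfl
          simp only [hP] at hPt0
          omega
        omega
      obtain ⟨g, hg, hg0, hgle⟩ := ih μc' g' hg' hle' hβμ' hμsupp' hsum'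
      exact ⟨g, hg, hg0, fun t i => le_trans (hgle t i) (hg'le t i)⟩

/-! ### The key lemma -/

lemma key (l k : ℕ) (α β lam mu γ : YoungDiagram)
    (hαl : α ≤ lam) (hβm : β ≤ mu) (hmu : mu ≤ rect l k)
    (hγ : γ ≤ rect l k) (hcγ : lrCoeff lam mu γ ≠ 0) :
    ∃ δ : YoungDiagram, δ ≤ rect l k ∧ δ ≤ γ ∧ lrCoeff α β δ ≠ 0 := by
  obtain ⟨T, hT⟩ := lrCoeff_ne_zero_iff.mp hcγ
  have hNγ : ∀ i, l ≤ i → γ.rowLen i = 0 := by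
    intro i hi
    have h1 := rowLen_le_of_le hγ i
    rw [rowLen_rect, if_neg (by omega)] at h1
    omega
  have hf : Chain (fun t => mu.rowLen t) l (tchain lam γ T) := tchain_chain hT hNγ
  have har_anti : ∀ i, α.rowLen (i+1) ≤ α.rowLen i := fun i => α.rowLen_anti i (i+1) (by omega)
  have hβ_anti : ∀ t, β.rowLen (t+1) ≤ β.rowLen t := fun t => β.rowLen_anti t (t+1) (by omega)
  have hle : ∀ i, α.rowLen i ≤ tchain lam γ T 0 i := by
    intro i
    rw [tchain_zero hT i]
    exact rowLen_le_of_le hαl i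
  have hβμ : ∀ t, β.rowLen t ≤ mu.rowLen t := fun t => rowLen_le_of_le hβm t
  have hμsupp : ∀ t, l ≤ t → mu.rowLen t = 0 := by
    intro t ht
    have h1 := rowLen_le_of_le hmu t
    rw [rowLen_rect, if_neg (by omega)] at h1
    omega
  obtain ⟨g, hg, hg0, hgle⟩ := chain_reduce (fun i => α.rowLen i) (fun t => β.rowLen t)
    har_anti hβ_anti _ (fun t => mu.rowLen t) (tchain lam γ T) hf hle hβμ hμsupp rfl
  have hK : ∀ t i, g t i ≤ k := by
    intro t i
    have h1 := hgle t i
    have h2 := tchain_le hT t i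
    have h3 := rowLen_le_of_le hγ i
    rw [rowLen_rect] at h3
    split at h3 <;> omega
  have hLR := tab_isLR (beta := β) (alpha := α) hg hg0 hK
  refine ⟨chainTop hg hK, ?_, ?_, lrCoeff_ne_zero_iff.mpr ⟨tab g, hLR⟩⟩
  · apply le_of_rowLen_le
    intro i
    rw [rowLen_chainTop hg hK, rowLen_rect]
    rcases Nat.lt_or_ge i l with hi | hi
    · rw [if_pos hi]
      exact hK _ i
    · rw [if_neg (by omega)]
      rw [hg.supp _ i hi]
  · apply le_of_rowLen_le
    intro i
    rw [rowLen_chainTop hg hK]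
    exact le_trans (hgle _ i) (tchain_le hT _ i)

end Kappa


/-- If `α ⊆ lam ⊆ l × k` and `β ⊆ mu ⊆ l × k`, then `κ(α,β) ⊆ κ(lam,mu)`,
where `κ(ρ,τ)` is the intersection of all `γ ⊆ l × k` with `c^γ_{ρ,τ} ≠ 0` (equal to
`l × k` by convention when no such `γ` exists).  Membership of a box `p` in `κ(ρ,τ)` is
expressed as: `p ∈ l × k` and `p` belongs to every `γ ⊆ l × k` with `c^γ_{ρ,τ} ≠ 0`. -/
theorem kappa_monotone (l k : ℕ) (α β lam mu : YoungDiagram)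
    (hαl : α ≤ lam) (hβm : β ≤ mu) (hlam : lam ≤ rect l k) (hmu : mu ≤ rect l k) :
    ∀ p : ℕ × ℕ, p ∈ (rect l k).cells →
      (∀ δ, δ ≤ rect l k → lrCoeff α β δ ≠ 0 → p ∈ δ.cells) →
      (∀ γ, γ ≤ rect l k → lrCoeff lam mu γ ≠ 0 → p ∈ γ.cells) := by
  intro p hp hδall γ hγ hcγ
  obtain ⟨δ, hδrect, hδγ, hδc⟩ := Kappa.key l k α β lam mu γ hαl hβm hmu hγ hcγ
  exact (YoungDiagram.cells_subset_iff.mpr hδγ) (hδall δ hδrect hδc)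


end QCGrass
end

section
/- Let λ, μ be partitions contained in l×k, and let ρ be a partition with ρ₁ ≤ k and c^ρ_{λ,μ} ≠ 0. Let d be the side of the largest square contained in λ ∩ rotate(μ) inside the l×k rectangle. Then ρ contains the rectangle (l+d)×d, i.e., ρ has at least l+d parts each of size at least d. -/
open YoungDiagram

namespace QCGrass

-- auxiliary: lattice step
lemma lattice_step (lam mu rho : YoungDiagram) (T : ℕ × ℕ → ℕ) (k : ℕ)
    (hT : IsLRTableau lam mu rho T)
    (hk : ∀ c ∈ skewCells lam rho, c.2 < k) (v a : ℕ) :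
    ((skewCells lam rho).filter (fun c => T c = v + 2 ∧ c.1 ≤ a + 1)).card ≤
    ((skewCells lam rho).filter (fun c => T c = v + 1 ∧ c.1 ≤ a)).card := by
  classical
  obtain ⟨hle, hsupp, hrow, hcol, hcontent, hlat⟩ := hT
  by_cases hex : ∃ b, (a + 1, b) ∈ skewCells lam rho ∧ T (a + 1, b) = v + 2
  · set b0 := Nat.find hex with hb0
    obtain ⟨hb0mem, hb0val⟩ := Nat.find_spec hex
    have h1 : ((skewCells lam rho).filter (fun c => T c = v + 2 ∧ c.1 ≤ a + 1)) =
        ((skewCells lam rho).filter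
          (fun c => T c = v + 2 ∧ (c.1 < a + 1 ∨ (c.1 = a + 1 ∧ b0 ≤ c.2)))) := by
      apply Finset.filter_congr
      intro c hc
      constructor
      · rintro ⟨hv, hr⟩
        refine ⟨hv, ?_⟩
        rcases Nat.lt_or_ge c.1 (a + 1) with h | h
        · exact Or.inl h
        · have hceq : c.1 = a + 1 := le_antisymm hr h
          right
          refine ⟨hceq, ?_⟩
          apply Nat.find_min' hex
          constructor
          · rwa [← hceq, Prod.mk.eta]
          · rwa [← hceq, Prod.mk.eta]
      · rintro ⟨hv, hr⟩
        refine ⟨hv, ?_⟩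
        rcases hr with h | h
        · omega
        · omega
    rw [h1]
    refine le_trans (hlat (a + 1) b0 v) ?_
    apply Finset.card_le_card
    intro c hc
    simp only [Finset.mem_filter] at hc ⊢
    obtain ⟨hcmem, hv, hr⟩ := hc
    refine ⟨hcmem, hv, ?_⟩
    rcases hr with h | h
    · omega
    · exfalso
      obtain ⟨hceq, hb0le⟩ := h
      have hc2 : (a + 1, c.2) ∈ skewCells lam rho := by rwa [← hceq, Prod.mk.eta]
      have := hrow (a + 1) b0 c.2 hb0le hb0mem hc2
      rw [hb0val] at this
      have : T (a + 1, c.2) = v + 1 := by rw [← hceq, Prod.mk.eta]; exact hv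
      omega
  · have h1 : ((skewCells lam rho).filter (fun c => T c = v + 2 ∧ c.1 ≤ a + 1)) =
        ((skewCells lam rho).filter
          (fun c => T c = v + 2 ∧ (c.1 < a + 1 ∨ (c.1 = a + 1 ∧ k ≤ c.2)))) := by
      apply Finset.filter_congr
      intro c hc
      constructor
      · rintro ⟨hv, hr⟩
        refine ⟨hv, ?_⟩
        rcases Nat.lt_or_ge c.1 (a + 1) with h | h
        · exact Or.inl h
        · exfalso
          have hceq : c.1 = a + 1 := le_antisymm hr h
          exact hex ⟨c.2, by rwa [← hceq, Prod.mk.eta], by rw [← hceq, Prod.mk.eta]; exact hv⟩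
      · rintro ⟨hv, hr⟩
        exact ⟨hv, by omega⟩
    rw [h1]
    refine le_trans (hlat (a + 1) k v) ?_
    apply Finset.card_le_card
    intro c hc
    simp only [Finset.mem_filter] at hc ⊢
    obtain ⟨hcmem, hv, hr⟩ := hc
    have := hk c hcmem
    refine ⟨hcmem, hv, by omega⟩

/-- If `lam, mu ⊆ l × k`, `rho` has first part at most `k` and
`c^rho_{lam,mu} ≠ 0`, and `d` is the side of the largest square contained in
`lam ∩ rotate(mu)`, then `rho` contains the rectangle `(l+d) × d`. -/
theorem lr_contains_rect (l k d : ℕ) (lam mu rho : YoungDiagram)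
    (hlam : lam ≤ rect l k) (hmu : mu ≤ rect l k) (hrho : rho.rowLen 0 ≤ k)
    (hlr : lrCoeff lam mu rho ≠ 0)
    (hd : SquareFits l k lam mu d) (hd' : ¬ SquareFits l k lam mu (d + 1)) :
    rect (l + d) d ≤ rho := by
  classical
  obtain rfl | hdpos := Nat.eq_zero_or_pos d
  · intro c hc
    exfalso
    have hc' : c ∈ (Finset.range (l + 0) ×ˢ Finset.range 0) := hc
    simp at hc'
  obtain ⟨i, j, hsq⟩ := hd
  obtain ⟨hcl, hcr⟩ := hsq (i + d - 1) (j + d - 1) (by omega) (by omega) (by omega) (by omega)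
  obtain ⟨htl, htr⟩ := hsq i j le_rfl (by omega) le_rfl (by omega)
  simp only [rotSet, Set.mem_setOf_eq] at hcr htr
  have hil : i < l := htr.1
  have hjk : j + d ≤ k := by have := hcr.2.1; omega
  have hidl : i + d ≤ l := by have := hcr.1; omega
  have hmurow : k - j ≤ mu.rowLen (l - i - 1) := by
    have h2 := htr.2.2
    have he : l - 1 - i = l - i - 1 := by omega
    rw [he] at h2
    omega
  have hne : Nonempty {T : ℕ × ℕ → ℕ // IsLRTableau lam mu rho T} :=
    (Nat.card_ne_zero.mp hlr).1
  obtain ⟨T, hT⟩ := hne.some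
  have hcl' : ((i + d - 1 : ℕ), (j + d - 1 : ℕ)) ∈ lam := by rwa [← mem_cells]
  have hk : ∀ c ∈ skewCells lam rho, c.2 < k := by
    intro c hc
    rw [skewCells, Finset.mem_sdiff] at hc
    have h1 : (c.1, c.2) ∈ rho := by rw [← mem_cells, Prod.mk.eta]; exact hc.1
    rw [mem_iff_lt_rowLen] at h1
    have h2 := rho.rowLen_anti 0 c.1 (Nat.zero_le _)
    omega
  suffices hkey : ((l + d - 1 : ℕ), (d - 1 : ℕ)) ∈ rho by
    intro c hc
    have hc' : c ∈ (Finset.range (l + d) ×ˢ Finset.range d) := hc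
    rw [Finset.mem_product, Finset.mem_range, Finset.mem_range] at hc'
    have := rho.up_left_mem (i1 := c.1) (j1 := c.2) (by omega) (by omega) hkey
    rwa [Prod.mk.eta] at this
  by_contra hkey
  have hT' := hT
  obtain ⟨hle, hsupp, hrow, hcol, hcontent, hlat⟩ := hT
  -- chain
  have hchain : ∀ v : ℕ,
      ((skewCells lam rho).filter (fun c => T c = v + 1 ∧ c.1 ≤ i + d - 1 + v)).card ≤
      ((skewCells lam rho).filter (fun c => T c = 0 + 1 ∧ c.1 ≤ i + d - 1 + 0)).card := by
    intro v
    induction v with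
    | zero => exact le_rfl
    | succ v ih =>
      refine le_trans ?_ ih
      have hstep := lattice_step lam mu rho T k hT' hk v (i + d - 1 + v)
      have he : i + d - 1 + (v + 1) = (i + d - 1 + v) + 1 := by omega
      rw [he]
      exact hstep
  -- f 0 bound
  have hf0 : ((skewCells lam rho).filter (fun c => T c = 0 + 1 ∧ c.1 ≤ i + d - 1 + 0)).card ≤
      k - (j + d) := by
    have hmap : ∀ c ∈ ((skewCells lam rho).filter
        (fun c => T c = 0 + 1 ∧ c.1 ≤ i + d - 1 + 0)), c.2 ∈ Finset.Ico (j + d) k := by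
      intro c hc
      rw [Finset.mem_filter] at hc
      obtain ⟨hcmem, hv, hr⟩ := hc
      rw [Finset.mem_Ico]
      refine ⟨?_, hk c hcmem⟩
      by_contra hlt
      push_neg at hlt
      rw [skewCells, Finset.mem_sdiff] at hcmem
      apply hcmem.2
      rw [mem_cells]
      have h1 : ((i + d - 1 : ℕ), c.2) ∈ lam := lam.up_left_mem le_rfl (by omega) hcl'
      have h2 := lam.up_left_mem (by omega : c.1 ≤ i + d - 1) le_rfl h1
      rwa [Prod.mk.eta] at h2
    have hinj : ∀ c ∈ ((skewCells lam rho).filter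
        (fun c => T c = 0 + 1 ∧ c.1 ≤ i + d - 1 + 0)) , ∀ c' ∈ ((skewCells lam rho).filter
        (fun c => T c = 0 + 1 ∧ c.1 ≤ i + d - 1 + 0)), c.2 = c'.2 → c = c' := by
      intro c hc c' hc' hsnd
      rw [Finset.mem_filter] at hc hc'
      rcases lt_trichotomy c.1 c'.1 with h | h | h
      · exfalso
        have hmm := hcol c.1 c'.1 c.2 h (by rw [Prod.mk.eta]; exact hc.1)
          (by rw [hsnd]; rw [Prod.mk.eta]; exact hc'.1)
        rw [Prod.mk.eta] at hmm
        rw [hsnd, Prod.mk.eta] at hmm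
        omega
      · exact Prod.ext h hsnd
      · exfalso
        have hmm := hcol c'.1 c.1 c'.2 h (by rw [Prod.mk.eta]; exact hc'.1)
          (by rw [← hsnd]; rw [Prod.mk.eta]; exact hc.1)
        rw [Prod.mk.eta] at hmm
        rw [← hsnd, Prod.mk.eta] at hmm
        omega
    have := Finset.card_le_card_of_injOn Prod.snd hmap (fun c hc c' hc' => hinj c hc c' hc')
    simpa using this
  -- main count for value R = l - i
  set R := l - i with hR
  have hRpos : 1 ≤ R := by omega
  have hFull : ((skewCells lam rho).filter (fun c => T c = (R - 1) + 1)).card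
      = mu.rowLen (R - 1) := hcontent (R - 1)
  have hRe : R - 1 + 1 = R := by omega
  -- Low
  have hLow : ((skewCells lam rho).filter
      (fun c => T c = (R - 1) + 1 ∧ c.1 ≤ i + d - 1 + (R - 1))).card ≤ k - (j + d) :=
    le_trans (hchain (R - 1)) hf0
  -- split Full into Low + High
  have hsplit := Finset.card_filter_add_card_filter_not
    (s := (skewCells lam rho).filter (fun c => T c = (R - 1) + 1))
    (p := fun c => c.1 ≤ i + d - 1 + (R - 1))
  rw [Finset.filter_filter, Finset.filter_filter] at hsplit
  -- High bound: columns injective into range (d-1)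
  have hHigh : ((skewCells lam rho).filter
      (fun c => T c = (R - 1) + 1 ∧ ¬ c.1 ≤ i + d - 1 + (R - 1))).card ≤ d - 1 := by
    have hmap : ∀ c ∈ ((skewCells lam rho).filter
        (fun c => T c = (R - 1) + 1 ∧ ¬ c.1 ≤ i + d - 1 + (R - 1))),
        c.2 ∈ Finset.range (d - 1) := by
      intro c hc
      rw [Finset.mem_filter] at hc
      obtain ⟨hcmem, hv, hr⟩ := hc
      rw [Finset.mem_range]
      by_contra hge
      push_neg at hge
      apply hkey
      rw [skewCells, Finset.mem_sdiff] at hcmem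
      have h1 : (c.1, c.2) ∈ rho := by rw [← mem_cells, Prod.mk.eta]; exact hcmem.1
      exact rho.up_left_mem (by omega) (by omega) h1
    have hinj : ∀ c ∈ ((skewCells lam rho).filter
        (fun c => T c = (R - 1) + 1 ∧ ¬ c.1 ≤ i + d - 1 + (R - 1))),
        ∀ c' ∈ ((skewCells lam rho).filter
        (fun c => T c = (R - 1) + 1 ∧ ¬ c.1 ≤ i + d - 1 + (R - 1))), c.2 = c'.2 → c = c' := by
      intro c hc c' hc' hsnd
      rw [Finset.mem_filter] at hc hc'
      rcases lt_trichotomy c.1 c'.1 with h | h | h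
      · exfalso
        have hmm := hcol c.1 c'.1 c.2 h (by rw [Prod.mk.eta]; exact hc.1)
          (by rw [hsnd]; rw [Prod.mk.eta]; exact hc'.1)
        rw [Prod.mk.eta] at hmm
        rw [hsnd, Prod.mk.eta] at hmm
        omega
      · exact Prod.ext h hsnd
      · exfalso
        have hmm := hcol c'.1 c.1 c'.2 h (by rw [Prod.mk.eta]; exact hc'.1)
          (by rw [← hsnd]; rw [Prod.mk.eta]; exact hc.1)
        rw [Prod.mk.eta] at hmm
        rw [← hsnd, Prod.mk.eta] at hmm
        omega
    have := Finset.card_le_card_of_injOn Prod.snd hmap (fun c hc c' hc' => hinj c hc c' hc')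
    simpa using this
  -- conclude
  have hmr : k - j ≤ mu.rowLen (R - 1) := hmurow
  omega


end QCGrass
end

section
/- Let λ ⊆ l×k be a partition and d ≥ 0 with d ≤ λ_d (a d×d square fits in λ). Define λ̃ by removing the leftmost d columns of λ (λ̃_i = max(λ_i − d, 0)), and β by β_i = max(d − λ_{l+1−i}, 0) for 1 ≤ i ≤ l. Then the Littlewood–Richardson coefficient c^{(d^l)+λ̃}_{λ,β} is nonzero, where (d^l)+λ̃ is the partition with i-th part d + λ̃_i. -/
open YoungDiagram

namespace QCGrass

section Aux

/-- Any LR tableau has entries bounded by the number of rows of `mu`. -/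
lemma lr_entry_bound {lam mu nu : YoungDiagram} {T : ℕ × ℕ → ℕ}
    (h : IsLRTableau lam mu nu T) (p : ℕ × ℕ) : T p ≤ mu.colLen 0 := by
  obtain ⟨-, hsupp, -, -, hcount, -⟩ := h
  by_cases hp : p ∈ skewCells lam nu
  · have h1 : 1 ≤ T p := (hsupp p).mpr hp
    set r := T p - 1 with hr
    have hTp : T p = r + 1 := by omega
    have hcard : 1 ≤ ((skewCells lam nu).filter (fun q => T q = r + 1)).card :=
      Finset.card_pos.mpr ⟨p, Finset.mem_filter.mpr ⟨hp, hTp⟩⟩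
    rw [hcount r] at hcard
    have : (r, 0) ∈ mu := mem_iff_lt_rowLen.mpr (by omega)
    have : r < mu.colLen 0 := mem_iff_lt_colLen.mp this
    omega
  · have : ¬ 1 ≤ T p := fun h => hp ((hsupp p).mp h)
    omega

lemma lr_finite (lam mu nu : YoungDiagram) :
    Finite {T : ℕ × ℕ → ℕ // IsLRTableau lam mu nu T} := by
  let B := mu.colLen 0
  let f : {T : ℕ × ℕ → ℕ // IsLRTableau lam mu nu T} →
      (↥(skewCells lam nu) → Fin (B + 1)) :=
    fun T q => ⟨T.1 q.1, Nat.lt_succ_of_le (lr_entry_bound T.2 q.1)⟩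
  have hf : Function.Injective f := by
    rintro ⟨T, hT⟩ ⟨T', hT'⟩ h
    apply Subtype.ext
    funext p
    show T p = T' p
    by_cases hp : p ∈ skewCells lam nu
    · have := congrFun h ⟨p, hp⟩
      simpa [f] using congrArg Fin.val this
    · have h1 : ¬ 1 ≤ T p := fun h => hp ((hT.2.1 p).mp h)
      have h2 : ¬ 1 ≤ T' p := fun h => hp ((hT'.2.1 p).mp h)
      omega
  exact Finite.of_injective f hf

lemma skew_mem_char {l k d : ℕ} {lam target : YoungDiagram}
    (htarget : ∀ i : ℕ, target.rowLen i = if i < l then max (lam.rowLen i) d else 0)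
    (p : ℕ × ℕ) :
    p ∈ skewCells lam target ↔ p.1 < l ∧ p.2 < d ∧ lam.colLen p.2 ≤ p.1 := by
  rw [skewCells, Finset.mem_sdiff, mem_cells, mem_cells, mem_iff_lt_rowLen, htarget]
  rw [show ((p.1, p.2) ∈ lam ↔ p.1 < lam.colLen p.2) from mem_iff_lt_colLen]
  have hrc : p.2 < lam.rowLen p.1 ↔ p.1 < lam.colLen p.2 := by
    rw [← mem_iff_lt_rowLen, ← mem_iff_lt_colLen]
  constructor
  · rintro ⟨h1, h2⟩
    split at h1
    · refine ⟨‹_›, ?_, by omega⟩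
      have : ¬ p.2 < lam.rowLen p.1 := by rw [hrc]; omega
      omega
    · omega
  · rintro ⟨h1, h2, h3⟩
    have : ¬ p.2 < lam.rowLen p.1 := by rw [hrc]; omega
    refine ⟨?_, by omega⟩
    rw [if_pos h1]; omega

end Aux

/-- Let `lam ⊆ l × k` contain a `d × d` square, let `beta` be given by
`beta_i = max(d - lam_{l+1-i}, 0)` for `1 ≤ i ≤ l`, and let `target = (d^l) + lam-tilde`
where `lam-tilde` is `lam` with its leftmost `d` columns removed (so the `i`-th part of
`target` is `d + max(lam_i - d, 0) = max(lam_i, d)` for `i ≤ l`).  Then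
`c^{target}_{lam, beta} ≠ 0`. -/
theorem buch_first_step (l k d : ℕ) (lam beta target : YoungDiagram)
    (hlam : lam ≤ rect l k) (hsq : rect d d ≤ lam)
    (hbeta : ∀ i : ℕ, beta.rowLen i = if i < l then d - lam.rowLen (l - 1 - i) else 0)
    (htarget : ∀ i : ℕ, target.rowLen i = if i < l then max (lam.rowLen i) d else 0) :
    lrCoeff lam beta target ≠ 0 := by
  -- The canonical filling: cell `(i, j)` of the skew shape gets entry `i - colLen j + 1`.
  classical
  set T : ℕ × ℕ → ℕ :=
    fun p => if p ∈ skewCells lam target then p.1 - lam.colLen p.2 + 1 else 0 with hTdef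
  have hchar := skew_mem_char (l := l) (k := k) (d := d) (lam := lam) htarget
  have hTval : ∀ p ∈ skewCells lam target, T p = p.1 - lam.colLen p.2 + 1 := by
    intro p hp; simp [hTdef, hp]
  -- value rewrite: on the skew shape, `T p = r + 1 ↔ p.1 = colLen p.2 + r`
  have hTeq : ∀ p ∈ skewCells lam target, ∀ r : ℕ,
      (T p = r + 1 ↔ p.1 = lam.colLen p.2 + r) := by
    intro p hp r
    have h3 := (hchar p).mp hp
    rw [hTval p hp]
    omega
  have hT : IsLRTableau lam beta target T := by
    refine ⟨?_, ?_, ?_, ?_, ?_, ?_⟩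
    · -- lam ≤ target
      rw [← cells_subset_iff]
      intro p hp
      rw [mem_cells] at hp ⊢
      have hpl : (p.1, p.2) ∈ rect l k := hlam hp
      have hp1 : p.1 < l := by
        simpa [rect, Finset.mem_product] using (And.left (by
          simpa [rect, Finset.mem_product] using (show (p.1, p.2) ∈ (rect l k).cells from hpl)))
      rw [mem_iff_lt_rowLen] at hp ⊢
      rw [htarget, if_pos hp1]
      omega
    · intro p
      constructor
      · intro h1
        by_contra hp
        simp [hTdef, hp] at h1
      · intro hp
        rw [hTval p hp]; omega
    · intro i j j' hjj hp hq
      have h1 := (hchar _).mp hp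
      have h2 := (hchar _).mp hq
      rw [hTval _ hp, hTval _ hq]
      have := lam.colLen_anti j j' hjj
      simp only at h1 h2 ⊢
      omega
    · intro i i' j hii hp hq
      have h1 := (hchar _).mp hp
      have h2 := (hchar _).mp hq
      rw [hTval _ hp, hTval _ hq]
      simp only at h1 h2 ⊢
      omega
    · -- content
      intro r
      have hcard : ((skewCells lam target).filter (fun p => T p = r + 1)).card =
          ((Finset.range d).filter (fun j => lam.colLen j + r < l)).card := by
        apply Finset.card_bij (fun p _ => p.2)
        · intro p hp
          rw [Finset.mem_filter] at hp
          obtain ⟨hp1, hp2⟩ := hp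
          have h3 := (hchar p).mp hp1
          have h4 := (hTeq p hp1 r).mp hp2
          simp only [Finset.mem_filter, Finset.mem_range]
          omega
        · intro p hp q hq hpq
          rw [Finset.mem_filter] at hp hq
          have h3 := (hTeq p hp.1 r).mp hp.2
          have h4 := (hTeq q hq.1 r).mp hq.2
          have : p = (p.1, p.2) := rfl
          rw [this, Prod.mk.injEq]
          constructor
          · rw [h3, h4, hpq]
          · exact hpq
        · intro j hj
          simp only [Finset.mem_filter, Finset.mem_range] at hj
          refine ⟨(lam.colLen j + r, j), ?_, rfl⟩
          have hmem : (lam.colLen j + r, j) ∈ skewCells lam target := by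
            rw [hchar]
            show lam.colLen j + r < l ∧ j < d ∧ lam.colLen j ≤ lam.colLen j + r
            omega
          exact Finset.mem_filter.mpr ⟨hmem, (hTeq _ hmem r).mpr rfl⟩
      rw [hcard, hbeta r]
      by_cases hr : r < l
      · rw [if_pos hr]
        have hpred : ∀ j : ℕ, (lam.colLen j + r < l ↔ lam.rowLen (l - 1 - r) ≤ j) := by
          intro j
          have hrc : j < lam.rowLen (l - 1 - r) ↔ l - 1 - r < lam.colLen j := by
            rw [← mem_iff_lt_rowLen, ← mem_iff_lt_colLen]
          omega
        have : (Finset.range d).filter (fun j => lam.colLen j + r < l) =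
            Finset.Ico (lam.rowLen (l - 1 - r)) d := by
          ext j
          simp only [Finset.mem_filter, Finset.mem_range, Finset.mem_Ico, hpred j]
          omega
        rw [this, Nat.card_Ico]
      · rw [if_neg hr]
        rw [Finset.card_eq_zero, Finset.filter_eq_empty_iff]
        intro j _
        omega
    · -- lattice word condition
      intro i j r
      apply Finset.card_le_card_of_injOn (fun p => (p.1 - 1, p.2))
      · intro p hp
        rw [Finset.mem_coe, Finset.mem_filter] at hp
        obtain ⟨hp1, hp2, hp3⟩ := hp
        have h3 := (hchar p).mp hp1
        have h4 := (hTeq p hp1 (r + 1)).mp hp2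
        have hmem : (p.1 - 1, p.2) ∈ skewCells lam target := by
          rw [hchar]
          show p.1 - 1 < l ∧ p.2 < d ∧ lam.colLen p.2 ≤ p.1 - 1
          omega
        refine Finset.mem_filter.mpr ⟨hmem, (hTeq _ hmem r).mpr (by show p.1 - 1 = lam.colLen p.2 + r; omega), ?_⟩
        left
        show p.1 - 1 < i
        omega
      · intro p hp q hq hpq
        simp only [Finset.coe_filter, Set.mem_setOf_eq] at hp hq
        have h3 := (hTeq p hp.1 (r + 1)).mp hp.2.1
        have h4 := (hTeq q hq.1 (r + 1)).mp hq.2.1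
        have hpq' : (p.1 - 1, p.2) = (q.1 - 1, q.2) := hpq
        obtain ⟨-, hsnd⟩ := Prod.mk.inj hpq'
        have : p = (p.1, p.2) := rfl
        rw [this, Prod.mk.injEq]
        exact ⟨by rw [h3, h4, hsnd], hsnd⟩
  have : Nonempty {T : ℕ × ℕ → ℕ // IsLRTableau lam beta target T} := ⟨⟨T, hT⟩⟩
  have hfin := lr_finite lam beta target
  rw [lrCoeff]
  exact Nat.card_ne_zero.mpr ⟨this, hfin⟩


end QCGrass
end
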